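/- arXiv:2212.01788 — 7 statements merged into one kernel-verified Lean document; each statement's English description precedes it below -/
import Mathlib

section
/- Let n ≥ 1 and let A be a real n×n matrix satisfying the cyclic non-increasing condition such that Ae < 0 (all row sums strictly negative). Then det A = 0 if the graph 𝒢(A) has more than one closed strongly connected component, and det A < 0 if 𝒢(A) has exactly one closed strongly connected component. -/
open Matrix BigOperators

/-- The cyclic non-increasing condition: each row of `A` weakly decreases
cyclically starting from the diagonal, i.e. `a_{i[j-1]} ≥ a_{ij}` for all
`j ≠ i` (indices in `Fin n`, arithmetic mod `n`). -/
def CyclicNonIncr {n : ℕ} [NeZero n] (A : Matrix (Fin n) (Fin n) ℝ) : Prop :=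
  ∀ i j : Fin n, j ≠ i → A i (j - 1) ≥ A i j

/-- The directed graph `𝒢(A)` has an edge from `i` to `j` iff `a_{i[j-1]} > a_{ij}`. -/
def GraphEdge {n : ℕ} [NeZero n] (A : Matrix (Fin n) (Fin n) ℝ) (i j : Fin n) : Prop :=
  A i (j - 1) > A i j

/-- `i` and `j` are strongly connected in `𝒢(A)`: there are directed paths
(possibly of length 0) from `i` to `j` and from `j` to `i`. -/
def Conn {n : ℕ} [NeZero n] (A : Matrix (Fin n) (Fin n) ℝ) (i j : Fin n) : Prop :=
  Relation.ReflTransGen (GraphEdge A) i j ∧ Relation.ReflTransGen (GraphEdge A) j i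

/-- `C` is a strongly connected component of `𝒢(A)`: an equivalence class of
the strong-connectivity relation. -/
def IsSCC {n : ℕ} [NeZero n] (A : Matrix (Fin n) (Fin n) ℝ) (C : Set (Fin n)) : Prop :=
  ∃ i, C = {j | Conn A i j}

/-- `C` is a closed SCC of `𝒢(A)`: an SCC with no edge leaving it. -/
def IsClosedSCC {n : ℕ} [NeZero n] (A : Matrix (Fin n) (Fin n) ℝ) (C : Set (Fin n)) : Prop :=
  IsSCC A C ∧ ∀ i ∈ C, ∀ j, GraphEdge A i j → j ∈ C

/-- `C` is an open SCC of `𝒢(A)`: an SCC with some edge leaving it. -/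
def IsOpenSCC {n : ℕ} [NeZero n] (A : Matrix (Fin n) (Fin n) ℝ) (C : Set (Fin n)) : Prop :=
  IsSCC A C ∧ ¬ (∀ i ∈ C, ∀ j, GraphEdge A i j → j ∈ C)


namespace Stmt11Aux

open Fin.NatCast Fin.CommRing

variable {n : ℕ} [NeZero n]


variable {n : ℕ} [NeZero n]

def Lmat (A : Matrix (Fin n) (Fin n) ℝ) : Matrix (Fin n) (Fin n) ℝ :=
  fun i j => A i j - A i (j - 1)

lemma sum_shift (f : Fin n → ℝ) : (∑ j, f (j - 1)) = ∑ j, f j :=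
  Fintype.sum_equiv (Equiv.subRight (1 : Fin n)) _ _ (fun _ => rfl)

lemma diag_ge {A : Matrix (Fin n) (Fin n) ℝ}
    (hA : CyclicNonIncr A) (i j : Fin n) : A i j ≤ A i i := by
  have key : ∀ k : ℕ, A i (i + (k : Fin n)) ≤ A i i := by
    intro k
    induction k with
    | zero => simp
    | succ k ih =>
      by_cases h : i + ((k+1 : ℕ) : Fin n) = i
      · rw [h]
      · have h2 := hA i _ h
        have h3 : i + ((k+1 : ℕ) : Fin n) - 1 = i + (k : Fin n) := by
          push_cast
          ring
        rw [h3] at h2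
        exact le_trans h2 ih
  have := key ((j - i : Fin n) : ℕ)
  rwa [Fin.cast_val_eq_self, add_sub_cancel] at this

lemma L_rowsum (A : Matrix (Fin n) (Fin n) ℝ) (i : Fin n) : (∑ j, Lmat A i j) = 0 := by
  have : (∑ j, Lmat A i j) = (∑ j, A i j) - ∑ j, A i (j - 1) := by
    simp [Lmat, Finset.sum_sub_distrib]
  rw [this, sum_shift (fun j => A i j), sub_self]

lemma L_offdiag {A : Matrix (Fin n) (Fin n) ℝ}
    (hA : CyclicNonIncr A) {i j : Fin n} (h : j ≠ i) :
    Lmat A i j ≤ 0 := sub_nonpos.2 (hA i j h)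

lemma L_diag {A : Matrix (Fin n) (Fin n) ℝ}
    (hA : CyclicNonIncr A) (i : Fin n) :
    0 ≤ Lmat A i i := sub_nonneg.2 (diag_ge hA i (i - 1))

lemma edge_iff (A : Matrix (Fin n) (Fin n) ℝ) (i j : Fin n) :
    GraphEdge A i j ↔ Lmat A i j < 0 := by
  simp [GraphEdge, Lmat, sub_neg]

lemma conn_refl (A : Matrix (Fin n) (Fin n) ℝ) (i : Fin n) : Conn A i i :=
  ⟨.refl, .refl⟩

lemma conn_symm {A : Matrix (Fin n) (Fin n) ℝ} {i j : Fin n} (h : Conn A i j) : Conn A j i :=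
  ⟨h.2, h.1⟩

lemma conn_trans {A : Matrix (Fin n) (Fin n) ℝ} {i j k : Fin n}
    (h1 : Conn A i j) (h2 : Conn A j k) : Conn A i k :=
  ⟨h1.1.trans h2.1, h2.2.trans h1.2⟩

lemma scc_disjoint {A : Matrix (Fin n) (Fin n) ℝ} {C₁ C₂ : Set (Fin n)}
    (h1 : IsSCC A C₁) (h2 : IsSCC A C₂) (hne : C₁ ≠ C₂) : ∀ k, k ∈ C₁ → k ∉ C₂ := by
  obtain ⟨i₁, rfl⟩ := h1
  obtain ⟨i₂, rfl⟩ := h2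
  intro k hk1 hk2
  apply hne
  have h12 : Conn A i₁ i₂ := conn_trans hk1 (conn_symm hk2)
  ext j
  exact ⟨fun h => conn_trans (conn_symm h12) h, fun h => conn_trans h12 h⟩

lemma reach_closed {A : Matrix (Fin n) (Fin n) ℝ} {C : Set (Fin n)}
    (hC : IsClosedSCC A C) (huniq : ∀ C', IsClosedSCC A C' → C' = C)
    {i₀ : Fin n} (hi₀ : i₀ ∈ C) (j : Fin n) :
    Relation.ReflTransGen (GraphEdge A) j i₀ := by
  classical
  obtain ⟨ib, hCb⟩ := hC.1
  have main : ∀ N : ℕ, ∀ j : Fin n,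
      Set.ncard {k | Relation.ReflTransGen (GraphEdge A) j k} ≤ N →
      ∃ v ∈ C, Relation.ReflTransGen (GraphEdge A) j v := by
    intro N
    induction N with
    | zero =>
      intro j hj
      exfalso
      have hmem : j ∈ {k | Relation.ReflTransGen (GraphEdge A) j k} := Relation.ReflTransGen.refl
      have : 0 < Set.ncard {k | Relation.ReflTransGen (GraphEdge A) j k} :=
        (Set.ncard_pos (Set.toFinite _)).2 ⟨j, hmem⟩
      omega
    | succ N ihN =>
      intro j hj
      by_cases hcl : ∀ p ∈ {k | Conn A j k}, ∀ q, GraphEdge A p q → q ∈ {k | Conn A j k}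
      · have hclosed : IsClosedSCC A {k | Conn A j k} := ⟨⟨j, rfl⟩, hcl⟩
        have hD := huniq _ hclosed
        refine ⟨j, ?_, Relation.ReflTransGen.refl⟩
        rw [← hD]
        exact conn_refl A j
      · push_neg at hcl
        obtain ⟨p, hp, q, hpq, hq⟩ := hcl
        have hjq : Relation.ReflTransGen (GraphEdge A) j q := (hp.1).tail hpq
        have hsub : {k | Relation.ReflTransGen (GraphEdge A) q k} ⊆
            {k | Relation.ReflTransGen (GraphEdge A) j k} := fun k hk => hjq.trans hk
        have hjnot : j ∉ {k | Relation.ReflTransGen (GraphEdge A) q k} := by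
          intro h
          exact hq ⟨hjq, h⟩
        have hss : {k | Relation.ReflTransGen (GraphEdge A) q k} ⊂
            {k | Relation.ReflTransGen (GraphEdge A) j k} :=
          ⟨hsub, fun hsup => hjnot (hsup Relation.ReflTransGen.refl)⟩
        have hlt := Set.ncard_lt_ncard hss (Set.toFinite _)
        obtain ⟨v, hv, hqv⟩ := ihN q (by omega)
        exact ⟨v, hv, hjq.trans hqv⟩
  obtain ⟨v, hv, hjv⟩ := main _ j le_rfl
  have hvi₀ : Relation.ReflTransGen (GraphEdge A) v i₀ := by
    have h1 : Conn A ib v := by rw [hCb] at hv; exact hv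
    have h2 : Conn A ib i₀ := by rw [hCb] at hi₀; exact hi₀
    exact h1.2.trans h2.1
  exact hjv.trans hvi₀

lemma rtg_closed {α : Type*} {r : α → α → Prop} {S : Set α}
    (hS : ∀ p ∈ S, ∀ q, r p q → q ∈ S) {a b : α}
    (h : Relation.ReflTransGen r a b) (ha : a ∈ S) : b ∈ S := by
  induction h with
  | refl => exact ha
  | tail _ e ih => exact hS _ ih _ e

lemma max_principle {A : Matrix (Fin n) (Fin n) ℝ} (hA : CyclicNonIncr A)
    {C : Set (Fin n)} (hC : IsClosedSCC A C) (huniq : ∀ C', IsClosedSCC A C' → C' = C)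
    {i₀ : Fin n} (hi₀ : i₀ ∈ C) (x : Fin n → ℝ)
    (hx : ∀ j, j ≠ i₀ → (Lmat A).mulVec x j = 0) : ∀ k, x k = x i₀ := by
  have oneside : ∀ y : Fin n → ℝ, (∀ j, j ≠ i₀ → (Lmat A).mulVec y j = 0) →
      ∀ k, y k ≤ y i₀ := by
    intro y hy k
    by_contra hk
    push_neg at hk
    obtain ⟨k₀, -, hk₀⟩ := Finset.exists_max_image Finset.univ y ⟨k, Finset.mem_univ k⟩
    have hi₀M : y i₀ < y k₀ := lt_of_lt_of_le hk (hk₀ k (Finset.mem_univ k))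
    set S : Set (Fin n) := {j | y j = y k₀} with hS
    have hSclosed : ∀ p ∈ S, ∀ q, GraphEdge A p q → q ∈ S := by
      intro p hp q hpq
      have hpval : y p = y k₀ := hp
      have hpi₀ : p ≠ i₀ := by
        rintro rfl
        rw [hpval] at hi₀M
        exact lt_irrefl _ hi₀M
      have h0 : (∑ l, Lmat A p l * y l) = 0 := hy p hpi₀
      have hrow := L_rowsum A p
      have key : (∑ l, Lmat A p l * (y l - y p)) = 0 := by
        have expand : (∑ l, Lmat A p l * (y l - y p)) =
            (∑ l, Lmat A p l * y l) - (∑ l, Lmat A p l) * y p := by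
          rw [Finset.sum_mul, ← Finset.sum_sub_distrib]
          refine Finset.sum_congr rfl (fun l _ => by ring)
        rw [expand, h0, hrow, zero_mul, sub_zero]
      have hterm : ∀ l ∈ Finset.univ, 0 ≤ Lmat A p l * (y l - y p) := by
        intro l _
        by_cases hl : l = p
        · subst hl; simp
        · have h1 : Lmat A p l ≤ 0 := L_offdiag hA hl
          have h2 : y l - y p ≤ 0 := by
            have := hk₀ l (Finset.mem_univ l)
            rw [hpval]; linarith
          nlinarith
      have hall := (Finset.sum_eq_zero_iff_of_nonneg hterm).1 key
      have hq0 := hall q (Finset.mem_univ q)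
      have hLpq : Lmat A p q < 0 := (edge_iff A p q).1 hpq
      have : y q - y p = 0 := by
        rcases mul_eq_zero.1 hq0 with h | h
        · exact absurd h (ne_of_lt hLpq)
        · exact h
      show y q = y k₀
      rw [← hpval]; linarith
    have hk₀S : k₀ ∈ S := rfl
    have hpath := reach_closed hC huniq hi₀ k₀
    have hi₀S : i₀ ∈ S := rtg_closed hSclosed hpath hk₀S
    have : y i₀ = y k₀ := hi₀S
    rw [this] at hi₀M
    exact lt_irrefl _ hi₀M
  intro k
  have h1 := oneside x hx k
  have h2 : ∀ j, j ≠ i₀ → (Lmat A).mulVec (-x) j = 0 := by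
    intro j hj
    rw [Matrix.mulVec_neg, Pi.neg_apply, hx j hj, neg_zero]
  have h3 := oneside (-x) h2 k
  simp only [Pi.neg_apply, neg_le_neg_iff] at h3
  linarith

lemma det_nonneg_Z : ∀ (k : ℕ) (M : Matrix (Fin k) (Fin k) ℝ),
    (∀ i j, i ≠ j → M i j ≤ 0) → (∀ i, 0 ≤ ∑ j, M i j) → 0 ≤ M.det := by
  intro k
  induction k with
  | zero => intro M _ _; simp [Matrix.det_isEmpty]
  | succ k ih =>
    intro M hoff hsum
    have hsplit : ∀ i : Fin (k+1), (∑ j, M i j) = M i 0 + ∑ b : Fin k, M i b.succ :=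
      fun i => Fin.sum_univ_succ (fun j => M i j)
    have hd0 : 0 ≤ M 0 0 := by
      have h1 : (∑ b : Fin k, M 0 b.succ) ≤ 0 :=
        Finset.sum_nonpos (fun b _ => hoff 0 b.succ (Fin.succ_ne_zero b).symm)
      have := hsum 0
      rw [hsplit 0] at this
      linarith
    rcases eq_or_lt_of_le hd0 with h00 | h00
    · -- M 0 0 = 0, row 0 is zero
      have hrow0 : ∀ j, M 0 j = 0 := by
        have h1 : (∑ b : Fin k, M 0 b.succ) = 0 := by
          have h2 : (∑ b : Fin k, M 0 b.succ) ≤ 0 :=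
            Finset.sum_nonpos (fun b _ => hoff 0 b.succ (Fin.succ_ne_zero b).symm)
          have := hsum 0
          rw [hsplit 0, ← h00, zero_add] at this
          linarith
        have h3 := (Finset.sum_eq_zero_iff_of_nonpos
          (fun b (_ : b ∈ Finset.univ) => hoff 0 b.succ (Fin.succ_ne_zero b).symm)).1 h1
        intro j
        rcases Fin.eq_zero_or_eq_succ j with rfl | ⟨b, rfl⟩
        · exact h00.symm
        · exact h3 b (Finset.mem_univ b)
      exact le_of_eq (Matrix.det_eq_zero_of_row_eq_zero 0 hrow0).symm
    · -- M 0 0 > 0 : eliminate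
      set c : Fin (k+1) → ℝ := fun i => if i = 0 then 0 else -(M i 0 / M 0 0) with hc
      have hc0 : c 0 = 0 := by simp [hc]
      have hcnn : ∀ i, 0 ≤ c i := by
        intro i
        by_cases h : i = 0
        · simp [hc, h]
        · simp only [hc, if_neg h]
          have h1 := hoff i 0 h
          have h2 : M i 0 / M 0 0 ≤ 0 := div_nonpos_of_nonpos_of_nonneg h1 h00.le
          linarith
      set R : Matrix (Fin (k+1)) (Fin (k+1)) ℝ := fun i l => if l = 0 then c i else 0 with hR
      set E : Matrix (Fin (k+1)) (Fin (k+1)) ℝ := 1 + R with hE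
      have hEentry : ∀ i j, E i j = (if i = j then 1 else 0) + (if j = 0 then c i else 0) := by
        intro i j; rw [hE, Matrix.add_apply]; simp [hR, Matrix.one_apply]
      have hEdet : E.det = 1 := by
        have htri : E.BlockTriangular OrderDual.toDual := by
          intro i j hij
          have hij' : i < j := hij
          rw [hEentry, if_neg (ne_of_lt hij'), if_neg]
          · ring
          · rintro rfl; exact absurd hij' (by simp)
        rw [Matrix.det_of_lowerTriangular E htri]
        have : ∀ i, E i i = 1 := by
          intro i
          rw [hEentry, if_pos rfl]
          by_cases h : i = 0
          · subst h; rw [if_pos rfl, hc0]; ring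
          · rw [if_neg h]; ring
        simp [this]
      set N : Matrix (Fin (k+1)) (Fin (k+1)) ℝ := E * M with hN
      have hNentry : ∀ i j, N i j = M i j + c i * M 0 j := by
        intro i j
        have : N i j = ∑ l, ((if i = l then 1 else 0) + (if l = 0 then c i else 0)) * M l j := by
          simp only [hN, Matrix.mul_apply]
          refine Finset.sum_congr rfl (fun l _ => ?_)
          rw [hEentry]
        rw [this]
        simp only [add_mul, ite_mul, one_mul, zero_mul, Finset.sum_add_distrib,
          Finset.sum_ite_eq, Finset.sum_ite_eq', Finset.mem_univ, if_pos]
      have hNdet : N.det = M.det := by rw [hN, Matrix.det_mul, hEdet, one_mul]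
      have hNcol0 : ∀ i : Fin (k+1), i ≠ 0 → N i 0 = 0 := by
        intro i hi
        rw [hNentry]
        simp only [hc, if_neg hi]
        field_simp
        ring
      have hN00 : N 0 0 = M 0 0 := by rw [hNentry, hc0]; ring
      -- expansion along column 0
      have hexp : N.det = N 0 0 * (N.submatrix Fin.succ Fin.succ).det := by
        rw [Matrix.det_succ_column_zero]
        rw [Finset.sum_eq_single 0]
        · simp [Fin.succAbove_zero]
        · intro i _ hi
          rw [hNcol0 i hi]; ring
        · intro h; exact absurd (Finset.mem_univ _) h
      set Q : Matrix (Fin k) (Fin k) ℝ := N.submatrix Fin.succ Fin.succ with hQ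
      have hQentry : ∀ a b : Fin k, Q a b = M a.succ b.succ + c a.succ * M 0 b.succ := by
        intro a b; rw [hQ, Matrix.submatrix_apply, hNentry]
      have hQoff : ∀ a b, a ≠ b → Q a b ≤ 0 := by
        intro a b hab
        rw [hQentry]
        have h1 : M a.succ b.succ ≤ 0 := hoff _ _ (by simpa using hab)
        have h2 : M 0 b.succ ≤ 0 := hoff 0 b.succ (Fin.succ_ne_zero b).symm
        have h3 : c a.succ * M 0 b.succ ≤ 0 := mul_nonpos_of_nonneg_of_nonpos (hcnn _) h2
        linarith
      have hQsum : ∀ a, 0 ≤ ∑ b, Q a b := by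
        intro a
        have e1 : (∑ b, Q a b) = (∑ b : Fin k, M a.succ b.succ) + c a.succ * ∑ b : Fin k, M 0 b.succ := by
          simp only [hQentry]
          rw [Finset.sum_add_distrib, Finset.mul_sum]
        have e2 : (∑ b : Fin k, M a.succ b.succ) = (∑ j, M a.succ j) - M a.succ 0 := by
          rw [hsplit a.succ]; ring
        have e3 : (∑ b : Fin k, M 0 b.succ) = (∑ j, M 0 j) - M 0 0 := by
          rw [hsplit 0]; ring
        have e4 : c a.succ * M 0 0 = - M a.succ 0 := by
          simp only [hc, if_neg (Fin.succ_ne_zero a)]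
          field_simp
        have h5 : 0 ≤ c a.succ * ∑ j, M 0 j := mul_nonneg (hcnn _) (hsum 0)
        have h6 := hsum a.succ
        rw [e1, e2, e3, mul_sub, e4]
        linarith
      have := ih Q hQoff hQsum
      have : 0 ≤ N.det := by
        rw [hexp, hN00]
        exact mul_nonneg (le_of_lt h00) this
      rwa [hNdet] at this

lemma key_formula (A : Matrix (Fin n) (Fin n) ℝ) :
    ((Lmat A).updateCol 0 (fun i => ∑ j, A i j)).det = (n : ℝ) * A.det := by
  classical
  set L := Lmat A with hL
  set Ψ : Fin n → ℝ := fun j => (L.updateCol 0 (fun i => A i j)).det with hΨ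
  -- Step A
  have stepA : ∀ j : Fin n, j ≠ 0 → Ψ j = Ψ (j - 1) := by
    intro j hj
    have hsum : (fun i => A i j) = (fun i => A i (j - 1)) + (fun i => L i j) := by
      funext i; simp [hL, Lmat]
    have hzero : (L.updateCol 0 (fun i => L i j)).det = 0 := by
      refine Matrix.det_zero_of_column_eq (Ne.symm hj) (fun k => ?_)
      rw [Matrix.updateCol_self, Matrix.updateCol_apply, if_neg hj]
    rw [hΨ]
    simp only
    rw [hsum, Matrix.det_updateCol_add, hzero, add_zero]
  -- Step B
  have stepB : ∀ j : Fin n, Ψ j = Ψ 0 := by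
    have key : ∀ k : ℕ, Ψ ((k : ℕ) : Fin n) = Ψ 0 := by
      intro k
      induction k with
      | zero => norm_num
      | succ k ih =>
        by_cases h : ((k+1 : ℕ) : Fin n) = 0
        · rw [h]
        · rw [stepA _ h]
          have : ((k+1 : ℕ) : Fin n) - 1 = ((k : ℕ) : Fin n) := by push_cast; ring
          rw [this, ih]
    intro j
    have := key (j : ℕ)
    rwa [Fin.cast_val_eq_self] at this
  -- Step C : Ψ 0 = A.det
  have stepC : Ψ 0 = A.det := by
    set M : ℕ → Matrix (Fin n) (Fin n) ℝ :=
      fun t => fun i k => if (k : ℕ) ≤ t then A i k else L i k with hM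
    have hM0 : L.updateCol 0 (fun i => A i 0) = M 0 := by
      ext i k
      rw [Matrix.updateCol_apply]
      by_cases h : k = 0
      · subst h; simp [hM]
      · have : ¬ ((k : ℕ) ≤ 0) := by
          simp only [Nat.le_zero]
          exact fun hh => h (Fin.ext hh)
        simp [hM, h, this]
    have stepCt : ∀ t : ℕ, t + 1 < n → (M (t+1)).det = (M t).det := by
      intro t ht
      set j : Fin n := ((t+1 : ℕ) : Fin n) with hj
      set jp : Fin n := ((t : ℕ) : Fin n) with hjp
      have hjval : (j : ℕ) = t + 1 := Fin.val_cast_of_lt ht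
      have hjpval : (jp : ℕ) = t := Fin.val_cast_of_lt (by omega)
      have hjpj : jp ≠ j := by
        intro h
        have := congrArg (fun x : Fin n => (x : ℕ)) h
        simp only [hjval, hjpval] at this
        omega
      have hjsub : j - 1 = jp := by rw [hj, hjp]; push_cast; ring
      have hrepr : M (t+1) = (M t).updateCol j (fun i => A i j) := by
        ext i k
        rw [Matrix.updateCol_apply]
        by_cases h : k = j
        · subst h; simp [hM, hjval]
        · have hkval : (k : ℕ) ≠ t + 1 := by
            intro hh; exact h (by rw [hj]; exact Fin.ext (by rw [hjval]; exact hh))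
          rw [if_neg h]
          simp only [hM]
          by_cases h2 : (k : ℕ) ≤ t
          · rw [if_pos (by omega), if_pos h2]
          · rw [if_neg (by omega), if_neg h2]
      have hsum : (fun i => A i j) = (fun i => A i jp) + (fun i => L i j) := by
        funext i; simp [hL, Lmat, hjsub]
      have hzero : ((M t).updateCol j (fun i => A i jp)).det = 0 := by
        refine Matrix.det_zero_of_column_eq hjpj (fun k => ?_)
        rw [Matrix.updateCol_self, Matrix.updateCol_apply, if_neg hjpj]
        simp [hM, hjpval]
      have hself : (M t).updateCol j (fun i => L i j) = M t := by
        ext i k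
        rw [Matrix.updateCol_apply]
        by_cases h : k = j
        · subst h; simp [hM, hjval]
        · rw [if_neg h]
      rw [hrepr, hsum, Matrix.det_updateCol_add, hzero, hself]
      ring
    have hMend : M (n-1) = A := by
      ext i k
      simp only [hM]
      rw [if_pos]
      have := k.isLt
      omega
    have hchain : ∀ t : ℕ, t ≤ n - 1 → (M t).det = (M 0).det := by
      intro t
      induction t with
      | zero => intro _; rfl
      | succ t ih =>
        intro ht
        have hn : t + 1 < n := by
          have := Nat.pos_of_ne_zero (NeZero.ne n)
          omega
        rw [stepCt t hn, ih (by omega)]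
    have := hchain (n-1) le_rfl
    rw [hMend] at this
    rw [hΨ]
    simp only
    rw [hM0, ← this]
  -- Step D
  have hr : (fun i => ∑ j, A i j) = (fun i => ∑ j : Fin n, A i j) := rfl
  have hD : ((L.updateCol 0 (fun i => ∑ j, A i j))).det = ∑ j : Fin n, Ψ j := by
    have := Matrix.sum_cramer_apply (A := L) (s := (Finset.univ : Finset (Fin n)))
      (f := fun i j => A i j) (i := 0)
    simp only [Matrix.cramer_apply] at this
    rw [← this]
  rw [hD]
  have : ∀ j : Fin n, Ψ j = A.det := fun j => (stepB j).trans stepC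
  rw [Finset.sum_congr rfl (fun j _ => this j)]
  simp [Finset.card_univ, mul_comm]

lemma L_out_zero {A : Matrix (Fin n) (Fin n) ℝ} (hA : CyclicNonIncr A)
    {C : Set (Fin n)} (hC : ∀ i ∈ C, ∀ j, GraphEdge A i j → j ∈ C)
    {i j : Fin n} (hi : i ∈ C) (hj : j ∉ C) : Lmat A i j = 0 := by
  have hne : j ≠ i := by rintro rfl; exact hj hi
  refine le_antisymm (L_offdiag hA hne) ?_
  by_contra h
  push_neg at h
  exact hj (hC i hi j ((edge_iff A i j).2 h))

lemma kernel_vector {A : Matrix (Fin n) (Fin n) ℝ} (hA : CyclicNonIncr A)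
    {C : Set (Fin n)} (hCc : IsClosedSCC A C) :
    ∃ π : Fin n → ℝ, π ≠ 0 ∧ (∀ j, j ∉ C → π j = 0) ∧ Matrix.vecMul π (Lmat A) = 0 := by
  classical
  obtain ⟨ib, hCb⟩ := hCc.1
  have hib : ib ∈ C := by rw [hCb]; exact Set.mem_setOf.2 ⟨.refl, .refl⟩
  have hCne : Nonempty ↥C := ⟨⟨ib, hib⟩⟩
  set Q : Matrix ↥C ↥C ℝ := fun a b => Lmat A ↑a ↑b with hQ
  have hsplit : ∀ (f : Fin n → ℝ), (∀ j ∉ C, f j = 0) →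
      (∑ b : ↥C, f ↑b) = ∑ j : Fin n, f j := by
    intro f hf
    rw [← Finset.sum_filter_add_sum_filter_not Finset.univ (· ∈ C) f]
    have h1 : (∑ j ∈ Finset.univ.filter (· ∈ C), f j) = ∑ b : ↥C, f ↑b := by
      rw [Finset.sum_subtype (p := (· ∈ C)) (Finset.univ.filter (· ∈ C))
        (fun x => by simp) f]
    have h2 : (∑ j ∈ Finset.univ.filter (¬ · ∈ C), f j) = 0 :=
      Finset.sum_eq_zero (fun j hj => hf j (by simpa using hj))
    rw [h1, h2, add_zero]
  have hQrow : ∀ a : ↥C, (∑ b : ↥C, Q a b) = 0 := by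
    intro a
    have := hsplit (fun j => Lmat A ↑a j)
      (fun j hj => L_out_zero hA hCc.2 a.2 hj)
    rw [hQ]
    simp only at this ⊢
    rw [this, L_rowsum]
  have hdetQ : Q.det = 0 := by
    rw [← Matrix.exists_mulVec_eq_zero_iff]
    refine ⟨fun _ => 1, ?_, ?_⟩
    · intro h
      have := congrFun h (Classical.arbitrary ↥C)
      norm_num at this
    · funext a
      simp only [Matrix.mulVec, dotProduct, mul_one, Pi.zero_apply]
      exact hQrow a
  obtain ⟨v, hv0, hvQ⟩ := (Matrix.exists_vecMul_eq_zero_iff).2 hdetQ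
  set π : Fin n → ℝ := fun j => if h : j ∈ C then v ⟨j, h⟩ else 0 with hπ
  have hsupp : ∀ j, j ∉ C → π j = 0 := fun j hj => dif_neg hj
  refine ⟨π, ?_, hsupp, ?_⟩
  · obtain ⟨a, ha⟩ := Function.ne_iff.1 hv0
    intro h
    apply ha
    have := congrFun h ↑a
    simpa [hπ, a.2] using this
  · funext j
    have hexp : Matrix.vecMul π (Lmat A) j = ∑ i : Fin n, π i * Lmat A i j := by
      simp [Matrix.vecMul, dotProduct]
    have hzero : ∀ i ∉ C, π i * Lmat A i j = 0 := fun i hi => by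
      rw [hsupp i hi, zero_mul]
    have hsum : (∑ i : Fin n, π i * Lmat A i j) = ∑ a : ↥C, π ↑a * Lmat A ↑a j :=
      (hsplit _ hzero).symm
    by_cases hj : j ∈ C
    · have : (∑ a : ↥C, π ↑a * Lmat A ↑a j) = Matrix.vecMul v Q ⟨j, hj⟩ := by
        simp only [Matrix.vecMul, dotProduct, hQ]
        refine Finset.sum_congr rfl (fun a _ => ?_)
        congr 1
        simp [hπ, a.2]
      rw [Pi.zero_apply, hexp, hsum, this, hvQ]
      rfl
    · rw [Pi.zero_apply, hexp, hsum]
      exact Finset.sum_eq_zero (fun a _ => by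
        rw [L_out_zero hA hCc.2 a.2 hj, mul_zero])

lemma vecMul_const {A : Matrix (Fin n) (Fin n) ℝ} {π : Fin n → ℝ}
    (hπ : Matrix.vecMul π (Lmat A) = 0) :
    ∃ c : ℝ, ∀ j, Matrix.vecMul π A j = c := by
  set u := Matrix.vecMul π A with hu
  have ustep : ∀ j : Fin n, u j = u (j - 1) := by
    intro j
    have h1 : u j - u (j - 1) = Matrix.vecMul π (Lmat A) j := by
      simp only [hu, Matrix.vecMul, dotProduct, Lmat, ← Finset.sum_sub_distrib]
      refine Finset.sum_congr rfl (fun i _ => by ring)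
    rw [hπ, Pi.zero_apply] at h1
    linarith
  have key : ∀ k : ℕ, u ((k : ℕ) : Fin n) = u 0 := by
    intro k
    induction k with
    | zero => norm_num
    | succ k ih =>
      rw [ustep ((k+1 : ℕ) : Fin n)]
      have : ((k+1 : ℕ) : Fin n) - 1 = ((k : ℕ) : Fin n) := by push_cast; ring
      rw [this, ih]
  refine ⟨u 0, fun j => ?_⟩
  have := key (j : ℕ)
  rwa [Fin.cast_val_eq_self] at this

end Stmt11Aux

theorem stmt_11 (n : ℕ) [NeZero n] (hn : 1 ≤ n) (A : Matrix (Fin n) (Fin n) ℝ)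
    (hA : CyclicNonIncr A)
    (hrow : ∀ i, A.mulVec (fun _ => (1 : ℝ)) i < 0) :
    ((∃ C₁ C₂ : Set (Fin n), IsClosedSCC A C₁ ∧ IsClosedSCC A C₂ ∧ C₁ ≠ C₂) →
      A.det = 0) ∧
    ((∃ C : Set (Fin n), IsClosedSCC A C ∧
      ∀ C' : Set (Fin n), IsClosedSCC A C' → C' = C) → A.det < 0) := by
  classical
  have hrneg : ∀ i, (∑ j, A i j) < 0 := by
    intro i
    have := hrow i
    simpa [Matrix.mulVec, dotProduct] using this
  constructor
  · rintro ⟨C₁, C₂, hC₁, hC₂, hne⟩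
    obtain ⟨π₁, hπ₁0, hπ₁s, hπ₁L⟩ := Stmt11Aux.kernel_vector hA hC₁
    obtain ⟨π₂, hπ₂0, hπ₂s, hπ₂L⟩ := Stmt11Aux.kernel_vector hA hC₂
    obtain ⟨c₁, hc₁⟩ := Stmt11Aux.vecMul_const hπ₁L
    obtain ⟨c₂, hc₂⟩ := Stmt11Aux.vecMul_const hπ₂L
    rw [← Matrix.exists_vecMul_eq_zero_iff]
    by_cases h1 : c₁ = 0
    · refine ⟨π₁, hπ₁0, funext fun j => ?_⟩
      rw [hc₁ j, h1, Pi.zero_apply]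
    · obtain ⟨j₂, hj₂⟩ := Function.ne_iff.1 hπ₂0
      have hj₂C : j₂ ∈ C₂ := by
        by_contra h
        exact hj₂ (hπ₂s j₂ h)
      have hj₂C₁ : j₂ ∉ C₁ := Stmt11Aux.scc_disjoint hC₂.1 hC₁.1 (Ne.symm hne) j₂ hj₂C
      refine ⟨fun i => c₂ * π₁ i - c₁ * π₂ i, ?_, ?_⟩
      · intro h
        have h2 := congrFun h j₂
        rw [hπ₁s j₂ hj₂C₁] at h2
        simp only [Pi.zero_apply, mul_zero, zero_sub, neg_eq_zero] at h2
        rcases mul_eq_zero.1 h2 with h3 | h3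
        · exact h1 h3
        · exact hj₂ h3
      · funext j
        have hcomb : Matrix.vecMul (fun i => c₂ * π₁ i - c₁ * π₂ i) A j
            = c₂ * Matrix.vecMul π₁ A j - c₁ * Matrix.vecMul π₂ A j := by
          simp only [Matrix.vecMul, dotProduct, Finset.mul_sum,
            ← Finset.sum_sub_distrib]
          exact Finset.sum_congr rfl (fun i _ => by ring)
        rw [Pi.zero_apply, hcomb, hc₁ j, hc₂ j]
        ring
  · rintro ⟨C, hC, huniq⟩
    obtain ⟨ib, hCb⟩ := hC.1
    have hib : ib ∈ C := by
      rw [hCb]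
      exact Set.mem_setOf.2 ⟨.refl, .refl⟩
    set L := Stmt11Aux.Lmat A with hL
    have hdetL : L.det = 0 := by
      rw [← Matrix.exists_mulVec_eq_zero_iff]
      refine ⟨fun _ => 1, ?_, ?_⟩
      · intro h
        have := congrFun h ib
        norm_num at this
      · funext i
        simpa [Matrix.mulVec, dotProduct] using Stmt11Aux.L_rowsum A i
    have hadjconst : ∀ k : Fin n, L.adjugate 0 k = L.adjugate k k := by
      intro k
      have hker : ∀ j, L.mulVec (fun m => L.adjugate m k) j = 0 := by
        intro j
        have h1 : L.mulVec (fun m => L.adjugate m k) j = (L * L.adjugate) j k := by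
          simp [Matrix.mul_apply, Matrix.mulVec, dotProduct]
        rw [h1, Matrix.mul_adjugate, hdetL, zero_smul]
        rfl
      have hconst := Stmt11Aux.max_principle hA hC huniq hib _ (fun j _ => hker j)
      rw [hconst 0, hconst k]
    have hw : ∀ k : Fin n, L.adjugate k k = (L.updateRow k (Pi.single k 1)).det :=
      fun k => Matrix.adjugate_apply L k k
    have hwnn : ∀ k : Fin n, 0 ≤ L.adjugate k k := by
      intro k
      rw [hw]
      apply Stmt11Aux.det_nonneg_Z n
      · intro i j hij
        rw [Matrix.updateRow_apply]
        by_cases h : i = k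
        · rw [if_pos h]
          subst h
          rw [Pi.single_eq_of_ne (Ne.symm hij)]
        · rw [if_neg h]
          by_cases h2 : j = i
          · exact absurd h2.symm hij
          · exact Stmt11Aux.L_offdiag hA h2
      · intro i
        by_cases h : i = k
        · subst h
          have : (∑ j, (L.updateRow i (Pi.single i 1)) i j) = ∑ j, Pi.single i (1:ℝ) j := by
            refine Finset.sum_congr rfl (fun j _ => ?_)
            rw [Matrix.updateRow_self]
          rw [this, Finset.sum_pi_single']
          simp
        · have : (∑ j, (L.updateRow k (Pi.single k 1)) i j) = ∑ j, L i j := by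
            refine Finset.sum_congr rfl (fun j _ => ?_)
            rw [Matrix.updateRow_ne h]
          rw [this, Stmt11Aux.L_rowsum]
    have hwpos : 0 < L.adjugate ib ib := by
      rcases lt_or_eq_of_le (hwnn ib) with h | h
      · exact h
      exfalso
      have hdet_ne : (L.updateRow ib (Pi.single ib 1)).det ≠ 0 := by
        intro hdet
        obtain ⟨x, hx0, hx⟩ := (Matrix.exists_mulVec_eq_zero_iff).2 hdet
        have hxi : x ib = 0 := by
          have h2 := congrFun hx ib
          simp only [Matrix.mulVec, dotProduct, Pi.zero_apply] at h2
          have h3 : (∑ m, (L.updateRow ib (Pi.single ib 1)) ib m * x m) = x ib := by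
            have : ∀ m, (L.updateRow ib (Pi.single ib 1)) ib m * x m
                = (if m = ib then x m else 0) := by
              intro m
              rw [Matrix.updateRow_self, Pi.single_apply]
              by_cases h4 : m = ib <;> simp [h4]
            rw [Finset.sum_congr rfl (fun m _ => this m), Finset.sum_ite_eq'
              Finset.univ ib x]
            simp
          rw [h3] at h2
          exact h2
        have hLx : ∀ j, j ≠ ib → L.mulVec x j = 0 := by
          intro j hj
          have h2 := congrFun hx j
          simp only [Matrix.mulVec, dotProduct, Pi.zero_apply] at h2 ⊢
          rw [← h2]
          refine Finset.sum_congr rfl (fun m _ => ?_)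
          rw [Matrix.updateRow_ne hj]
        have hconst := Stmt11Aux.max_principle hA hC huniq hib x hLx
        apply hx0
        funext m
        rw [Pi.zero_apply, hconst m, hxi]
      exact hdet_ne (by rw [← hw, ← h])
    have hkey := Stmt11Aux.key_formula A
    have hcram : ((L.updateCol 0 (fun i => ∑ j, A i j))).det
        = ∑ k, L.adjugate 0 k * (∑ j, A k j) := by
      have h1 := Matrix.cramer_eq_adjugate_mulVec L (fun i => ∑ j, A i j)
      have h2 := congrFun h1 0
      rw [Matrix.cramer_apply] at h2
      rw [h2]
      simp [Matrix.mulVec, dotProduct]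
    have hsumneg : (∑ k, L.adjugate 0 k * (∑ j, A k j)) < 0 := by
      have hzero : (0:ℝ) = ∑ _k : Fin n, (0:ℝ) := by simp
      rw [hzero]
      refine Finset.sum_lt_sum (fun k _ => ?_) ⟨ib, Finset.mem_univ ib, ?_⟩
      · have h1 : 0 ≤ L.adjugate 0 k := by
          rw [hadjconst k]
          exact hwnn k
        have h2 := hrneg k
        nlinarith
      · have h1 : 0 < L.adjugate 0 ib := by
          rw [hadjconst ib]
          exact hwpos
        exact mul_neg_of_pos_of_neg h1 (hrneg ib)
    have hfin : (n : ℝ) * A.det < 0 := by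
      rw [← hkey, hcram]
      exact hsumneg
    have hnpos : (0:ℝ) < n := by
      have := Nat.pos_of_ne_zero (NeZero.ne n)
      exact_mod_cast this
    nlinarith
end

section
/- Let n ≥ 1 and let A = (a_{ij}) be a real n×n matrix with all entries non-negative such that for every row i, a_{ii} > a_{i[i+1]} ≥ a_{i[i+2]} ≥ … ≥ a_{i[i+n−1]} (the diagonal entry strictly exceeds the next entry in cyclic order, and the row weakly decreases cyclically thereafter). Then A is a P-matrix. -/
open Matrix BigOperators

namespace Stmt13Aux

open Fin.NatCast Fin.CommRing

lemma fin_sub_val_cases {k : ℕ} (a b : Fin k) :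
    (b.val ≤ a.val ∧ (a - b).val = a.val - b.val) ∨
    (a.val < b.val ∧ (a - b).val = k + a.val - b.val) := by
  have hb := b.isLt
  have ha := a.isLt
  rcases le_or_gt b.val a.val with h | h
  · left
    refine ⟨h, ?_⟩
    rw [Fin.sub_def]
    simp only
    have h2 : k - b.val + a.val = (a.val - b.val) + k := by omega
    rw [h2, Nat.add_mod_right, Nat.mod_eq_of_lt (by omega)]
  · right
    refine ⟨h, ?_⟩
    rw [Fin.sub_def]
    simp only
    rw [Nat.mod_eq_of_lt (by omega)]
    omega

lemma natCast_fin_val {n : ℕ} [NeZero n] (k : ℕ) (h : k < n) : ((k : Fin n)).val = k := by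
  rw [Fin.val_natCast]; exact Nat.mod_eq_of_lt h

lemma fin_one_val {n : ℕ} [NeZero n] (hn2 : 2 ≤ n) : (1 : Fin n).val = 1 := by
  have := natCast_fin_val (n := n) 1 (by omega)
  simpa using this

lemma fin_val_pos {k : ℕ} [NeZero k] (a : Fin k) (h : a ≠ 0) : 1 ≤ a.val := by
  rcases Nat.eq_zero_or_pos a.val with h0 | h0
  · exact absurd (Fin.val_injective (by simp [h0])) h
  · exact h0

lemma val_order_iff {n m : ℕ} (f : Fin m → Fin n) (hf : StrictMono f) (a b : Fin m) :
    a.val < b.val ↔ (f a).val < (f b).val := by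
  rw [← Fin.lt_def, ← Fin.lt_def, hf.lt_iff_lt]

lemma D_mono {n m : ℕ} [NeZero n] [NeZero m] (f : Fin m → Fin n) (hf : StrictMono f)
    (p q₁ q₂ : Fin m) (h1 : q₁ ≠ p) (h2 : q₂ ≠ p) (hle : (q₁ - p).val ≤ (q₂ - p).val) :
    (f q₁ - f p).val ≤ (f q₂ - f p).val := by
  have hA := fin_sub_val_cases q₁ p
  have hB := fin_sub_val_cases q₂ p
  have hC := fin_sub_val_cases (f q₁) (f p)
  have hD := fin_sub_val_cases (f q₂) (f p)
  have hi1 := val_order_iff f hf q₁ p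
  have hi2 := val_order_iff f hf q₂ p
  have hi3 := val_order_iff f hf p q₁
  have hi4 := val_order_iff f hf p q₂
  have hi5 := val_order_iff f hf q₁ q₂
  have hi6 := val_order_iff f hf q₂ q₁
  have hne1 : q₁.val ≠ p.val := fun h => h1 (Fin.val_injective h)
  have hne2 : q₂.val ≠ p.val := fun h => h2 (Fin.val_injective h)
  have hfne1 : (f q₁).val ≠ (f p).val := fun h => h1 (hf.injective (Fin.val_injective h))
  have hfne2 : (f q₂).val ≠ (f p).val := fun h => h2 (hf.injective (Fin.val_injective h))
  have hb1 := q₁.isLt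
  have hb2 := q₂.isLt
  have hbp := p.isLt
  have hfb1 := (f q₁).isLt
  have hfb2 := (f q₂).isLt
  have hfbp := (f p).isLt
  omega

variable {n : ℕ} [NeZero n]

/-- Sum of `x` over the cyclic interval starting at `i` of length `l`. -/
def V (x : Fin n → ℝ) (i : Fin n) (l : ℕ) : ℝ := ∑ m ∈ Finset.range l, x (i + (m : Fin n))

lemma V_add (x : Fin n → ℝ) (i : Fin n) (l₁ l₂ : ℕ) :
    V x i (l₁ + l₂) = V x i l₁ + V x (i + (l₁ : Fin n)) l₂ := by
  rw [V, Finset.sum_range_add]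
  congr 1
  refine Finset.sum_congr rfl fun m _ => ?_
  congr 1
  push_cast
  ring

lemma V_one (x : Fin n → ℝ) (i : Fin n) : V x i 1 = x i := by simp [V]

lemma V_univ (x : Fin n → ℝ) (i : Fin n) : V x i n = ∑ j, x j := by
  rw [V, ← Fin.sum_univ_eq_sum_range (fun m => x (i + (m : Fin n))) n]
  simp only [Fin.cast_val_eq_self]
  exact Equiv.sum_comp (Equiv.addLeft i) x

lemma row_identity (A : Matrix (Fin n) (Fin n) ℝ) (x : Fin n → ℝ)
    (hx : A.mulVec x = 0) (i : Fin n) :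
    (∑ k ∈ Finset.range (n - 1),
        (A i (i + (k : Fin n)) - A i (i + ((k + 1 : ℕ) : Fin n))) * V x i (k + 1))
      + A i (i + ((n - 1 : ℕ) : Fin n)) * V x i n = 0 := by
  have h0 : ∑ k ∈ Finset.range n, A i (i + (k : Fin n)) * x (i + (k : Fin n)) = 0 := by
    have h := congrFun hx i
    rw [Matrix.mulVec, dotProduct, Pi.zero_apply] at h
    rw [← Fin.sum_univ_eq_sum_range (fun k => A i (i + (k : Fin n)) * x (i + (k : Fin n))) n]
    simp only [Fin.cast_val_eq_self]
    calc ∑ k : Fin n, A i (i + k) * x (i + k)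
        = ∑ j, A i j * x j := Equiv.sum_comp (Equiv.addLeft i) (fun j => A i j * x j)
      _ = 0 := h
  have habel := Finset.sum_range_by_parts (fun k => A i (i + (k : Fin n)))
      (fun k => x (i + (k : Fin n))) n
  simp only [smul_eq_mul] at habel
  rw [h0] at habel
  have hV : ∀ l : ℕ, V x i l = ∑ m ∈ Finset.range l, x (i + (m : Fin n)) := fun l => rfl
  simp only [hV]
  have heq : ∑ k ∈ Finset.range (n - 1),
      (A i (i + (k : Fin n)) - A i (i + ((k + 1 : ℕ) : Fin n))) *
        ∑ m ∈ Finset.range (k + 1), x (i + (m : Fin n))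
      = - ∑ k ∈ Finset.range (n - 1),
      (A i (i + ((k + 1 : ℕ) : Fin n)) - A i (i + (k : Fin n))) *
        ∑ m ∈ Finset.range (k + 1), x (i + (m : Fin n)) := by
    rw [← Finset.sum_neg_distrib]
    exact Finset.sum_congr rfl fun k _ => by ring
  rw [heq]
  linarith [habel]

lemma step (A : Matrix (Fin n) (Fin n) ℝ)
    (hrest : ∀ i j : Fin n, j ≠ i → j ≠ i + 1 → A i (j - 1) ≥ A i j)
    (hn2 : 2 ≤ n) (i : Fin n) (k : ℕ) (h1 : 1 ≤ k) (h2 : k ≤ n - 2) :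
    A i (i + ((k + 1 : ℕ) : Fin n)) ≤ A i (i + (k : Fin n)) := by
  have hval : ((k + 1 : ℕ) : Fin n).val = k + 1 := natCast_fin_val _ (by omega)
  have h1v : (1 : Fin n).val = 1 := fin_one_val hn2
  have hj1 : i + ((k + 1 : ℕ) : Fin n) ≠ i := by
    intro h
    have h' : ((k + 1 : ℕ) : Fin n) = 0 :=
      add_left_cancel (a := i) (b := ((k + 1 : ℕ) : Fin n)) (c := 0) (by simpa using h)
    rw [h'] at hval
    simp at hval
  have hj2 : i + ((k + 1 : ℕ) : Fin n) ≠ i + 1 := by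
    intro h
    have h' : ((k + 1 : ℕ) : Fin n) = 1 := add_left_cancel h
    rw [h'] at hval
    omega
  have h := hrest i (i + ((k + 1 : ℕ) : Fin n)) hj1 hj2
  have hsub : i + ((k + 1 : ℕ) : Fin n) - 1 = i + (k : Fin n) := by
    have hc : ((k + 1 : ℕ) : Fin n) = (k : Fin n) + 1 := by push_cast; ring
    rw [hc]; ring
  rwa [hsub] at h

lemma chain (A : Matrix (Fin n) (Fin n) ℝ)
    (hrest : ∀ i j : Fin n, j ≠ i → j ≠ i + 1 → A i (j - 1) ≥ A i j)
    (hn2 : 2 ≤ n) (i : Fin n) :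
    ∀ t, t ≤ n - 1 → ∀ s, 1 ≤ s → s ≤ t → A i (i + (t : Fin n)) ≤ A i (i + (s : Fin n)) := by
  intro t
  induction t with
  | zero => intro _ s h1 h2; exact absurd h2 (by omega)
  | succ t ih =>
    intro ht s h1 h2
    rcases eq_or_lt_of_le h2 with he | hlt
    · rw [he]
    · have h3 : s ≤ t := by omega
      have hstep : A i (i + ((t + 1 : ℕ) : Fin n)) ≤ A i (i + (t : Fin n)) :=
        step A hrest hn2 i t (by omega) (by omega)
      exact le_trans hstep (ih (by omega) s h1 h3)

lemma chain0 (A : Matrix (Fin n) (Fin n) ℝ)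
    (hdiag : ∀ i : Fin n, A i (i + 1) < A i i)
    (hrest : ∀ i j : Fin n, j ≠ i → j ≠ i + 1 → A i (j - 1) ≥ A i j)
    (hn2 : 2 ≤ n) (i : Fin n) (t : ℕ) (h1 : 1 ≤ t) (h2 : t ≤ n - 1) :
    A i (i + (t : Fin n)) < A i i := by
  have h := chain A hrest hn2 i t h2 1 le_rfl h1
  have h1' : (((1 : ℕ)) : Fin n) = 1 := Nat.cast_one
  rw [h1'] at h
  exact lt_of_le_of_lt h (hdiag i)

lemma aux_zero (hn2 : 2 ≤ n) (A : Matrix (Fin n) (Fin n) ℝ)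
    (hpos : ∀ i j, 0 ≤ A i j)
    (hdiag : ∀ i : Fin n, A i (i + 1) < A i i)
    (hrest : ∀ i j : Fin n, j ≠ i → j ≠ i + 1 → A i (j - 1) ≥ A i j)
    (x : Fin n → ℝ) (hx : A.mulVec x = 0) (hsig : 0 ≤ ∑ j, x j) : x = 0 := by
  by_contra hne
  have hipos : ∃ i0, 0 < x i0 := by
    by_contra h
    push_neg at h
    have hle : ∑ j, x j ≤ 0 := Finset.sum_nonpos (fun j _ => h j)
    have hz : ∀ j ∈ (Finset.univ : Finset (Fin n)), x j = 0 :=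
      (Finset.sum_eq_zero_iff_of_nonpos (fun j _ => h j)).mp (le_antisymm hle hsig)
    exact hne (funext fun j => hz j (Finset.mem_univ j))
  obtain ⟨i0, hi0⟩ := hipos
  obtain ⟨⟨i₁, l₁⟩, hmem, hmax'⟩ :=
    Finset.exists_max_image ((Finset.univ : Finset (Fin n)) ×ˢ Finset.Icc 1 n)
      (fun p => V x p.1 p.2) ⟨(i0, 1), by simp [Finset.mem_Icc]; omega⟩
  set M := V x i₁ l₁ with hM
  have hmax : ∀ (j : Fin n) (l : ℕ), 1 ≤ l → l ≤ n → V x j l ≤ M := fun j l h1 h2 =>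
    hmax' (j, l) (by simp [Finset.mem_Icc]; omega)
  have hMpos : 0 < M := by
    have h := hmax i0 1 le_rfl (by omega)
    rw [V_one] at h
    linarith
  have hLne : ((Finset.Icc 1 n).filter (fun l => ∃ j, V x j l = M)).Nonempty := by
    refine ⟨l₁, ?_⟩
    simp only [Finset.mem_filter, Finset.mem_Icc]
    have hl₁ : 1 ≤ l₁ ∧ l₁ ≤ n := by
      have := hmem
      simp [Finset.mem_Icc] at this
      omega
    exact ⟨hl₁, i₁, rfl⟩
  set len := ((Finset.Icc 1 n).filter (fun l => ∃ j, V x j l = M)).min' hLne with hlen_def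
  have hlenL := Finset.min'_mem _ hLne
  rw [Finset.mem_filter, Finset.mem_Icc] at hlenL
  obtain ⟨⟨hlen1, hlenn⟩, i, hMi⟩ := hlenL
  have hminlen : ∀ l, 1 ≤ l → l ≤ n → (∃ j, V x j l = M) → len ≤ l := by
    intro l h1 h2 he
    apply Finset.min'_le
    rw [Finset.mem_filter, Finset.mem_Icc]
    exact ⟨⟨h1, h2⟩, he⟩
  have hpref : ∀ k : ℕ, k + 1 ≤ len → 0 < V x i (k + 1) := by
    intro k hk
    rcases eq_or_lt_of_le hk with he | hlt
    · rw [he, hMi]; exact hMpos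
    · have hsplit : V x i (k + 1) + V x (i + ((k + 1 : ℕ) : Fin n)) (len - (k + 1)) = M := by
        rw [← V_add, Nat.add_sub_cancel' (le_of_lt hlt)]
        exact hMi
      have hsuf : V x (i + ((k + 1 : ℕ) : Fin n)) (len - (k + 1)) ≤ M :=
        hmax _ _ (by omega) (by omega)
      have hge : 0 ≤ V x i (k + 1) := by linarith
      rcases hge.lt_or_eq with h | h
      · exact h
      · exfalso
        have heq : V x (i + ((k + 1 : ℕ) : Fin n)) (len - (k + 1)) = M := by linarith
        have := hminlen (len - (k + 1)) (by omega) (by omega) ⟨_, heq⟩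
        omega
  have hid := row_identity A x hx i
  have hsig' : V x i n = ∑ j, x j := V_univ x i
  have hb : 0 ≤ A i (i + ((n - 1 : ℕ) : Fin n)) * V x i n := by
    apply mul_nonneg (hpos _ _)
    rw [hsig']; exact hsig
  have hc0 : 0 < (A i (i + ((0 : ℕ) : Fin n)) - A i (i + ((0 + 1 : ℕ) : Fin n))) * V x i (0 + 1) := by
    apply mul_pos
    · have h0 : ((0 : ℕ) : Fin n) = 0 := by norm_num
      have h1 : ((0 + 1 : ℕ) : Fin n) = 1 := by norm_num
      rw [h0, h1, add_zero]
      exact sub_pos.mpr (hdiag i)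
    · exact hpref 0 (by omega)
  have hcnn : ∀ k : ℕ, 1 ≤ k → k ≤ n - 2 →
      0 ≤ A i (i + (k : Fin n)) - A i (i + ((k + 1 : ℕ) : Fin n)) :=
    fun k h1 h2 => sub_nonneg.mpr (step A hrest hn2 i k h1 h2)
  have hterm_nonneg : ∀ k ∈ Finset.range (n - 1), k + 1 ≤ len →
      0 ≤ (A i (i + (k : Fin n)) - A i (i + ((k + 1 : ℕ) : Fin n))) * V x i (k + 1) := by
    intro k hk hkl
    rcases Nat.eq_zero_or_pos k with h0 | h0
    · subst h0; exact le_of_lt hc0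
    · rw [Finset.mem_range] at hk
      exact mul_nonneg (hcnn k h0 (by omega)) (le_of_lt (hpref k hkl))
  by_cases hcase : len = n
  · have hsum_pos : 0 < ∑ k ∈ Finset.range (n - 1),
        (A i (i + (k : Fin n)) - A i (i + ((k + 1 : ℕ) : Fin n))) * V x i (k + 1) := by
      apply Finset.sum_pos' (fun k hk => hterm_nonneg k hk (by rw [Finset.mem_range] at hk; omega))
      exact ⟨0, Finset.mem_range.mpr (by omega), hc0⟩
    linarith
  · have hlen' : len ≤ n - 1 := by omega
    have hsplit : ∑ k ∈ Finset.range (n - 1),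
        (A i (i + (k : Fin n)) - A i (i + ((k + 1 : ℕ) : Fin n))) * V x i (k + 1)
        = (∑ k ∈ Finset.range len,
            (A i (i + (k : Fin n)) - A i (i + ((k + 1 : ℕ) : Fin n))) * V x i (k + 1))
          + ∑ k ∈ Finset.Ico len (n - 1),
            (A i (i + (k : Fin n)) - A i (i + ((k + 1 : ℕ) : Fin n))) * V x i (k + 1) := by
      simp only [Finset.range_eq_Ico]
      rw [← Finset.sum_Ico_consecutive _ (Nat.zero_le len) hlen']
    have hfirst_pos : 0 < ∑ k ∈ Finset.range len,
        (A i (i + (k : Fin n)) - A i (i + ((k + 1 : ℕ) : Fin n))) * V x i (k + 1) := by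
      apply Finset.sum_pos'
      · intro k hk
        rw [Finset.mem_range] at hk
        exact hterm_nonneg k (Finset.mem_range.mpr (by omega)) (by omega)
      · exact ⟨0, Finset.mem_range.mpr (by omega), hc0⟩
    have htail_neg : ∑ k ∈ Finset.Ico len (n - 1),
        (A i (i + (k : Fin n)) - A i (i + ((k + 1 : ℕ) : Fin n))) * V x i (k + 1) < 0 := by
      rw [hsplit] at hid
      linarith
    have hex : ∃ k ∈ Finset.Ico len (n - 1),
        (A i (i + (k : Fin n)) - A i (i + ((k + 1 : ℕ) : Fin n))) * V x i (k + 1) < 0 := by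
      by_contra hcon
      push_neg at hcon
      have : 0 ≤ ∑ k ∈ Finset.Ico len (n - 1),
          (A i (i + (k : Fin n)) - A i (i + ((k + 1 : ℕ) : Fin n))) * V x i (k + 1) :=
        Finset.sum_nonneg hcon
      linarith
    obtain ⟨k, hkmem, hkneg⟩ := hex
    rw [Finset.mem_Ico] at hkmem
    have hck : 0 ≤ A i (i + (k : Fin n)) - A i (i + ((k + 1 : ℕ) : Fin n)) :=
      hcnn k (by omega) (by omega)
    have hTk : V x i (k + 1) < 0 := by
      by_contra hT
      push_neg at hT
      exact absurd (mul_nonneg hck hT) (not_le.mpr hkneg)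
    have hW : V x i (k + 1) = M + V x (i + (len : Fin n)) (k + 1 - len) := by
      have h' := V_add x i len (k + 1 - len)
      rw [Nat.add_sub_cancel' (by omega : len ≤ k + 1)] at h'
      rw [h', hMi]
    set W := V x (i + (len : Fin n)) (k + 1 - len) with hWdef
    have hWneg : W < -M := by rw [hW] at hTk; linarith
    have hcomp : V x (i + (len : Fin n)) n = W
        + V x (i + (len : Fin n) + ((k + 1 - len : ℕ) : Fin n)) (n - (k + 1 - len)) := by
      have h' : n = (k + 1 - len) + (n - (k + 1 - len)) := by omega
      calc V x (i + (len : Fin n)) n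
          = V x (i + (len : Fin n)) ((k + 1 - len) + (n - (k + 1 - len))) := by rw [← h']
        _ = _ := V_add _ _ _ _
    have hfull : V x (i + (len : Fin n)) n = ∑ j, x j := V_univ _ _
    have hbig : M < V x (i + (len : Fin n) + ((k + 1 - len : ℕ) : Fin n)) (n - (k + 1 - len)) := by
      have heq2 : V x (i + (len : Fin n) + ((k + 1 - len : ℕ) : Fin n)) (n - (k + 1 - len))
          = (∑ j, x j) - W := by rw [← hfull, hcomp]; ring
      rw [heq2]
      linarith
    have hle := hmax (i + (len : Fin n) + ((k + 1 - len : ℕ) : Fin n)) (n - (k + 1 - len))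
      (by omega) (by omega)
    linarith

lemma det_ne_zero (hn2 : 2 ≤ n) (A : Matrix (Fin n) (Fin n) ℝ)
    (hpos : ∀ i j, 0 ≤ A i j)
    (hdiag : ∀ i : Fin n, A i (i + 1) < A i i)
    (hrest : ∀ i j : Fin n, j ≠ i → j ≠ i + 1 → A i (j - 1) ≥ A i j) :
    A.det ≠ 0 := by
  intro h
  obtain ⟨v, hv0, hv⟩ := Matrix.exists_mulVec_eq_zero_iff.mpr h
  rcases le_or_gt 0 (∑ j, v j) with h1 | h1
  · exact hv0 (aux_zero hn2 A hpos hdiag hrest v hv h1)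
  · have h2 : A.mulVec (-v) = 0 := by rw [Matrix.mulVec_neg, hv, neg_zero]
    have h3 : 0 ≤ ∑ j, (-v) j := by
      simp only [Pi.neg_apply]
      rw [Finset.sum_neg_distrib]
      linarith
    have h4 := aux_zero hn2 A hpos hdiag hrest (-v) h2 h3
    exact hv0 (by simpa using neg_eq_zero.mp h4)

lemma det_pos (hn2 : 2 ≤ n) (A : Matrix (Fin n) (Fin n) ℝ)
    (hpos : ∀ i j, 0 ≤ A i j)
    (hdiag : ∀ i : Fin n, A i (i + 1) < A i i)
    (hrest : ∀ i j : Fin n, j ≠ i → j ≠ i + 1 → A i (j - 1) ≥ A i j) :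
    0 < A.det := by
  set f : ℝ → ℝ := fun t => ((1 - t) • (1 : Matrix (Fin n) (Fin n) ℝ) + t • A).det with hf
  have hone_ne : (1 : Fin n) ≠ 0 := by
    intro h
    have h2 := fin_one_val (n := n) hn2
    rw [h] at h2
    simp at h2
  have hentry : ∀ (t : ℝ) (i j : Fin n), ((1 - t) • (1 : Matrix (Fin n) (Fin n) ℝ) + t • A) i j
      = (if i = j then (1 - t) else 0) + t * A i j := by
    intro t i j
    by_cases hij : i = j <;>
      simp [Matrix.add_apply, Matrix.smul_apply, Matrix.one_apply, hij, smul_eq_mul]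
  have hB : ∀ t : ℝ, t ∈ Set.Icc (0 : ℝ) 1 → f t ≠ 0 := by
    intro t ht
    obtain ⟨ht0, ht1⟩ := ht
    apply det_ne_zero hn2
    · intro i j
      rw [hentry]
      split_ifs
      · nlinarith [hpos i j]
      · simpa using mul_nonneg ht0 (hpos i j)
    · intro i
      have hne : i + 1 ≠ i := by
        intro h
        exact hone_ne (add_left_cancel (a := i) (b := (1 : Fin n)) (c := 0) (by simpa using h))
      rw [hentry, hentry, if_neg (fun h => hne h.symm), if_pos rfl]
      rcases eq_or_lt_of_le ht0 with h0 | h0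
      · rw [← h0]; norm_num
      · nlinarith [mul_pos h0 (sub_pos.mpr (hdiag i))]
    · intro i j hji hji1
      have hj1i : j - 1 ≠ i := by
        intro h
        apply hji1
        rw [← h]; ring
      rw [hentry, hentry, if_neg (fun h => hj1i h.symm), if_neg (fun h => hji h.symm)]
      simp only [zero_add]
      exact mul_le_mul_of_nonneg_left (hrest i j hji hji1) ht0
  have hcont : Continuous f := by
    apply Continuous.matrix_det
    exact ((continuous_const.sub continuous_id).smul continuous_const).add
      (continuous_id.smul continuous_const)
  have h0 : f 0 = 1 := by simp [hf]
  have h1 : f 1 = A.det := by simp [hf]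
  by_contra hle
  push_neg at hle
  have hne1' := hB 1 (by norm_num)
  rw [h1] at hne1'
  have hneg : A.det < 0 := lt_of_le_of_ne hle hne1'
  have hsub := intermediate_value_Icc' (by norm_num : (0 : ℝ) ≤ 1) hcont.continuousOn
  have h0mem : (0 : ℝ) ∈ Set.Icc (f 1) (f 0) := by
    rw [h0, h1]
    exact ⟨le_of_lt hneg, by norm_num⟩
  obtain ⟨t, htmem, hft⟩ := hsub h0mem
  exact hB t htmem hft

lemma sub_hdiag {m : ℕ} [NeZero m] (hn2 : 2 ≤ n) (hm2 : 2 ≤ m)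
    (A : Matrix (Fin n) (Fin n) ℝ)
    (hdiag : ∀ i : Fin n, A i (i + 1) < A i i)
    (hrest : ∀ i j : Fin n, j ≠ i → j ≠ i + 1 → A i (j - 1) ≥ A i j)
    (f : Fin m → Fin n) (hf : StrictMono f) (p : Fin m) :
    A (f p) (f (p + 1)) < A (f p) (f p) := by
  have hone_ne : (1 : Fin m) ≠ 0 := by
    intro h
    have h2 := fin_one_val (n := m) hm2
    rw [h] at h2
    simp at h2
  have hne : p + 1 ≠ p := by
    intro h
    exact hone_ne (add_left_cancel (a := p) (b := (1 : Fin m)) (c := 0) (by simpa using h))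
  have hfe : f (p + 1) - f p ≠ 0 := by
    intro h
    exact hne (hf.injective (sub_eq_zero.mp h))
  have hD1 : 1 ≤ (f (p + 1) - f p).val := fin_val_pos _ hfe
  have hDn : (f (p + 1) - f p).val ≤ n - 1 := by
    have := (f (p + 1) - f p).isLt
    omega
  have hc := chain0 A hdiag hrest hn2 (f p) ((f (p + 1) - f p).val) hD1 hDn
  have hcast : f p + (((f (p + 1) - f p).val : ℕ) : Fin n) = f (p + 1) := by
    rw [Fin.cast_val_eq_self]; ring
  rwa [hcast] at hc

lemma sub_hrest {m : ℕ} [NeZero m] (hn2 : 2 ≤ n) (hm2 : 2 ≤ m)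
    (A : Matrix (Fin n) (Fin n) ℝ)
    (hrest : ∀ i j : Fin n, j ≠ i → j ≠ i + 1 → A i (j - 1) ≥ A i j)
    (f : Fin m → Fin n) (hf : StrictMono f) (p q : Fin m)
    (hqp : q ≠ p) (hqp1 : q ≠ p + 1) :
    A (f p) (f (q - 1)) ≥ A (f p) (f q) := by
  have hm1v : (1 : Fin m).val = 1 := fin_one_val hm2
  have hq1p : q - 1 ≠ p := by
    intro h
    apply hqp1
    rw [← h]; ring
  have hr0 : (q - p) ≠ 0 := fun h => hqp (sub_eq_zero.mp h)
  have hrv0 : 1 ≤ (q - p).val := fin_val_pos _ hr0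
  have hr1 : (q - p) ≠ 1 := by
    intro h
    apply hqp1
    have : q = (q - p) + p := by ring
    rw [h] at this
    rw [this]; ring
  have hrv1 : (q - p).val ≠ 1 := by
    intro h
    exact hr1 (Fin.val_injective (by rw [h, hm1v]))
  have hsub1 : q - 1 - p = q - p - 1 := by ring
  have hsubval : (q - p - 1).val = (q - p).val - 1 := by
    rcases fin_sub_val_cases (q - p) 1 with ⟨h, he⟩ | ⟨h, he⟩
    · rwa [hm1v] at he
    · rw [hm1v] at h; omega
  have hle : (q - 1 - p).val ≤ (q - p).val := by
    rw [hsub1, hsubval]; omega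
  have hDle := D_mono f hf p (q - 1) q hq1p hqp hle
  have hfq1 : f (q - 1) - f p ≠ 0 := fun h => hq1p (hf.injective (sub_eq_zero.mp h))
  have hd1 : 1 ≤ (f (q - 1) - f p).val := fin_val_pos _ hfq1
  have hdn : (f q - f p).val ≤ n - 1 := by
    have := (f q - f p).isLt
    omega
  have hc := chain A hrest hn2 (f p) ((f q - f p).val) hdn ((f (q - 1) - f p).val) hd1 hDle
  have e1 : f p + (((f q - f p).val : ℕ) : Fin n) = f q := by
    rw [Fin.cast_val_eq_self]; ring
  have e2 : f p + (((f (q - 1) - f p).val : ℕ) : Fin n) = f (q - 1) := by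
    rw [Fin.cast_val_eq_self]; ring
  rw [e1, e2] at hc
  exact hc

end Stmt13Aux

/-- A square real matrix is a `P`-matrix if all its principal minors
(over nonempty index subsets) are strictly positive. -/
def IsPMatrix {n : ℕ} [NeZero n] (A : Matrix (Fin n) (Fin n) ℝ) : Prop :=
  ∀ S : Finset (Fin n), S.Nonempty →
    0 < (A.submatrix (fun i : {a // a ∈ S} => (i : Fin n))
          (fun j : {a // a ∈ S} => (j : Fin n))).det

theorem stmt_13 (n : ℕ) [NeZero n] (hn : 1 ≤ n) (A : Matrix (Fin n) (Fin n) ℝ)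
    (hpos : ∀ i j, 0 ≤ A i j)
    (hdiag : ∀ i : Fin n, A i (i + 1) < A i i)
    (hrest : ∀ i j : Fin n, j ≠ i → j ≠ i + 1 → A i (j - 1) ≥ A i j) :
    IsPMatrix A := by
  intro S hS
  by_cases hn1 : n = 1
  · exfalso
    subst hn1
    have h := hdiag 0
    have h01 : (0 : Fin 1) + 1 = 0 := Subsingleton.elim _ _
    rw [h01] at h
    exact lt_irrefl _ h
  have hn2 : 2 ≤ n := by omega
  have hm1 : 1 ≤ S.card := Finset.Nonempty.card_pos hS
  set f : Fin S.card → Fin n := fun p => S.orderEmbOfFin rfl p with hfdef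
  have hf : StrictMono f := (S.orderEmbOfFin rfl).strictMono
  have hdet : (A.submatrix (fun i : {a // a ∈ S} => (i : Fin n))
      (fun j : {a // a ∈ S} => (j : Fin n))).det = (A.submatrix f f).det := by
    rw [← Matrix.det_submatrix_equiv_self (S.orderIsoOfFin rfl).toEquiv,
      Matrix.submatrix_submatrix]
    congr 1
  rw [hdet]
  rcases eq_or_lt_of_le hm1 with h1 | h2
  · -- singleton case
    haveI : Unique (Fin S.card) := by rw [← h1]; infer_instance
    rw [Matrix.det_unique]
    simp only [Matrix.submatrix_apply]
    have hd := hdiag (f default)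
    have hp := hpos (f default) (f default + 1)
    linarith
  · haveI : NeZero S.card := ⟨by omega⟩
    exact Stmt13Aux.det_pos (n := S.card) (by omega) (A.submatrix f f)
      (fun p q => hpos (f p) (f q))
      (fun p => Stmt13Aux.sub_hdiag hn2 (by omega) A hdiag hrest f hf p)
      (fun p q hqp hqp1 => Stmt13Aux.sub_hrest hn2 (by omega) A hrest f hf p q hqp hqp1)
end

section
/- Let n ≥ 1 and let A = (a_{ij}) be a real n×n matrix with all entries non-negative satisfying the cyclic non-increasing condition and Ae > 0 (all row sums strictly positive). Suppose in addition there is an index k ∈ {1,…,n} such that a_{rr} > a_{rk} for every row index r ≠ k. Then A is a P-matrix. -/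
open Matrix BigOperators

namespace Stmt14Aux
open Finset
open Fin.CommRing


lemma fin_sub_val {q : ℕ} [NeZero q] (x y : Fin q) :
    (x - y).val = if y.val ≤ x.val then x.val - y.val else q + x.val - y.val := by
  have hx := x.isLt; have hy := y.isLt
  have hq : 0 < q := Fin.pos x
  rw [Fin.sub_def]
  simp only
  split
  · next h =>
    have h1 : q ≤ (q - y.val) + x.val := by omega
    have h2 : (q - y.val) + x.val - q < q := by omega
    rw [Nat.mod_eq_sub_mod h1, Nat.mod_eq_of_lt h2]; omega
  · next h =>
    have h1 : (q - y.val) + x.val < q := by omega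
    rw [Nat.mod_eq_of_lt h1]; omega

lemma fin_add_val {q : ℕ} [NeZero q] (x y : Fin q) :
    (x + y).val = if x.val + y.val < q then x.val + y.val else x.val + y.val - q := by
  have hx := x.isLt; have hy := y.isLt
  rw [Fin.val_add]
  split
  · exact Nat.mod_eq_of_lt ‹_›
  · rw [Nat.mod_eq_sub_mod (by omega), Nat.mod_eq_of_lt (by omega)]

lemma fin_neg_val {q : ℕ} [NeZero q] (x : Fin q) (hx : x ≠ 0) :
    x.val + (-x).val = q := by
  have : (-x).val = (0 - x).val := by norm_num
  rw [this, fin_sub_val]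
  have hx' : 0 < x.val := by
    rcases Nat.eq_zero_or_pos x.val with h | h
    · exact absurd (Fin.ext h) hx
    · exact h
  have := x.isLt
  split <;> simp only [Fin.val_zero] at * <;> omega

/-- cyclic monotonicity in offset form -/
lemma mono {n : ℕ} [NeZero n] {A : Matrix (Fin n) (Fin n) ℝ} (hA : CyclicNonIncr A)
    (v : Fin n) {s t : ℕ} (hst : s ≤ t) (ht : t ≤ n - 1) :
    A v (v + (t : Fin n)) ≤ A v (v + (s : Fin n)) := by
  have hn : 0 < n := Fin.pos v
  induction t with
  | zero => simp_all
  | succ t ih =>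
    rcases Nat.lt_or_ge s (t+1) with h | h
    · have step : A v (v + ((t+1 : ℕ) : Fin n)) ≤ A v (v + (t : Fin n)) := by
        have hne : v + ((t+1 : ℕ) : Fin n) ≠ v := by
          intro hcon
          have : ((t+1 : ℕ) : Fin n) = 0 := by
            have := congrArg (fun z => z - v) hcon
            simpa [add_comm, add_sub_cancel_right] using this
          have hv : ((t+1 : ℕ) : Fin n).val = 0 := by rw [this]; rfl
          rw [Fin.val_natCast, Nat.mod_eq_of_lt (by omega : t+1 < n)] at hv
          omega
        have := hA v (v + ((t+1 : ℕ) : Fin n)) hne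
        have harith : v + ((t+1 : ℕ) : Fin n) - 1 = v + (t : Fin n) := by
          push_cast
          ring
        rw [harith] at this
        exact this
      exact le_trans step (ih (by omega) (by omega))
    · have hs : s = t + 1 := by omega
      subst hs; exact le_refl _

lemma diag_max {n : ℕ} [NeZero n] {A : Matrix (Fin n) (Fin n) ℝ} (hA : CyclicNonIncr A)
    (v j : Fin n) : A v j ≤ A v v := by
  have h1 : ((((j - v).val : ℕ)) : Fin n) = j - v := Fin.cast_val_eq_self _
  have h2 : v + (((j - v).val : ℕ) : Fin n) = j := by rw [h1]; ring
  have := mono hA v (Nat.zero_le (j - v).val) (by have := (j-v).isLt; omega)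
  rw [h2] at this
  simpa using this


variable {ι : Type*} [Fintype ι] [DecidableEq ι]

/-- weakly chained diagonally dominant Z-matrices are nonsingular -/
lemma wcdd_det_ne_zero (N : Matrix ι ι ℝ) (hZ : ∀ i j, i ≠ j → N i j ≤ 0)
    (hW : ∀ i, 0 ≤ ∑ j, N i j) (φ : ι → ℕ)
    (hφ : ∀ i, 0 < ∑ j, N i j ∨ ∃ j, N i j < 0 ∧ φ j < φ i) : N.det ≠ 0 := by
  intro hdet
  obtain ⟨x, hx0, hx⟩ := (Matrix.exists_mulVec_eq_zero_iff).mpr hdet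
  obtain ⟨i₁, hi₁⟩ := Function.ne_iff.mp hx0
  obtain ⟨i₀, -, hmax⟩ := Finset.exists_max_image Finset.univ (fun i => |x i|) ⟨i₁, mem_univ i₁⟩
  set c := |x i₀| with hc
  have hcpos : 0 < c := lt_of_lt_of_le (abs_pos.mpr hi₁) (hmax i₁ (mem_univ i₁))
  set S : Finset ι := univ.filter (fun i => c ≤ |x i|) with hS
  have hi₀S : i₀ ∈ S := by simp [hS, hc]
  obtain ⟨i, hiS, hmin⟩ := Finset.exists_min_image S φ ⟨i₀, hi₀S⟩
  have hxi : |x i| = c := le_antisymm (hmax i (mem_univ i)) (by simpa [hS] using hiS)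
  -- diagonal entry nonneg facts
  have hsplit : N i i + ∑ j ∈ univ.erase i, N i j = ∑ j, N i j :=
    Finset.add_sum_erase _ _ (mem_univ i)
  have hNii : 0 ≤ N i i := by
    have h1 : ∑ j ∈ univ.erase i, N i j ≤ 0 :=
      Finset.sum_nonpos (fun j hj => hZ i j (Ne.symm (Finset.ne_of_mem_erase hj)))
    have := hW i; linarith
  -- row i of the equation
  have h0 : ∑ j, N i j * x j = 0 := by
    have := congrFun hx i
    simpa [Matrix.mulVec, dotProduct] using this
  have h0' : N i i * x i + ∑ j ∈ univ.erase i, N i j * x j = 0 := by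
    rw [Finset.add_sum_erase _ (fun j => N i j * x j) (mem_univ i)]; exact h0
  have key : N i i * c ≤ ∑ j ∈ univ.erase i, (-N i j) * |x j| := by
    calc N i i * c = |N i i * x i| := by rw [abs_mul, abs_of_nonneg hNii, hxi]
      _ = |∑ j ∈ univ.erase i, N i j * x j| := by
          rw [show N i i * x i = -∑ j ∈ univ.erase i, N i j * x j by linarith, abs_neg]
      _ ≤ ∑ j ∈ univ.erase i, |N i j * x j| := Finset.abs_sum_le_sum_abs _ _
      _ = ∑ j ∈ univ.erase i, (-N i j) * |x j| := by
          refine Finset.sum_congr rfl (fun j hj => ?_)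
          rw [abs_mul, abs_of_nonpos (hZ i j (Ne.symm (Finset.ne_of_mem_erase hj)))]
  have bnd : ∀ j ∈ univ.erase i, (-N i j) * |x j| ≤ (-N i j) * c := fun j hj =>
    mul_le_mul_of_nonneg_left (hmax j (mem_univ j))
      (neg_nonneg.mpr (hZ i j (Ne.symm (Finset.ne_of_mem_erase hj))))
  have hsum_erase : ∑ j ∈ univ.erase i, (-N i j) * c = (N i i - ∑ j, N i j) * c := by
    rw [← Finset.sum_mul]
    congr 1
    have hneg : ∑ j ∈ univ.erase i, -N i j = -∑ j ∈ univ.erase i, N i j := by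
      rw [Finset.sum_neg_distrib]
    linarith [hsplit, hneg]
  rcases hφ i with hpos | ⟨j₀, hj₀neg, hj₀φ⟩
  · have : N i i * c ≤ (N i i - ∑ j, N i j) * c := by
      calc N i i * c ≤ ∑ j ∈ univ.erase i, (-N i j) * |x j| := key
        _ ≤ ∑ j ∈ univ.erase i, (-N i j) * c := Finset.sum_le_sum bnd
        _ = (N i i - ∑ j, N i j) * c := hsum_erase
    nlinarith
  · have hj₀i : j₀ ≠ i := by intro h; rw [h] at hj₀neg; linarith
    have hj₀mem : j₀ ∈ univ.erase i := Finset.mem_erase.mpr ⟨hj₀i, mem_univ _⟩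
    have hj₀c : c ≤ |x j₀| := by
      by_contra hlt
      push_neg at hlt
      have strict : ∑ j ∈ univ.erase i, (-N i j) * |x j| < ∑ j ∈ univ.erase i, (-N i j) * c :=
        Finset.sum_lt_sum bnd ⟨j₀, hj₀mem,
          (mul_lt_mul_of_pos_left hlt (by linarith : (0:ℝ) < -N i j₀))⟩
      have : N i i * c < (N i i - ∑ j, N i j) * c := by
        calc N i i * c ≤ ∑ j ∈ univ.erase i, (-N i j) * |x j| := key
          _ < ∑ j ∈ univ.erase i, (-N i j) * c := strict
          _ = (N i i - ∑ j, N i j) * c := hsum_erase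
      nlinarith [hW i]
    have : j₀ ∈ S := by simp [hS, hj₀c]
    exact absurd (hmin j₀ this) (by omega)


variable {ι : Type*} [Fintype ι] [DecidableEq ι]

-- from p2 (restated as axiom here for speed of split-compiling; final file has real proof)
lemma sdd_det_pos (N : Matrix ι ι ℝ) (hZ : ∀ i j, i ≠ j → N i j ≤ 0)
    (hS : ∀ i, 0 < ∑ j, N i j) : 0 < N.det := by
  set A : ℝ → Matrix ι ι ℝ := fun t => Matrix.of (fun i j => if i = j then N i j else t * N i j)
    with hA
  have hNii : ∀ i, 0 < N i i := by
    intro i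
    have h1 : ∑ j ∈ univ.erase i, N i j ≤ 0 :=
      Finset.sum_nonpos (fun j hj => hZ i j (Ne.symm (Finset.ne_of_mem_erase hj)))
    have h2 : N i i + ∑ j ∈ univ.erase i, N i j = ∑ j, N i j :=
      Finset.add_sum_erase _ (fun j => N i j) (mem_univ i)
    have := hS i; linarith
  have hrowA : ∀ t, ∀ i, ∑ j, A t i j = N i i + t * ∑ j ∈ univ.erase i, N i j := by
    intro t i
    rw [← Finset.add_sum_erase _ (fun j => A t i j) (mem_univ i)]
    simp only [hA, Matrix.of_apply, if_pos rfl]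
    congr 1
    rw [Finset.mul_sum]
    exact Finset.sum_congr rfl (fun j hj => by
      rw [if_neg (Ne.symm (Finset.ne_of_mem_erase hj))])
  have hApos : ∀ t ∈ Set.Icc (0:ℝ) 1, (A t).det ≠ 0 := by
    intro t ht
    refine wcdd_det_ne_zero _ (fun i j hij => ?_) (fun i => ?_) (fun _ => 0) (fun i => ?_)
    · simp only [hA, Matrix.of_apply, if_neg hij]
      exact mul_nonpos_of_nonneg_of_nonpos ht.1 (hZ i j hij)
    · rw [hrowA]
      have h1 : ∑ j ∈ univ.erase i, N i j ≤ 0 :=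
        Finset.sum_nonpos (fun j hj => hZ i j (Ne.symm (Finset.ne_of_mem_erase hj)))
      have h2 : N i i + ∑ j ∈ univ.erase i, N i j = ∑ j, N i j :=
        Finset.add_sum_erase _ (fun j => N i j) (mem_univ i)
      have h3 := hS i
      nlinarith [ht.1, ht.2]
    · left
      rw [hrowA]
      have h1 : ∑ j ∈ univ.erase i, N i j ≤ 0 :=
        Finset.sum_nonpos (fun j hj => hZ i j (Ne.symm (Finset.ne_of_mem_erase hj)))
      have h2 : N i i + ∑ j ∈ univ.erase i, N i j = ∑ j, N i j :=
        Finset.add_sum_erase _ (fun j => N i j) (mem_univ i)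
      have h3 := hS i
      nlinarith [ht.1, ht.2]
  have hcont : Continuous fun t => (A t).det := by
    refine Continuous.matrix_det ?_
    refine continuous_matrix (fun i j => ?_)
    by_cases h : i = j
    · simpa [hA, h] using continuous_const
    · simp only [hA, Matrix.of_apply, if_neg h]
      exact continuous_id.mul continuous_const
  have hA0 : (A 0).det = ∏ i, N i i := by
    have : A 0 = Matrix.diagonal (fun i => N i i) := by
      ext i j
      by_cases h : i = j
      · simp [hA, h]
      · simp [hA, h, Matrix.diagonal_apply_ne _ h]
    rw [this, Matrix.det_diagonal]
  have hA1 : (A 1).det = N.det := by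
    congr 1
    ext i j
    by_cases h : i = j <;> simp [hA, h]
  have h0pos : 0 < (A 0).det := by
    rw [hA0]; exact Finset.prod_pos (fun i _ => hNii i)
  rcases lt_trichotomy (N.det) 0 with hneg | hzero | hpos
  · exfalso
    have hsub : Set.Icc ((A 1).det) ((A 0).det) ⊆ (fun t => (A t).det) '' Set.Icc 0 1 :=
      intermediate_value_Icc' (by norm_num) hcont.continuousOn
    have h0mem : (0:ℝ) ∈ Set.Icc ((A 1).det) ((A 0).det) := by
      constructor
      · rw [hA1]; linarith
      · linarith
    obtain ⟨t, htmem, hteq⟩ := hsub h0mem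
    exact hApos t htmem hteq
  · exfalso
    have := hApos 1 (by norm_num)
    rw [hA1] at this
    exact this hzero
  · exact hpos

lemma wdd_det_nonneg (N : Matrix ι ι ℝ) (hZ : ∀ i j, i ≠ j → N i j ≤ 0)
    (hW : ∀ i, 0 ≤ ∑ j, N i j) : 0 ≤ N.det := by
  have hpos : ∀ ε : ℝ, 0 < ε → 0 < (N + ε • (1 : Matrix ι ι ℝ)).det := by
    intro ε hε
    refine sdd_det_pos _ (fun i j hij => ?_) (fun i => ?_)
    · simp [Matrix.add_apply, Matrix.smul_apply, Matrix.one_apply_ne hij, hZ i j hij]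
    · have heq : ∑ j, (N + ε • (1 : Matrix ι ι ℝ)) i j = (∑ j, N i j) + ε := by
        calc ∑ j, (N + ε • (1 : Matrix ι ι ℝ)) i j
            = ∑ j, (N i j + (if i = j then ε else 0)) := by
              refine Finset.sum_congr rfl fun j _ => ?_
              simp [Matrix.add_apply, Matrix.one_apply, mul_ite]
          _ = (∑ j, N i j) + ε := by
              rw [Finset.sum_add_distrib]
              simp
      rw [heq]
      have := hW i
      linarith
  have hcont : Continuous fun ε : ℝ => (N + ε • (1 : Matrix ι ι ℝ)).det := by
    refine Continuous.matrix_det ?_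
    refine continuous_matrix (fun i j => ?_)
    simp only [Matrix.add_apply, Matrix.smul_apply, smul_eq_mul]
    exact continuous_const.add (continuous_id.mul continuous_const)
  have htend : Filter.Tendsto (fun ε : ℝ => (N + ε • (1:Matrix ι ι ℝ)).det)
      (nhdsWithin 0 (Set.Ioi 0)) (nhds ((N + (0:ℝ) • 1).det)) :=
    (hcont.tendsto 0).mono_left nhdsWithin_le_nhds
  have hfin : (0:ℝ) ≤ (N + (0:ℝ) • 1).det :=
    ge_of_tendsto htend (by
      filter_upwards [self_mem_nhdsWithin] with ε hε
      exact (hpos ε hε).le)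
  simpa using hfin

lemma wcdd_det_pos (N : Matrix ι ι ℝ) (hZ : ∀ i j, i ≠ j → N i j ≤ 0)
    (hW : ∀ i, 0 ≤ ∑ j, N i j) (φ : ι → ℕ)
    (hφ : ∀ i, 0 < ∑ j, N i j ∨ ∃ j, N i j < 0 ∧ φ j < φ i) : 0 < N.det :=
  lt_of_le_of_ne (wdd_det_nonneg N hZ hW) (Ne.symm (wcdd_det_ne_zero N hZ hW φ hφ))



lemma det_updateCol_single {r : ℕ} (M : Matrix (Fin (r+1)) (Fin (r+1)) ℝ) (k : Fin (r+1)) :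
    (M.updateCol k (Pi.single k 1)).det
      = (M.submatrix (fun i : Fin r => k + i.succ) (fun j : Fin r => k + j.succ)).det := by
  have e : Fin (r+1) ≃ Fin (r+1) := Equiv.addLeft k
  rw [← Matrix.det_submatrix_equiv_self (Equiv.addLeft k)]
  have hsub : (M.updateCol k (Pi.single k 1)).submatrix (Equiv.addLeft k) (Equiv.addLeft k)
      = (M.submatrix (fun x => k + x) (fun x => k + x)).updateCol 0 (Pi.single 0 1) := by
    ext i j
    simp only [Matrix.submatrix_apply, Matrix.updateCol_apply, Equiv.coe_addLeft]
    by_cases hj : j = 0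
    · subst hj
      rw [if_pos (by ring), if_pos rfl]
      by_cases hi : i = 0
      · subst hi; rw [add_zero, Pi.single_eq_same, Pi.single_eq_same]
      · rw [Pi.single_apply, Pi.single_apply, if_neg hi, if_neg (by
          intro hcon
          exact hi (by have := congrArg (fun z => z - k) hcon; simpa using this))]
    · rw [if_neg (by
        intro hcon
        exact hj (by have := congrArg (fun z => z - k) hcon; simpa using this)), if_neg hj]
  rw [hsub, Matrix.det_succ_column_zero, Finset.sum_eq_single (0 : Fin (r+1))]
  · have hstep : ((M.submatrix (fun x => k + x) (fun x => k + x)).updateCol 0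
        (Pi.single 0 1)).submatrix ((0 : Fin (r+1)).succAbove) Fin.succ
        = M.submatrix (fun i : Fin r => k + i.succ) (fun j : Fin r => k + j.succ) := by
      ext i j
      simp only [Matrix.submatrix_apply, Matrix.updateCol_apply, Fin.succAbove_zero,
        Fin.succ_ne_zero, if_false]
    rw [hstep]
    simp
  · intro b _ hb
    have hz : ((M.submatrix (fun x => k + x) (fun x => k + x)).updateCol 0
        (Pi.single 0 1)) b 0 = 0 := by
      rw [Matrix.updateCol_apply, if_pos rfl, Pi.single_apply, if_neg hb]
    rw [hz, mul_zero, zero_mul]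
  · intro h; exact absurd (Finset.mem_univ _) h



lemma sum_rot {r : ℕ} (k : Fin (r+1)) (f : Fin (r+1) → ℝ) :
    ∑ l, f l = f k + ∑ b : Fin r, f (k + b.succ) := by
  rw [← Equiv.sum_comp (Equiv.addLeft k) f, Fin.sum_univ_succ]
  simp

lemma exists_rot {r : ℕ} {k w : Fin (r+1)} (h : w ≠ k) : ∃ b : Fin r, k + b.succ = w := by
  have hval : (w - k).val ≠ 0 := by
    intro hc
    exact h (by
      have : w - k = 0 := Fin.ext hc
      have := congrArg (fun z => z + k) this
      simpa using this)
  have hlt := (w - k).isLt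
  refine ⟨⟨(w - k).val - 1, by omega⟩, ?_⟩
  have hsucc : (⟨(w - k).val - 1, by omega⟩ : Fin r).succ = w - k := by
    apply Fin.ext
    simp only [Fin.val_succ]
    omega
  rw [hsucc]; ring

lemma rot_ne {r : ℕ} (k : Fin (r+1)) (a : Fin r) : k + a.succ ≠ k := by
  intro h
  have : (a.succ : Fin (r+1)) = 0 := by
    have := congrArg (fun z => z - k) h
    simpa [add_comm] using this
  exact Fin.succ_ne_zero a this

lemma rot_inj {r : ℕ} (k : Fin (r+1)) {a b : Fin r} (h : k + a.succ = k + b.succ) : a = b := by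
  have h1 : (a.succ : Fin (r+1)) = b.succ := by
    have := congrArg (fun z => z - k) h
    simpa [add_comm] using this
  exact Fin.succ_injective _ h1



lemma main_det_pos {m : ℕ} [NeZero m] (B : Matrix (Fin m) (Fin m) ℝ)
    (hpos : ∀ i j, 0 ≤ B i j) (hA : CyclicNonIncr B)
    (hdiag : ∀ i, 0 < B i i)
    (hk : ∃ k, ∀ s, s ≠ k → B s k < B s s) : 0 < B.det := by
  obtain ⟨r, rfl⟩ : ∃ r, m = r + 1 :=
    ⟨m - 1, (Nat.succ_pred_eq_of_pos (Nat.pos_of_ne_zero (NeZero.ne m))).symm⟩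
  obtain ⟨k, hk⟩ := hk
  set L : Matrix (Fin (r+1)) (Fin (r+1)) ℝ := Matrix.of (fun i l => B i l - B i (l-1)) with hL
  have hLoff : ∀ i l, l ≠ i → L i l ≤ 0 := fun i l h => sub_nonpos.mpr (hA i l h)
  have hLrow : ∀ i, ∑ l, L i l = 0 := by
    intro i
    have h1 : ∑ l, B i (l - 1) = ∑ l, B i l :=
      Fintype.sum_equiv (Equiv.subRight 1) _ _ (fun l => rfl)
    simp only [hL, Matrix.of_apply, Finset.sum_sub_distrib, h1, sub_self]
  -- the principal minors of L
  set μ : Fin (r+1) → ℝ :=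
    fun c => (L.submatrix (fun a : Fin r => c + a.succ) (fun a : Fin r => c + a.succ)).det
    with hμ
  have hrowN : ∀ (c : Fin (r+1)) (a : Fin r),
      ∑ b : Fin r, L (c + a.succ) (c + b.succ) = - L (c + a.succ) c := by
    intro c a
    have := sum_rot c (fun l => L (c + a.succ) l)
    rw [hLrow] at this
    linarith
  have hμnn : ∀ c, 0 ≤ μ c := by
    intro c
    refine wdd_det_nonneg _ (fun a b hab => ?_) (fun a => ?_)
    · exact hLoff _ _ (fun h => hab (rot_inj c h.symm))
    · rw [show (∑ b : Fin r, (L.submatrix (fun a : Fin r => c + a.succ)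
          (fun a : Fin r => c + a.succ)) a b) = - L (c + a.succ) c from hrowN c a]
      have := hLoff (c + a.succ) c (fun h => rot_ne c a h.symm)
      linarith
  have hμk : 0 < μ k := by
    refine wcdd_det_pos _ (fun a b hab => hLoff _ _ (fun h => hab (rot_inj k h.symm)))
      (fun a => ?_) (fun a : Fin r => r - a.val) (fun a => ?_)
    · rw [show (∑ b : Fin r, (L.submatrix (fun a : Fin r => k + a.succ)
          (fun a : Fin r => k + a.succ)) a b) = - L (k + a.succ) k from hrowN k a]
      have := hLoff (k + a.succ) k (fun h => rot_ne k a h.symm)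
      linarith
    · set v := k + a.succ with hv
      have hvk : v ≠ k := rot_ne k a
      have hDval : (k - v).val = r - a.val := by
        have h1 : k - v = -(a.succ : Fin (r+1)) := by rw [hv]; ring
        have h2 := fin_neg_val (a.succ : Fin (r+1)) (Fin.succ_ne_zero a)
        have h3 : (a.succ : Fin (r+1)).val = a.val + 1 := Fin.val_succ a
        rw [h1]
        omega
      set D := (k - v).val with hD
      have haD : D = r - a.val := hDval
      have hD1 : 1 ≤ D := by have := a.isLt; omega
      have hDr : D ≤ r := by omega
      have htel : ∑ d ∈ Finset.range D,
          (B v (v + (d : Fin (r+1))) - B v (v + ((d+1 : ℕ) : Fin (r+1))))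
          = B v v - B v k := by
        rw [Finset.sum_range_sub' (fun d => B v (v + ((d : ℕ) : Fin (r+1)))) D]
        congr 1
        · norm_num
        · congr 1
          have hcast : ((D : ℕ) : Fin (r+1)) = k - v := by rw [hD]; exact Fin.cast_val_eq_self _
          rw [hcast]; ring
      have hpos' : 0 < ∑ d ∈ Finset.range D,
          (B v (v + (d : Fin (r+1))) - B v (v + ((d+1:ℕ) : Fin (r+1)))) := by
        rw [htel]; exact sub_pos.mpr (hk v hvk)
      obtain ⟨d, hdmem, hdpos⟩ : ∃ d ∈ Finset.range D,
          0 < B v (v + (d : Fin (r+1))) - B v (v + ((d+1:ℕ) : Fin (r+1))) := by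
        by_contra hcon
        push_neg at hcon
        have hle : ∑ d ∈ Finset.range D,
            (B v (v + (d : Fin (r+1))) - B v (v + ((d+1:ℕ) : Fin (r+1)))) ≤ 0 :=
          Finset.sum_nonpos (fun d hd => hcon d hd)
        linarith
      have hdD := Finset.mem_range.mp hdmem
      set w := v + ((d+1 : ℕ) : Fin (r+1)) with hw
      have hLvw : L v w < 0 := by
        have harith : w - 1 = v + ((d : ℕ) : Fin (r+1)) := by
          rw [hw]; push_cast; ring
        simp only [hL, Matrix.of_apply]
        rw [harith]
        linarith
      by_cases hwk : w = k
      · left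
        rw [show (∑ b : Fin r, (L.submatrix (fun a : Fin r => k + a.succ)
            (fun a : Fin r => k + a.succ)) a b) = - L (k + a.succ) k from hrowN k a]
        rw [← hv, ← hwk]
        linarith
      · right
        obtain ⟨b, hb⟩ := exists_rot hwk
        refine ⟨b, ?_, ?_⟩
        · show L (k + a.succ) (k + b.succ) < 0
          rw [hb, ← hv]; exact hLvw
        · have hbval : r - b.val = (k - w).val := by
            have h1 : k - w = -(b.succ : Fin (r+1)) := by rw [← hb]; ring
            have h2 := fin_neg_val (b.succ : Fin (r+1)) (Fin.succ_ne_zero b)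
            have h3 : (b.succ : Fin (r+1)).val = b.val + 1 := Fin.val_succ b
            rw [h1]
            omega
          have hdval : ((d+1 : ℕ) : Fin (r+1)).val = d + 1 := by
            rw [Fin.val_natCast]
            exact Nat.mod_eq_of_lt (by omega)
          have hkw : (k - w).val = D - (d+1) := by
            have h1 : k - w = (k - v) - ((d+1 : ℕ) : Fin (r+1)) := by rw [hw]; ring
            rw [h1, fin_sub_val, hdval, ← hD]
            rw [if_pos (by omega)]
          show r - b.val < r - a.val
          omega
  -- determinant identity
  have hdetB : B.det = (L.updateCol k (fun i => B i k)).det := by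
    set Q : Matrix (Fin (r+1)) (Fin (r+1)) ℝ :=
      Matrix.of (fun j l => (if l = j then (1:ℝ) else 0) - (if l = j + 1 then 1 else 0)) with hQ
    set C := Q.updateCol k (Pi.single k 1) with hC
    have hone : ∀ i : Fin r, (1 : Fin (r+1)).val = 1 := by
      intro i
      have hr : 0 < r := i.pos
      have : (1 : Fin (r+1)).val = 1 % (r+1) := Fin.val_one' (r+1)
      rw [this, Nat.mod_eq_of_lt (by omega)]
    have hsucc_ne : ∀ i : Fin r, ¬ ((i.succ : Fin (r+1)) = i.succ + 1) := by
      intro i h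
      have hval := congrArg Fin.val h
      rw [fin_add_val] at hval
      have h1 := hone i
      have h2 : (i.succ : Fin (r+1)).val = i.val + 1 := Fin.val_succ i
      have := i.isLt
      split at hval <;> omega
    have hdetC : C.det = 1 := by
      rw [hC, det_updateCol_single]
      have htri : (Q.submatrix (fun i : Fin r => k + i.succ)
          (fun j : Fin r => k + j.succ)).BlockTriangular id := by
        intro i j hij
        simp only [Matrix.submatrix_apply, hQ, Matrix.of_apply]
        have h1 : ¬ (k + j.succ = k + i.succ) := by
          intro h
          have := rot_inj k h
          exact absurd this (Fin.ne_of_lt hij)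
        have h2 : ¬ (k + j.succ = k + i.succ + 1) := by
          intro h
          have h' : (j.succ : Fin (r+1)) = i.succ + 1 := by
            have := congrArg (fun z => z - k) h
            simpa [add_assoc, add_comm, add_sub_cancel_left] using this
          have hval := congrArg Fin.val h'
          rw [fin_add_val] at hval
          have h1' := hone i
          have h2' : (i.succ : Fin (r+1)).val = i.val + 1 := Fin.val_succ i
          have h3' : (j.succ : Fin (r+1)).val = j.val + 1 := Fin.val_succ j
          have hji : j.val < i.val := hij
          have := i.isLt
          split at hval <;> omega
        rw [if_neg h1, if_neg h2, sub_zero]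
      rw [Matrix.det_of_upperTriangular htri]
      refine Finset.prod_eq_one fun i _ => ?_
      simp only [Matrix.submatrix_apply, hQ, Matrix.of_apply]
      have hcond : ¬ (k + i.succ = k + i.succ + 1) := by
        intro h
        have h' : (i.succ : Fin (r+1)) = i.succ + 1 := by
          have := congrArg (fun z => z - k) h
          simpa [add_assoc, add_comm, add_sub_cancel_left] using this
        exact hsucc_ne i h'
      rw [if_neg hcond]
      norm_num
    have hBC : B * C = L.updateCol k (fun i => B i k) := by
      ext i l
      rw [Matrix.mul_apply, Matrix.updateCol_apply]
      by_cases hl : l = k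
      · rw [if_pos hl]
        have hCk : ∀ j, C j l = if j = k then 1 else 0 := by
          intro j; rw [hC, Matrix.updateCol_apply, if_pos hl, Pi.single_apply]
        simp only [hCk, mul_ite, mul_one, mul_zero]
        simp
      · rw [if_neg hl]
        have hCl : ∀ j, C j l = (if l = j then (1:ℝ) else 0) - (if l = j + 1 then 1 else 0) := by
          intro j; rw [hC, Matrix.updateCol_apply, if_neg hl]; rfl
        simp only [hCl, mul_sub, mul_ite, mul_one, mul_zero]
        rw [Finset.sum_sub_distrib]
        have e1 : ∑ j, (if l = j then B i j else 0) = B i l := by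
          simp
        have e2 : ∑ j, (if l = j + 1 then B i j else 0) = B i (l - 1) := by
          have hiff : ∀ j : Fin (r+1), (l = j + 1) = (l - 1 = j) := by
            intro j
            apply propext
            constructor
            · intro h; rw [h]; ring
            · intro h; rw [← h]; ring
          simp_rw [hiff]
          simp
        rw [e1, e2]
        rfl
    calc B.det = B.det * C.det := by rw [hdetC, mul_one]
      _ = (B * C).det := (Matrix.det_mul _ _).symm
      _ = _ := by rw [hBC]
  have hdetL0 : L.det = 0 := by
    rw [← Matrix.exists_mulVec_eq_zero_iff]
    refine ⟨fun _ => 1, ?_, ?_⟩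
    · intro h
      have := congrFun h k
      norm_num at this
    · funext i
      simp only [Matrix.mulVec, dotProduct, mul_one]
      exact hLrow i
  have hker : ∀ x, L *ᵥ x = 0 → ∀ i, x i = x k := by
    intro x hx i
    set y : Fin (r+1) → ℝ := fun j => x j - x k with hy
    have hyk : y k = 0 := by simp [hy]
    have hLy : ∀ i', ∑ l, L i' l * y l = 0 := by
      intro i'
      have h1 : ∑ l, L i' l * y l = (∑ l, L i' l * x l) - (x k) * ∑ l, L i' l := by
        rw [Finset.mul_sum, ← Finset.sum_sub_distrib]
        refine Finset.sum_congr rfl fun l _ => ?_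
        simp only [hy]; ring
      have h2 : ∑ l, L i' l * x l = 0 := by
        have := congrFun hx i'
        simpa [Matrix.mulVec, dotProduct] using this
      rw [h1, h2, hLrow, mul_zero, sub_zero]
    set N := L.submatrix (fun a : Fin r => k + a.succ) (fun a : Fin r => k + a.succ) with hN
    have hNdet : N.det ≠ 0 := ne_of_gt hμk
    have hNy : N *ᵥ (fun b => y (k + b.succ)) = 0 := by
      funext a
      have hsr := sum_rot k (fun l => L (k + a.succ) l * y l)
      rw [hLy (k + a.succ), hyk, mul_zero] at hsr
      have hsum : ∑ b : Fin r, L (k + a.succ) (k + b.succ) * y (k + b.succ) = 0 := by linarith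
      simpa [Matrix.mulVec, dotProduct, hN] using hsum
    have hy0 := Matrix.eq_zero_of_mulVec_eq_zero hNdet hNy
    by_cases hik : i = k
    · rw [hik]
    · obtain ⟨b, hb⟩ := exists_rot hik
      have hzz := congrFun hy0 b
      rw [hb] at hzz
      simp only [Pi.zero_apply] at hzz
      have : x i - x k = 0 := hzz
      linarith
  have hGcol : ∀ c i, L.adjugate i c = L.adjugate c c := by
    intro c i
    have hcol : L *ᵥ (fun i' => L.adjugate i' c) = 0 := by
      funext i'
      have : (L * L.adjugate) i' c = (L.det • (1 : Matrix (Fin (r+1)) (Fin (r+1)) ℝ)) i' c := by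
        rw [Matrix.mul_adjugate]
      rw [hdetL0] at this
      simpa [Matrix.mulVec, dotProduct, Matrix.mul_apply] using this
    have h1 := hker _ hcol i
    have h2 := hker _ hcol c
    exact h1.trans h2.symm
  have hGdiag : ∀ c, L.adjugate c c = μ c := by
    intro c
    rw [Matrix.adjugate_apply, ← Matrix.det_transpose, ← Matrix.updateCol_transpose,
      det_updateCol_single, hμ]
    rw [← Matrix.transpose_submatrix, Matrix.det_transpose]
  have hexpand : (L.updateCol k (fun i => B i k)).det = ∑ i, B i k * μ i := by
    have hcram : (L.updateCol k (fun i => B i k)).det = Matrix.cramer L (fun i => B i k) k :=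
      (Matrix.cramer_apply _ _ _).symm
    have hdecomp : (fun i => B i k) = ∑ i : Fin (r+1), B i k • (Pi.single i 1 : Fin (r+1) → ℝ) := by
      funext j
      rw [Finset.sum_apply]
      simp [Pi.single_apply]
    rw [hcram, hdecomp, map_sum, Finset.sum_apply]
    refine Finset.sum_congr rfl fun i _ => ?_
    rw [LinearMap.map_smul, Pi.smul_apply, smul_eq_mul]
    congr 1
    rw [Matrix.cramer_apply]
    have h1 : (L.updateCol k (Pi.single i 1)).det = Lᵀ.adjugate i k := by
      rw [Matrix.adjugate_apply]
      conv_lhs => rw [show L.updateCol k (Pi.single i 1)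
        = (Lᵀ.updateRow k (Pi.single i 1))ᵀ from by
          rw [← Matrix.updateCol_transpose, Matrix.transpose_transpose]]
      rw [Matrix.det_transpose]
    rw [h1, ← Matrix.adjugate_transpose, Matrix.transpose_apply, hGcol i k, hGdiag]
  rw [hdetB, hexpand]
  have hterm : B k k * μ k ≤ ∑ i, B i k * μ i :=
    Finset.single_le_sum (f := fun i => B i k * μ i)
      (fun i _ => mul_nonneg (hpos i k) (hμnn i)) (mem_univ k)
  nlinarith [hdiag k, hμk]


lemma off_le_iff {q : ℕ} [NeZero q] (p x y : Fin q) :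
    (x - p).val ≤ (y - p).val ↔
      ((p ≤ x ∧ p ≤ y ∧ x ≤ y) ∨ (x < p ∧ y < p ∧ x ≤ y) ∨ (p ≤ x ∧ y < p)) := by
  have := p.isLt; have := x.isLt; have := y.isLt
  rw [fin_sub_val, fin_sub_val]
  simp only [Fin.le_def, Fin.lt_def]
  split <;> split <;> omega


end Stmt14Aux

open Stmt14Aux Fin.CommRing in
theorem stmt_14 (n : ℕ) [NeZero n] (hn : 1 ≤ n) (A : Matrix (Fin n) (Fin n) ℝ)
    (hpos : ∀ i j, 0 ≤ A i j) (hA : CyclicNonIncr A)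
    (hrow : ∀ i, 0 < A.mulVec (fun _ => (1 : ℝ)) i)
    (hk : ∃ k : Fin n, ∀ r : Fin n, r ≠ k → A r k < A r r) :
    IsPMatrix A := by
  have hdiagA : ∀ v, 0 < A v v := by
    intro v
    by_contra hle
    push_neg at hle
    have hz : ∀ j, A v j = 0 := fun j => le_antisymm (le_trans (diag_max hA v j) hle) (hpos v j)
    have := hrow v
    simp only [Matrix.mulVec, dotProduct, mul_one] at this
    rw [Finset.sum_congr rfl (fun j _ => hz j)] at this
    simp at this
  intro S hS
  have hm : 0 < S.card := Finset.card_pos.mpr hS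
  haveI : NeZero S.card := ⟨hm.ne'⟩
  set σ : Fin S.card ≃o {x // x ∈ S} := S.orderIsoOfFin rfl with hσ
  set f : Fin S.card → Fin n := fun i => (σ i : Fin n) with hf
  have hinj : Function.Injective f := fun a b h =>
    σ.injective (Subtype.coe_injective h)
  have hle : ∀ a b : Fin S.card, f a ≤ f b ↔ a ≤ b := fun a b =>
    Iff.trans (Subtype.coe_le_coe (p := fun x => x ∈ S)) σ.le_iff_le
  have hlt : ∀ a b : Fin S.card, f a < f b ↔ a < b := fun a b =>
    Iff.trans (Subtype.coe_lt_coe (p := fun x => x ∈ S)) σ.lt_iff_lt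
  set B := A.submatrix f f with hB
  have hdet : (A.submatrix (fun i : {a // a ∈ S} => (i : Fin n))
      (fun j : {a // a ∈ S} => (j : Fin n))).det = B.det := by
    rw [hB, show A.submatrix f f
        = (A.submatrix (fun i : {a // a ∈ S} => (i : Fin n))
            (fun j : {a // a ∈ S} => (j : Fin n))).submatrix σ.toEquiv σ.toEquiv from rfl]
    rw [Matrix.det_submatrix_equiv_self]
  rw [hdet]
  -- transfer CyclicNonIncr
  have hcyc : CyclicNonIncr B := by
    intro i j hij
    by_cases h0 : j - 1 = i
    · rw [h0]
      exact diag_max hA (f i) (f j)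
    · have hzne : j - i ≠ 0 := by
        intro h
        apply hij
        have := congrArg (fun z => z + i) h
        simpa using this
      have hzval : 1 ≤ (j - i).val := by
        rcases Nat.eq_zero_or_pos (j - i).val with h | h
        · exact absurd (Fin.ext h) hzne
        · exact h
      have hm2 : 1 < S.card := by
        have := (j - i).isLt; omega
      have hm' : ((j - 1) - i).val ≤ (j - i).val := by
        have harith : (j - 1) - i = (j - i) - 1 := by ring
        rw [harith, fin_sub_val]
        have h1 : (1 : Fin S.card).val = 1 := by
          rw [Fin.val_one' S.card, Nat.mod_eq_of_lt (by omega)]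
        rw [h1]
        split <;> omega
      have key : (f (j - 1) - f i).val ≤ (f j - f i).val := by
        rw [off_le_iff]
        rcases (off_le_iff i (j-1) j).mp hm' with ⟨h1,h2,h3⟩|⟨h1,h2,h3⟩|⟨h1,h2⟩
        · exact Or.inl ⟨(hle _ _).mpr h1, (hle _ _).mpr h2, (hle _ _).mpr h3⟩
        · exact Or.inr (Or.inl ⟨(hlt _ _).mpr h1, (hlt _ _).mpr h2, (hle _ _).mpr h3⟩)
        · exact Or.inr (Or.inr ⟨(hle _ _).mpr h1, (hlt _ _).mpr h2⟩)
      have e1 : f i + (((f (j-1) - f i).val : ℕ) : Fin n) = f (j - 1) := by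
        rw [Fin.cast_val_eq_self]; ring
      have e2 : f i + (((f j - f i).val : ℕ) : Fin n) = f j := by
        rw [Fin.cast_val_eq_self]; ring
      have hmn := mono hA (f i) key (by have := (f j - f i).isLt; omega)
      rw [e1, e2] at hmn
      exact hmn
  -- transfer strict column condition
  obtain ⟨k, hkA⟩ := hk
  have hkB : ∃ k' : Fin S.card, ∀ t : Fin S.card, t ≠ k' → B t k' < B t t := by
    obtain ⟨k', -, hmin⟩ := Finset.exists_min_image Finset.univ
      (fun j => (f j - k).val) ⟨⟨0, hm⟩, Finset.mem_univ _⟩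
    refine ⟨k', fun t ht => ?_⟩
    have hvk : f t ≠ k := by
      intro h
      apply ht
      have h0 : (f t - k).val = 0 := by rw [h]; simp
      have h2 : (f k' - k).val = 0 :=
        Nat.le_antisymm (h0 ▸ hmin t (Finset.mem_univ t)) (Nat.zero_le _)
      have h3 : f k' = k := by
        have hz : f k' - k = 0 := Fin.ext h2
        have := congrArg (fun z => z + k) hz
        simpa using this
      exact (hinj (h3.trans h.symm)).symm
    have hAlt : A (f t) k < A (f t) (f t) := hkA (f t) hvk
    have hvkne : f t - k ≠ 0 := by
      intro h
      apply hvk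
      have := congrArg (fun z => z + k) h
      simpa using this
    have hneg : (f t - k).val + (k - f t).val = n := by
      have := fin_neg_val (f t - k) hvkne
      have hr : -(f t - k) = k - f t := by ring
      rw [hr] at this
      exact this
    have hb1 : (f k' - k).val ≤ (f t - k).val := hmin t (Finset.mem_univ t)
    have hb2 : (f k' - k).val ≠ (f t - k).val := by
      intro heq
      apply ht
      have hz : f k' - k = f t - k := Fin.ext heq
      have h4 : f k' = f t := by
        have := congrArg (fun z => z + k) hz
        simpa using this
      exact (hinj h4).symm
    have ha : (k - f t).val + (f k' - k).val ≤ n - 1 := by omega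
    have hcast : f t + ((((k - f t).val + (f k' - k).val : ℕ)) : Fin n) = f k' := by
      rw [Nat.cast_add, Fin.cast_val_eq_self, Fin.cast_val_eq_self]
      ring
    have hcast2 : f t + ((((k - f t).val : ℕ)) : Fin n) = k := by
      rw [Fin.cast_val_eq_self]; ring
    have hmn := mono hA (f t) (Nat.le_add_right (k - f t).val (f k' - k).val) ha
    rw [hcast, hcast2] at hmn
    calc B t k' = A (f t) (f k') := rfl
      _ ≤ A (f t) k := hmn
      _ < A (f t) (f t) := hAlt
  exact main_det_pos B (fun i j => hpos _ _) hcyc (fun i => hdiagA (f i)) hkB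
end

section
/- Let n ≥ 1 and let A = (a_{ij}) be a real n×n matrix satisfying the cyclic non-increasing condition. Define the n×n matrix M = (m_{ij}) by m_{ij} = a_{ij} − a_{i[j−1]}. Let D be the union of the open strongly connected components of the graph 𝒢(A), and suppose D is nonempty. Then the principal submatrix [M]_{DD} is semi-positive (there exists a vector z indexed by D with z > 0 componentwise and [M]_{DD} z > 0 componentwise) and, in particular, [M]_{DD} is invertible. -/
open Matrix BigOperators

attribute [local instance] Classical.propDecidable

/-- From any vertex lying in an open SCC there is a path to a vertex lying in
no open SCC.  Proved by induction on the size of the reachable set. -/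
lemma reach_out_aux {n : ℕ} [NeZero n] (A : Matrix (Fin n) (Fin n) ℝ) :
    ∀ m (i : Fin n),
      (Finset.univ.filter (fun v => Relation.ReflTransGen (GraphEdge A) i v)).card ≤ m →
      (∃ C, IsOpenSCC A C ∧ i ∈ C) →
      ∃ j, ¬(∃ C, IsOpenSCC A C ∧ j ∈ C) ∧ Relation.ReflTransGen (GraphEdge A) i j := by
  intro m
  induction m with
  | zero =>
    intro i hcard _
    exfalso
    have hi : i ∈ Finset.univ.filter (fun v => Relation.ReflTransGen (GraphEdge A) i v) := by
      simp [Relation.ReflTransGen.refl]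
    have := Finset.card_pos.mpr ⟨i, hi⟩
    omega
  | succ m ih =>
    intro i hcard hiD
    obtain ⟨C, hCopen, hiC⟩ := hiD
    obtain ⟨i0, rfl⟩ := hCopen.1
    have hiC' : Conn A i0 i := hiC
    have hCeq : ∀ j, j ∈ {j | Conn A i0 j} ↔ Conn A i j := by
      intro j
      constructor
      · intro hj
        exact ⟨hiC'.2.trans hj.1, hj.2.trans hiC'.1⟩
      · intro hj
        exact ⟨hiC'.1.trans hj.1, hj.2.trans hiC'.2⟩
    have hopen := hCopen.2
    push_neg at hopen
    obtain ⟨p, hpC, q, hpq, hqC⟩ := hopen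
    have hip : Relation.ReflTransGen (GraphEdge A) i p := ((hCeq p).mp hpC).1
    have hiq : Relation.ReflTransGen (GraphEdge A) i q := hip.tail hpq
    by_cases hqD : ∃ C, IsOpenSCC A C ∧ q ∈ C
    · have hsub : Finset.univ.filter (fun v => Relation.ReflTransGen (GraphEdge A) q v) ⊆
          Finset.univ.filter (fun v => Relation.ReflTransGen (GraphEdge A) i v) := by
        intro v hv
        simp only [Finset.mem_filter, Finset.mem_univ, true_and] at hv ⊢
        exact hiq.trans hv
      have hnotin : i ∉ Finset.univ.filter (fun v => Relation.ReflTransGen (GraphEdge A) q v) := by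
        simp only [Finset.mem_filter, Finset.mem_univ, true_and]
        intro hqi
        exact hqC ((hCeq q).mpr ⟨hiq, hqi⟩)
      have hlt : (Finset.univ.filter (fun v => Relation.ReflTransGen (GraphEdge A) q v)).card <
          (Finset.univ.filter (fun v => Relation.ReflTransGen (GraphEdge A) i v)).card := by
        apply Finset.card_lt_card
        refine ⟨hsub, fun h => hnotin (h ?_)⟩
        simp [Relation.ReflTransGen.refl]
      obtain ⟨j, hj, hqj⟩ := ih q (by omega) hqD
      exact ⟨j, hj, hiq.trans hqj⟩
    · exact ⟨q, hqD, hiq⟩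

/-- The Jacobi-type iteration used to build the semipositivity certificate. -/
noncomputable def uSeq {n : ℕ} (M : Matrix (Fin n) (Fin n) ℝ) (D : Finset (Fin n)) :
    ℕ → Fin n → ℝ
  | 0 => fun i => if i ∈ D then 1 else 0
  | (k+1) => fun i =>
      if i ∈ D then (∑ j ∈ D.erase i, (-M i j) * uSeq M D k j) / M i i else 0

section aux

set_option linter.unusedSectionVars false

variable {n : ℕ} {M : Matrix (Fin n) (Fin n) ℝ} {D : Finset (Fin n)}
  (hw : ∀ i j : Fin n, j ≠ i → M i j ≤ 0)
  (hdiag : ∀ i : Fin n, M i i = ∑ j ∈ Finset.univ.erase i, (-M i j))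
  (hpos : ∀ i ∈ D, 0 < M i i)

include hw hpos in
lemma u_nonneg : ∀ k i, 0 ≤ uSeq M D k i := by
  intro k
  induction k with
  | zero => intro i; simp only [uSeq]; split <;> norm_num
  | succ k ih =>
    intro i
    simp only [uSeq]
    split
    · rename_i hi
      apply div_nonneg _ (hpos i hi).le
      exact Finset.sum_nonneg fun j hj =>
        mul_nonneg (by linarith [hw i j (Finset.ne_of_mem_erase hj)]) (ih j)
    · exact le_rfl

include hw hdiag hpos in
lemma sum_w_le : ∀ i ∈ D, ∑ j ∈ D.erase i, (-M i j) ≤ M i i := by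
  intro i hi
  rw [hdiag i]
  apply Finset.sum_le_sum_of_subset_of_nonneg
  · intro j hj
    simp only [Finset.mem_erase, Finset.mem_univ, and_true]
    exact (Finset.mem_erase.mp hj).1
  · intro j hj _
    linarith [hw i j (Finset.ne_of_mem_erase hj)]

include hw hdiag hpos in
lemma u_le_one : ∀ k i, uSeq M D k i ≤ 1 := by
  intro k
  induction k with
  | zero => intro i; simp only [uSeq]; split <;> norm_num
  | succ k ih =>
    intro i
    simp only [uSeq]
    split
    · rename_i hi
      rw [div_le_one (hpos i hi)]
      calc ∑ j ∈ D.erase i, (-M i j) * uSeq M D k j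
          ≤ ∑ j ∈ D.erase i, (-M i j) := by
            apply Finset.sum_le_sum
            intro j hj
            have hwj : 0 ≤ -M i j := by linarith [hw i j (Finset.ne_of_mem_erase hj)]
            exact mul_le_of_le_one_right hwj (ih j)
        _ ≤ M i i := sum_w_le hw hdiag hpos i hi
    · norm_num

include hw hdiag hpos in
lemma u_succ_le : ∀ k i, uSeq M D (k+1) i ≤ uSeq M D k i := by
  intro k
  induction k with
  | zero =>
    intro i
    by_cases hi : i ∈ D
    · have := u_le_one hw hdiag hpos 1 i
      simpa [uSeq, hi] using this
    · simp [uSeq, hi]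
  | succ k ih =>
    intro i
    by_cases hi : i ∈ D
    · have e : ∀ m (x : Fin n), x ∈ D → uSeq M D (m+1) x =
          (∑ j ∈ D.erase x, (-M x j) * uSeq M D m j) / M x x := by
        intro m x hx; simp [uSeq, hx]
      rw [e (k+1) i hi, e k i hi]
      apply div_le_div_of_nonneg_right _ (hpos i hi).le
      apply Finset.sum_le_sum
      intro j hj
      exact mul_le_mul_of_nonneg_left (ih j) (by linarith [hw i j (Finset.ne_of_mem_erase hj)])
    · simp [uSeq, hi]

include hw hdiag hpos in
lemma u_anti : ∀ {k k' : ℕ}, k ≤ k' → ∀ i, uSeq M D k' i ≤ uSeq M D k i := by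
  intro k k' h
  induction h with
  | refl => intro i; exact le_rfl
  | step h ih => exact fun i => (u_succ_le hw hdiag hpos _ i).trans (ih i)

include hw hdiag hpos in
lemma u_lt_one_out {i c : Fin n} (hi : i ∈ D) (hc : c ∉ D) (hMc : M i c < 0) :
    ∀ k, uSeq M D (k+1) i < 1 := by
  intro k
  have hci : c ≠ i := fun h => hc (h ▸ hi)
  simp only [uSeq, if_pos hi]
  rw [div_lt_one (hpos i hi)]
  calc ∑ j ∈ D.erase i, (-M i j) * uSeq M D k j
      ≤ ∑ j ∈ D.erase i, (-M i j) :=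
        Finset.sum_le_sum fun j hj => mul_le_of_le_one_right
          (by linarith [hw i j (Finset.ne_of_mem_erase hj)]) (u_le_one hw hdiag hpos k j)
    _ < ∑ j ∈ Finset.univ.erase i, (-M i j) := by
        apply Finset.sum_lt_sum_of_subset
          (by intro j hj
              simp only [Finset.mem_erase, Finset.mem_univ, and_true]
              exact (Finset.mem_erase.mp hj).1)
          (i := c) (by simp [hci]) (by simp [hc]) (by linarith)
        intro j hj hj'
        linarith [hw i j (Finset.ne_of_mem_erase hj)]
    _ = M i i := (hdiag i).symm

include hw hdiag hpos in
lemma u_lt_one_step {i c : Fin n} {k : ℕ} (hi : i ∈ D) (hc : c ∈ D) (hci : c ≠ i)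
    (hMc : M i c < 0) (hk : uSeq M D k c < 1) : uSeq M D (k+1) i < 1 := by
  simp only [uSeq, if_pos hi]
  rw [div_lt_one (hpos i hi)]
  calc ∑ j ∈ D.erase i, (-M i j) * uSeq M D k j
      < ∑ j ∈ D.erase i, (-M i j) := by
        apply Finset.sum_lt_sum
        · intro j hj
          exact mul_le_of_le_one_right
            (by linarith [hw i j (Finset.ne_of_mem_erase hj)]) (u_le_one hw hdiag hpos k j)
        · exact ⟨c, Finset.mem_erase.mpr ⟨hci, hc⟩,
            mul_lt_of_lt_one_right (by linarith) hk⟩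
    _ ≤ M i i := sum_w_le hw hdiag hpos i hi

end aux

theorem stmt_15 (n : ℕ) [NeZero n] (hn : 1 ≤ n) (A : Matrix (Fin n) (Fin n) ℝ)
    (hA : CyclicNonIncr A)
    (M : Matrix (Fin n) (Fin n) ℝ) (hM : ∀ i j, M i j = A i j - A i (j - 1))
    (D : Finset (Fin n))
    (hD : (↑D : Set (Fin n)) = {i | ∃ C, IsOpenSCC A C ∧ i ∈ C})
    (hne : D.Nonempty) :
    (∃ z : Fin n → ℝ, (∀ i ∈ D, 0 < z i) ∧ ∀ i ∈ D, 0 < ∑ j ∈ D, M i j * z j) ∧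
    IsUnit (M.submatrix (fun i : {a // a ∈ D} => (i : Fin n))
      (fun j : {a // a ∈ D} => (j : Fin n))) := by
  -- Basic sign facts about M
  have hw : ∀ i j : Fin n, j ≠ i → M i j ≤ 0 := by
    intro i j hji
    rw [hM]
    linarith [hA i j hji]
  have hrowsum : ∀ i : Fin n, ∑ j, M i j = 0 := by
    intro i
    have hshift : ∑ j : Fin n, A i (j - 1) = ∑ j : Fin n, A i j :=
      Fintype.sum_equiv (Equiv.subRight (1 : Fin n)) _ _ (fun j => rfl)
    simp only [hM]
    rw [Finset.sum_sub_distrib, hshift, sub_self]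
  have hdiag : ∀ i : Fin n, M i i = ∑ j ∈ Finset.univ.erase i, (-M i j) := by
    intro i
    have h := hrowsum i
    rw [← Finset.add_sum_erase Finset.univ (fun j => M i j) (Finset.mem_univ i)] at h
    rw [Finset.sum_neg_distrib]
    linarith
  have hdiag_nonneg : ∀ i : Fin n, 0 ≤ M i i := by
    intro i
    rw [hdiag i]
    exact Finset.sum_nonneg fun j hj => by
      linarith [hw i j (Finset.ne_of_mem_erase hj)]
  have hedge : ∀ i j : Fin n, GraphEdge A i j ↔ M i j < 0 := by
    intro i j
    rw [hM]
    constructor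
    · intro h; exact sub_neg.mpr h
    · intro h; exact sub_neg.mp h
  have hDmem : ∀ i : Fin n, i ∈ D ↔ ∃ C, IsOpenSCC A C ∧ i ∈ C := by
    intro i
    constructor
    · intro h; exact (Set.ext_iff.mp hD i).mp h
    · intro h; exact (Set.ext_iff.mp hD i).mpr h
  -- every vertex of D has an outgoing edge, hence a positive diagonal entry
  have hpos : ∀ i ∈ D, 0 < M i i := by
    intro i hi
    obtain ⟨C, hCopen, hiC⟩ := (hDmem i).mp hi
    obtain ⟨i0, rfl⟩ := hCopen.1
    have hiC' : Conn A i0 i := hiC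
    have hopen := hCopen.2
    push_neg at hopen
    obtain ⟨p, hpC, q, hpq, hqC⟩ := hopen
    have hip : Relation.ReflTransGen (GraphEdge A) i p := (hiC'.2.trans (hpC : Conn A i0 p).1)
    have hedge_i : ∃ c, GraphEdge A i c := by
      rcases hip.cases_head with h | ⟨c, hc, _⟩
      · exact ⟨q, h ▸ hpq⟩
      · exact ⟨c, hc⟩
    obtain ⟨c, hc⟩ := hedge_i
    have hMc : M i c < 0 := (hedge i c).mp hc
    have hci : c ≠ i := by
      intro h; rw [h] at hMc; linarith [hdiag_nonneg i]
    rw [hdiag i]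
    have hmem : c ∈ Finset.univ.erase i := Finset.mem_erase.mpr ⟨hci, Finset.mem_univ c⟩
    calc (0:ℝ) < -M i c := by linarith
      _ ≤ ∑ j ∈ Finset.univ.erase i, (-M i j) :=
          Finset.single_le_sum (f := fun j => -M i j) (fun j hj =>
            neg_nonneg.mpr (hw i j (Finset.ne_of_mem_erase hj))) hmem
  -- every vertex of D has some iterate < 1
  have key : ∀ i ∈ D, ∃ k, uSeq M D k i < 1 := by
    intro i hi
    obtain ⟨j, hjD, hpath⟩ := reach_out_aux A _ i le_rfl ((hDmem i).mp hi)
    have hjD' : j ∉ D := fun h => hjD ((hDmem j).mp h)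
    clear hjD
    revert hi
    induction hpath using Relation.ReflTransGen.head_induction_on with
    | refl => intro h; exact absurd h hjD'
    | head hac hcb ih =>
      rename_i a c
      intro haD
      have hMac : M a c < 0 := (hedge a c).mp hac
      have hca : c ≠ a := by
        intro h; rw [h] at hMac; linarith [hdiag_nonneg a]
      by_cases hcD : c ∈ D
      · obtain ⟨k, hk⟩ := ih hcD
        exact ⟨k+1, u_lt_one_step hw hdiag hpos haD hcD hca hMac hk⟩
      · exact ⟨1, u_lt_one_out hw hdiag hpos haD hcD hMac 0⟩
  choose f hf using key
  set K := D.attach.sup (fun x => f x.1 x.2) with hKdef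
  have hK : ∀ i ∈ D, uSeq M D K i < 1 := by
    intro i hi
    have hle : f i hi ≤ K :=
      Finset.le_sup (f := fun x : {a // a ∈ D} => f x.1 x.2) (Finset.mem_attach _ ⟨i, hi⟩)
    exact lt_of_le_of_lt (u_anti hw hdiag hpos hle i) (hf i hi)
  have hK1 : ∀ i ∈ D, uSeq M D (K+1) i < 1 := by
    intro i hi
    exact lt_of_le_of_lt (u_succ_le hw hdiag hpos K i) (hK i hi)
  -- the certificate vector
  set z : Fin n → ℝ := fun j => ∑ k ∈ Finset.range (K+1), uSeq M D k j with hzdef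
  have hz0 : ∀ i ∈ D, uSeq M D 0 i = 1 := by intro i hi; simp [uSeq, hi]
  have hzpos : ∀ i ∈ D, 0 < z i := by
    intro i hi
    have h1 : (1:ℝ) ≤ z i := by
      rw [← hz0 i hi]
      apply Finset.single_le_sum (f := fun k => uSeq M D k i)
        (fun k _ => u_nonneg hw hpos k i)
      simp
    linarith
  -- the key inner-product computation
  have hmain : ∀ i ∈ D, ∑ j ∈ D, M i j * z j = M i i * (1 - uSeq M D (K+1) i) := by
    intro i hi
    have hstep : ∀ k, ∑ j ∈ D, M i j * uSeq M D k j
        = M i i * (uSeq M D k i - uSeq M D (k+1) i) := by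
      intro k
      have hsplit : ∑ j ∈ D, M i j * uSeq M D k j
          = M i i * uSeq M D k i + ∑ j ∈ D.erase i, M i j * uSeq M D k j := by
        rw [← Finset.add_sum_erase D (fun j => M i j * uSeq M D k j) hi]
      have hS : ∑ j ∈ D.erase i, (-M i j) * uSeq M D k j = uSeq M D (k+1) i * M i i := by
        have : uSeq M D (k+1) i
            = (∑ j ∈ D.erase i, (-M i j) * uSeq M D k j) / M i i := by
          simp [uSeq, hi]
        rw [this, div_mul_cancel₀ _ (hpos i hi).ne']
      have hneg : ∑ j ∈ D.erase i, M i j * uSeq M D k j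
          = -(∑ j ∈ D.erase i, (-M i j) * uSeq M D k j) := by
        rw [← Finset.sum_neg_distrib]
        apply Finset.sum_congr rfl
        intro j _; ring
      rw [hsplit, hneg, hS]; ring
    calc ∑ j ∈ D, M i j * z j
        = ∑ j ∈ D, ∑ k ∈ Finset.range (K+1), M i j * uSeq M D k j := by
          apply Finset.sum_congr rfl
          intro j _
          rw [hzdef]
          exact Finset.mul_sum _ _ _
      _ = ∑ k ∈ Finset.range (K+1), ∑ j ∈ D, M i j * uSeq M D k j := Finset.sum_comm
      _ = ∑ k ∈ Finset.range (K+1), M i i * (uSeq M D k i - uSeq M D (k+1) i) := by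
          exact Finset.sum_congr rfl fun k _ => hstep k
      _ = M i i * ∑ k ∈ Finset.range (K+1), (uSeq M D k i - uSeq M D (k+1) i) := by
          rw [Finset.mul_sum]
      _ = M i i * (uSeq M D 0 i - uSeq M D (K+1) i) := by
          rw [Finset.sum_range_sub' (fun k => uSeq M D k i)]
      _ = M i i * (1 - uSeq M D (K+1) i) := by rw [hz0 i hi]
  have hgood : ∀ i ∈ D, 0 < ∑ j ∈ D, M i j * z j := by
    intro i hi
    rw [hmain i hi]
    have := hK1 i hi
    have := hpos i hi
    nlinarith
  refine ⟨⟨z, hzpos, hgood⟩, ?_⟩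
  -- invertibility
  set N : Matrix {a // a ∈ D} {a // a ∈ D} ℝ :=
    M.submatrix (fun i : {a // a ∈ D} => (i : Fin n))
      (fun j : {a // a ∈ D} => (j : Fin n)) with hNdef
  haveI : Nonempty {a // a ∈ D} := ⟨⟨hne.choose, hne.choose_spec⟩⟩
  set z' : {a // a ∈ D} → ℝ := fun j => z j.1 with hz'def
  have hz'pos : ∀ j, 0 < z' j := fun j => hzpos j.1 j.2
  have hNz : ∀ i, 0 < N.mulVec z' i := by
    intro i
    have : N.mulVec z' i = ∑ j ∈ D, M i.1 j * z j := by
      rw [hNdef, hz'def]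
      simp only [Matrix.mulVec, dotProduct, Matrix.submatrix_apply]
      exact Finset.sum_coe_sort D (fun j => M i.1 j * z j)
    rw [this]
    exact hgood i.1 i.2
  have hNoff : ∀ i j : {a // a ∈ D}, j ≠ i → N i j ≤ 0 := by
    intro i j hji
    exact hw i.1 j.1 (fun h => hji (Subtype.ext h))
  have hker : ∀ v : {a // a ∈ D} → ℝ, N.mulVec v = 0 → ∀ i, v i ≤ 0 := by
    intro v hv i1
    by_contra hpos1
    push_neg at hpos1
    obtain ⟨i0, hi0⟩ := Finite.exists_max (fun i => v i / z' i)
    have ht : 0 < v i0 / z' i0 :=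
      lt_of_lt_of_le (div_pos hpos1 (hz'pos i1)) (hi0 i1)
    set t := v i0 / z' i0 with htdef
    have hvle : ∀ j, v j ≤ t * z' j := by
      intro j
      have := hi0 j
      rw [div_le_iff₀ (hz'pos j)] at this
      linarith [this]
    have hvi0 : v i0 = t * z' i0 := by
      rw [htdef, div_mul_cancel₀ _ (hz'pos i0).ne']
    have hcontra : t * (N.mulVec z' i0) ≤ N.mulVec v i0 := by
      simp only [Matrix.mulVec, dotProduct, Finset.mul_sum]
      apply Finset.sum_le_sum
      intro j _
      by_cases hj : j = i0
      · subst hj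
        rw [hvi0]; ring_nf; exact le_rfl
      · have hNle : N i0 j ≤ 0 := hNoff i0 j hj
        calc t * (N i0 j * z' j) = N i0 j * (t * z' j) := by ring
          _ ≤ N i0 j * v j := mul_le_mul_of_nonpos_left (hvle j) hNle
    rw [hv] at hcontra
    simp only [Pi.zero_apply] at hcontra
    nlinarith [hNz i0]
  have hker0 : ∀ v : {a // a ∈ D} → ℝ, N.mulVec v = 0 → v = 0 := by
    intro v hv
    funext i
    have h1 := hker v hv i
    have h2 := hker (-v) (by rw [Matrix.mulVec_neg, hv, neg_zero]) i
    simp only [Pi.neg_apply, neg_nonpos] at h2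
    simp only [Pi.zero_apply]
    linarith
  have hdet : N.det ≠ 0 := by
    intro hdet0
    obtain ⟨v, hv0, hv⟩ := (Matrix.exists_mulVec_eq_zero_iff).mpr hdet0
    exact hv0 (hker0 v hv)
  exact (Matrix.isUnit_iff_isUnit_det N).mpr (isUnit_iff_ne_zero.mpr hdet)
end

section
/- Let n ≥ 1 and let A be a real n×n matrix satisfying the cyclic non-increasing condition such that Ae > 0 (all row sums strictly positive). Then for every vector z ∈ ℝⁿ with eᵀz < 0 (the sum of the components of z is strictly negative), there exists an index j ∈ {1,…,n} such that (Az)_j < 0. -/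
open Matrix BigOperators

open Fin.NatCast

lemma abel_le (N : ℕ) (b u : ℕ → ℝ) (hb : ∀ k, k + 1 < N → b (k + 1) ≤ b k)
    (hU : ∀ k < N, ∑ t ∈ Finset.range (k + 1), u t ≤ 0)
    (htot : ∑ t ∈ Finset.range N, u t = 0) :
    ∑ t ∈ Finset.range N, b t * u t ≤ 0 := by
  have := Finset.sum_range_by_parts b u N
  simp only [smul_eq_mul] at this
  rw [this, htot, mul_zero, zero_sub, neg_nonpos]
  apply Finset.sum_nonneg
  intro k hk
  rw [Finset.mem_range] at hk
  have h1 : b (k + 1) - b k ≤ 0 := sub_nonpos.mpr (hb k (by omega))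
  have h2 : ∑ t ∈ Finset.range (k + 1), u t ≤ 0 := hU k (by omega)
  nlinarith

theorem stmt_16 (n : ℕ) [NeZero n] (hn : 1 ≤ n) (A : Matrix (Fin n) (Fin n) ℝ)
    (hA : CyclicNonIncr A)
    (hrow : ∀ i, 0 < A.mulVec (fun _ => (1 : ℝ)) i) :
    ∀ z : Fin n → ℝ, (∑ i, z i) < 0 → ∃ j, A.mulVec z j < 0 := by
  intro z hS
  set S : ℝ := ∑ i, z i with hSdef
  have hnpos : (0 : ℝ) < n := by exact_mod_cast hn
  set w : Fin n → ℝ := fun j => z j - S / n with hw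
  have hwsum : ∑ j, w j = 0 := by
    simp only [hw, Finset.sum_sub_distrib, Finset.sum_const, Finset.card_univ,
      Fintype.card_fin, nsmul_eq_mul, ← hSdef]
    field_simp
    ring
  -- shifted sums over any n consecutive indices vanish
  have hshift : ∀ m : ℕ, ∑ t ∈ Finset.range n, w (((m + t : ℕ) : Fin n)) = 0 := by
    intro m
    have h1 : ∑ t ∈ Finset.range n, w (((m + t : ℕ) : Fin n))
        = ∑ t : Fin n, w ((m : Fin n) + t) := by
      rw [← Fin.sum_univ_eq_sum_range (fun t => w (((m + t : ℕ) : Fin n))) n]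
      apply Finset.sum_congr rfl
      intro t _
      congr 1
      push_cast
      simp
    rw [h1, ← hwsum]
    exact Equiv.sum_comp (Equiv.addLeft ((m : Fin n))) w
  set G : ℕ → ℝ := fun m => ∑ t ∈ Finset.range m, w ((t : ℕ) : Fin n) with hG
  have hGadd : ∀ m k : ℕ, G (m + k) = G m + ∑ t ∈ Finset.range k, w (((m + t : ℕ) : Fin n)) := by
    intro m k
    exact Finset.sum_range_add (fun t => w ((t : ℕ) : Fin n)) m k
  have hGper : ∀ m : ℕ, G (m + n) = G m := by
    intro m; rw [hGadd m n, hshift m, add_zero]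
  have hGmul : ∀ k m : ℕ, G (m + k * n) = G m := by
    intro k
    induction k with
    | zero => simp
    | succ k ih => intro m; rw [Nat.succ_mul, ← add_assoc, hGper, ih]
  -- maximizer of G over range n
  obtain ⟨m0, hm0mem, hm0⟩ := Finset.exists_max_image (Finset.range n) G ⟨0, by
    simp; omega⟩
  have hGmax : ∀ m : ℕ, G m ≤ G m0 := by
    intro m
    have h1 : G m = G (m % n) := by
      conv_lhs => rw [← Nat.mod_add_div' m n]
      exact hGmul (m / n) (m % n)
    rw [h1]
    exact hm0 (m % n) (Finset.mem_range.mpr (Nat.mod_lt m (by omega)))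
  set i : Fin n := (m0 : Fin n) with hi
  set b : ℕ → ℝ := fun t => A i (i + (t : Fin n)) with hb
  set u : ℕ → ℝ := fun t => w (i + (t : Fin n)) with hu
  have hcast : ∀ t : ℕ, ((m0 + t : ℕ) : Fin n) = i + (t : Fin n) := by
    intro t; push_cast; rfl
  -- prefix sums of u
  have hUeq : ∀ k : ℕ, ∑ t ∈ Finset.range k, u t = G (m0 + k) - G m0 := by
    intro k
    rw [hGadd m0 k, add_sub_cancel_left]
    apply Finset.sum_congr rfl
    intro t _
    rw [hu]
    rw [hcast]
  have hU : ∀ k, k < n → ∑ t ∈ Finset.range (k + 1), u t ≤ 0 := by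
    intro k _
    rw [hUeq]; linarith [hGmax (m0 + (k + 1))]
  have htot : ∑ t ∈ Finset.range n, u t = 0 := by
    rw [hUeq, hGper, sub_self]
  have hbmono : ∀ k, k + 1 < n → b (k + 1) ≤ b k := by
    intro k hk
    have hne : (((k + 1 : ℕ)) : Fin n) ≠ 0 := by
      intro h
      have : ((k + 1 : ℕ) : Fin n).val = k + 1 := by
        rw [Fin.val_natCast, Nat.mod_eq_of_lt hk]
      rw [h] at this
      simp at this
    have hne2 : i + ((k + 1 : ℕ) : Fin n) ≠ i := by
      intro h
      apply hne
      have := add_left_cancel (a := i) (b := ((k + 1 : ℕ) : Fin n)) (c := 0) (by rw [add_zero]; exact h)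
      exact this
    have := hA i (i + ((k + 1 : ℕ) : Fin n)) hne2
    have heq : i + ((k + 1 : ℕ) : Fin n) - 1 = i + (k : Fin n) := by
      push_cast
      abel
    rw [heq] at this
    exact this
  have habel := abel_le n b u hbmono hU htot
  -- identify the sum with mulVec
  have hsum : ∑ t ∈ Finset.range n, b t * u t = A.mulVec w i := by
    rw [← Fin.sum_univ_eq_sum_range (fun t => b t * u t) n]
    have h1 : ∀ t : Fin n, b t.val * u t.val = A i (i + t) * w (i + t) := by
      intro t; rw [hb, hu]; simp [Fin.cast_val_eq_self]
    rw [Finset.sum_congr rfl (fun t _ => h1 t)]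
    rw [Matrix.mulVec, dotProduct]
    exact Equiv.sum_comp (Equiv.addLeft i) (fun j => A i j * w j)
  -- decompose mulVec z
  have hdec : A.mulVec z i = A.mulVec w i + (S / n) * A.mulVec (fun _ => (1 : ℝ)) i := by
    simp only [Matrix.mulVec, dotProduct, hw]
    rw [Finset.mul_sum, ← Finset.sum_add_distrib]
    apply Finset.sum_congr rfl
    intro j _
    ring
  refine ⟨i, ?_⟩
  have hr := hrow i
  have : (S / n) * A.mulVec (fun _ => (1 : ℝ)) i < 0 :=
    mul_neg_of_neg_of_pos (div_neg_of_neg_of_pos hS hnpos) hr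
  rw [hdec]
  rw [hsum] at habel
  linarith
end

section
/- Let n ≥ 1 and let A be a real n×n matrix satisfying the cyclic non-increasing condition and Ae > 0 (all row sums strictly positive). Suppose in addition that for every pair of vertices r, s ∈ {1,…,n} there exists a vertex v ∈ {1,…,n} that is reachable by a directed path (possibly of length 0) in the graph 𝒢(A) both from r and from s. Then det A > 0. -/
open Matrix BigOperators

namespace S17

open Finset

variable {m : ℕ}

/-- The "negative Laplacian" of cyclic differences of `A`. -/
def Wof (A : Matrix (Fin (m+1)) (Fin (m+1)) ℝ) : Matrix (Fin (m+1)) (Fin (m+1)) ℝ :=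
  Matrix.of fun i j => A i (j - 1) - A i j

/-- The matrix with columns `W_1, …, W_m` followed by the vector `s`. -/
def Mmat (W : Matrix (Fin (m+1)) (Fin (m+1)) ℝ) (s : Fin (m+1) → ℝ) :
    Matrix (Fin (m+1)) (Fin (m+1)) ℝ :=
  Matrix.of fun i j => if j = Fin.last m then s i else W i (j + 1)

lemma neg_one_eq_last : (-1 : Fin (m+1)) = Fin.last m := by
  ext
  simp [Fin.coe_neg_one, Fin.val_last]

lemma add_one_eq_zero_iff {j : Fin (m+1)} : j + 1 = 0 ↔ j = Fin.last m := by
  rw [add_eq_zero_iff_eq_neg, neg_one_eq_last]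

lemma sum_Wof (A : Matrix (Fin (m+1)) (Fin (m+1)) ℝ) (i : Fin (m+1)) :
    ∑ j, Wof A i j = 0 := by
  have h : ∑ j, A i (j - 1) = ∑ j, A i j :=
    Fintype.sum_equiv (Equiv.subRight 1) _ _ (fun j => rfl)
  simp [Wof, Finset.sum_sub_distrib, h]

lemma Wof_nonneg_off {A : Matrix (Fin (m+1)) (Fin (m+1)) ℝ} (hA : CyclicNonIncr A)
    {i j : Fin (m+1)} (h : j ≠ i) : 0 ≤ Wof A i j :=
  sub_nonneg.2 (hA i j h)

lemma Wof_one_off {i j : Fin (m+1)} (h : j ≠ i) :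
    0 ≤ Wof (1 : Matrix (Fin (m+1)) (Fin (m+1)) ℝ) i j := by
  have h2 : (1 : Matrix (Fin (m+1)) (Fin (m+1)) ℝ) i j = 0 :=
    Matrix.one_apply_ne (fun hij => h hij.symm)
  have h3 : (0:ℝ) ≤ (1 : Matrix (Fin (m+1)) (Fin (m+1)) ℝ) i (j - 1) := by
    rw [Matrix.one_apply]
    split <;> norm_num
  simp only [Wof, Matrix.of_apply, h2, sub_zero]
  exact h3

lemma Wof_one_succ (hm : (1 : Fin (m+1)) ≠ 0) (i : Fin (m+1)) :
    Wof (1 : Matrix (Fin (m+1)) (Fin (m+1)) ℝ) i (i + 1) = 1 := by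
  have h1 : i + 1 - 1 = i := add_sub_cancel_right i 1
  have h2 : i ≠ i + 1 := by
    intro h
    exact hm ((left_eq_add).1 h)
  simp [Wof, Matrix.one_apply, h1, h2]

/-- Column-operation matrix. -/
def Fmat (m : ℕ) : Matrix (Fin (m+1)) (Fin (m+1)) ℝ :=
  Matrix.of fun j k =>
    if k = Fin.last m then 1 else if j = k then 1 else if j = k + 1 then -1 else 0

/-- Lower-triangular matrix of ones. -/
def Tmat (m : ℕ) : Matrix (Fin (m+1)) (Fin (m+1)) ℝ :=
  Matrix.of fun j i => if i ≤ j then 1 else 0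

/-- Upper-triangular result of `T * F`. -/
def Gmat (m : ℕ) : Matrix (Fin (m+1)) (Fin (m+1)) ℝ :=
  Matrix.of fun j k => if k = Fin.last m then ((j : ℕ) + 1 : ℝ) else if j = k then 1 else 0

lemma Fmat_split {k : Fin (m+1)} (hk : k ≠ Fin.last m) (i : Fin (m+1)) :
    Fmat m i k = (if i = k then (1:ℝ) else 0) - (if i = k + 1 then 1 else 0) := by
  have hkk : k ≠ k + 1 := by
    intro h
    have h1 := (left_eq_add).1 h
    rw [Fin.one_eq_zero_iff] at h1
    apply hk
    have hm0 : m = 0 := by omega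
    subst hm0
    exact Fin.ext (by have := k.isLt; omega)
  simp only [Fmat, Matrix.of_apply, if_neg hk]
  by_cases h2 : i = k
  · subst h2
    rw [if_pos rfl, if_pos rfl, if_neg hkk, sub_zero]
  · rw [if_neg h2, if_neg h2]
    by_cases h3 : i = k + 1
    · rw [if_pos h3, if_pos h3]; ring
    · rw [if_neg h3, if_neg h3]; ring

lemma hkk_aux {k : Fin (m+1)} (hk : k ≠ Fin.last m) : ((k + 1 : Fin (m+1)) : ℕ) = (k : ℕ) + 1 :=
  Fin.val_add_one_of_lt (lt_of_le_of_ne (Fin.le_last k) hk)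

lemma Tmat_mul_Fmat : Tmat m * Fmat m = Gmat m := by
  ext j k
  rw [Matrix.mul_apply]
  by_cases hk : k = Fin.last m
  · have hF : ∀ i, Fmat m i k = 1 := by
      intro i; simp [Fmat, hk]
    have hG : Gmat m j k = ((j : ℕ) + 1 : ℝ) := by simp [Gmat, hk]
    have hfil : Finset.univ.filter (fun i : Fin (m+1) => i ≤ j) = Finset.Iic j := by
      ext i; simp
    rw [hG]
    calc ∑ i, Tmat m j i * Fmat m i k
        = ∑ i : Fin (m+1), (if i ≤ j then (1:ℝ) else 0) := by
          refine Finset.sum_congr rfl fun i _ => ?_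
          rw [hF]
          simp [Tmat]
      _ = ((Finset.univ.filter (fun i : Fin (m+1) => i ≤ j)).card : ℝ) := by
          rw [Finset.sum_boole]
      _ = ((j : ℕ) + 1 : ℝ) := by
          rw [hfil, Fin.card_Iic]; push_cast; ring
  · have hkk : k ≠ k + 1 := by
      intro h
      have h1 := (left_eq_add).1 h
      rw [Fin.one_eq_zero_iff] at h1
      apply hk
      have hm0 : m = 0 := by omega
      subst hm0
      exact Fin.ext (by have := k.isLt; omega)
    simp only [Gmat, Matrix.of_apply, if_neg hk]
    have hsum : ∀ i : Fin (m+1), Tmat m j i * Fmat m i k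
        = (if i = k then (if k ≤ j then (1:ℝ) else 0) else 0)
          - (if i = k + 1 then (if k + 1 ≤ j then (1:ℝ) else 0) else 0) := by
      intro i
      rw [Fmat_split hk]
      simp only [Tmat, Matrix.of_apply]
      by_cases h2 : i = k
      · subst h2
        simp only [if_neg hkk, eq_self_iff_true, if_true]
        ring
      · rw [if_neg h2, if_neg h2]
        by_cases h3 : i = k + 1
        · subst h3
          simp only [if_pos rfl]
          split_ifs <;> ring
        · simp only [if_neg h3]
          ring
    rw [Finset.sum_congr rfl (fun i _ => hsum i), Finset.sum_sub_distrib,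
      Finset.sum_ite_eq' Finset.univ k, Finset.sum_ite_eq' Finset.univ (k+1)]
    simp only [Finset.mem_univ, if_pos]
    have hval := hkk_aux hk
    by_cases hjk : j = k
    · subst hjk
      rw [if_pos rfl, if_pos (le_refl j), if_neg, sub_zero]
      rw [Fin.le_def, hval]
      omega
    · rw [if_neg hjk]
      by_cases hle : k ≤ j
      · have hlt : k < j := lt_of_le_of_ne hle (fun h => hjk h.symm)
        rw [if_pos hle, if_pos, sub_self]
        rw [Fin.le_def, hval]
        exact Fin.lt_def.1 hlt
      · rw [if_neg hle, if_neg, sub_zero]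
        intro h
        apply hle
        rw [Fin.le_def, hval] at h
        rw [Fin.le_def]
        omega

lemma det_Tmat : (Tmat m).det = 1 := by
  have h : (Tmat m).BlockTriangular OrderDual.toDual := by
    intro i j hij
    simp only [Tmat, Matrix.of_apply]
    rw [if_neg]
    exact fun h => absurd (lt_of_le_of_lt h hij) (lt_irrefl _)
  rw [Matrix.det_of_lowerTriangular _ h]
  simp [Tmat]

lemma det_Gmat : (Gmat m).det = (m : ℝ) + 1 := by
  have h : (Gmat m).BlockTriangular id := by
    intro i j hij
    simp only [Gmat, Matrix.of_apply, id] at *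
    have hjlast : j ≠ Fin.last m := by
      intro h
      subst h
      exact absurd (lt_of_lt_of_le hij (Fin.le_last i)) (lt_irrefl _)
    rw [if_neg hjlast, if_neg (fun h : i = j => absurd hij (h ▸ lt_irrefl _))]
  rw [Matrix.det_of_upperTriangular h]
  have : ∀ i : Fin (m+1), Gmat m i i = if i = Fin.last m then (m : ℝ) + 1 else 1 := by
    intro i
    by_cases hi : i = Fin.last m
    · subst hi
      simp [Gmat, Fin.val_last]
    · simp [Gmat, hi]
  rw [Finset.prod_congr rfl (fun i _ => this i)]
  rw [Finset.prod_ite_eq' Finset.univ (Fin.last m) (fun _ => (m : ℝ) + 1)]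
  simp

lemma det_Fmat : (Fmat m).det = (m : ℝ) + 1 := by
  have h := congrArg Matrix.det (Tmat_mul_Fmat (m := m))
  rw [Matrix.det_mul, det_Tmat, det_Gmat, one_mul] at h
  exact h

lemma Mmat_eq (A : Matrix (Fin (m+1)) (Fin (m+1)) ℝ) :
    Mmat (Wof A) (fun i => ∑ j, A i j) = A * Fmat m := by
  ext i k
  rw [Matrix.mul_apply]
  by_cases hk : k = Fin.last m
  · subst hk
    simp [Mmat, Fmat]
  · simp only [Mmat, Matrix.of_apply, if_neg hk, Wof]
    rw [add_sub_cancel_right]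
    have hsum : ∀ j : Fin (m+1), A i j * Fmat m j k
        = (if j = k then A i j else 0) - (if j = k + 1 then A i j else 0) := by
      intro j
      rw [Fmat_split hk]
      split_ifs <;> ring
    rw [Finset.sum_congr rfl (fun j _ => hsum j), Finset.sum_sub_distrib,
      Finset.sum_ite_eq' Finset.univ k, Finset.sum_ite_eq' Finset.univ (k+1)]
    simp

lemma det_Mmat (A : Matrix (Fin (m+1)) (Fin (m+1)) ℝ) :
    (Mmat (Wof A) (fun i => ∑ j, A i j)).det = ((m : ℝ) + 1) * A.det := by
  rw [Mmat_eq, Matrix.det_mul, det_Fmat]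
  ring

lemma det_Mmat_ne_zero (W : Matrix (Fin (m+1)) (Fin (m+1)) ℝ) (s : Fin (m+1) → ℝ)
    (hW0 : ∀ i, ∑ j, W i j = 0) (hWnn : ∀ i j, j ≠ i → 0 ≤ W i j) (hs : ∀ i, 0 < s i)
    (hconn : ∀ r r' : Fin (m+1), ∃ v, Relation.ReflTransGen (fun i j => 0 < W i j) r v ∧
      Relation.ReflTransGen (fun i j => 0 < W i j) r' v) :
    (Mmat W s).det ≠ 0 := by
  intro hdet
  obtain ⟨x, hx0, hMx⟩ := Matrix.exists_mulVec_eq_zero_iff.2 hdet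
  set c := x (Fin.last m) with hc
  set y : Fin (m+1) → ℝ := fun k => if k = 0 then 0 else x (k - 1) with hy
  have hyx : ∀ j : Fin (m+1), j ≠ Fin.last m → y (j + 1) = x j := by
    intro j hj
    have h1 : j + 1 ≠ 0 := fun h => hj (add_one_eq_zero_iff.1 h)
    simp only [hy, if_neg h1, add_sub_cancel_right]
  have hylast : y (Fin.last m + 1) = 0 := by
    have h1 : Fin.last m + 1 = 0 := add_one_eq_zero_iff.2 rfl
    simp [hy, h1]
  have hE : ∀ i, ∑ k, W i k * y k = -(s i * c) := by
    intro i
    have h1 : ∑ j, W i (j + 1) * y (j + 1) = ∑ k, W i k * y k :=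
      Fintype.sum_equiv (Equiv.addRight 1) _ _ (fun j => rfl)
    have h2 : ∑ j, Mmat W s i j * x j = 0 := congrFun hMx i
    have h3 : ∀ j : Fin (m+1), Mmat W s i j * x j
        = W i (j + 1) * y (j + 1) + (if j = Fin.last m then s i * x j else 0) := by
      intro j
      simp only [Mmat, Matrix.of_apply]
      by_cases hj : j = Fin.last m
      · subst hj
        rw [if_pos rfl, if_pos rfl, hylast, mul_zero, zero_add]
      · rw [if_neg hj, if_neg hj, hyx j hj, add_zero]
    rw [Finset.sum_congr rfl (fun j _ => h3 j), Finset.sum_add_distrib,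
      Finset.sum_ite_eq' Finset.univ (Fin.last m), if_pos (Finset.mem_univ _), h1] at h2
    rw [← hc] at h2
    linarith [h2]
  have hE' : ∀ i, ∑ k, W i k * (y k - y i) = -(s i * c) := by
    intro i
    have h1 : ∑ k, W i k * (y k - y i) = (∑ k, W i k * y k) - (∑ k, W i k) * y i := by
      rw [Finset.sum_mul, ← Finset.sum_sub_distrib]
      exact Finset.sum_congr rfl (fun k _ => by ring)
    rw [h1, hW0, hE]
    ring
  have hc0 : c = 0 := by
    rcases lt_trichotomy c 0 with h | h | h
    · exfalso
      obtain ⟨i, -, hi⟩ := Finset.exists_max_image Finset.univ y ⟨0, Finset.mem_univ 0⟩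
      have hle : ∑ k, W i k * (y k - y i) ≤ 0 := by
        apply Finset.sum_nonpos
        intro k _
        by_cases hki : k = i
        · subst hki; simp
        · have h1 := hWnn i k hki
          have h2 : y k - y i ≤ 0 := sub_nonpos.2 (hi k (Finset.mem_univ k))
          nlinarith
      have := hE' i
      nlinarith [hs i]
    · exact h
    · exfalso
      obtain ⟨i, -, hi⟩ := Finset.exists_min_image Finset.univ y ⟨0, Finset.mem_univ 0⟩
      have hge : 0 ≤ ∑ k, W i k * (y k - y i) := by
        apply Finset.sum_nonneg
        intro k _
        by_cases hki : k = i
        · subst hki; simp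
        · have h1 := hWnn i k hki
          have h2 : 0 ≤ y k - y i := sub_nonneg.2 (hi k (Finset.mem_univ k))
          nlinarith
      have := hE' i
      nlinarith [hs i]
  have hE0 : ∀ i, ∑ k, W i k * (y k - y i) = 0 := by
    intro i
    rw [hE', hc0]
    ring
  have hstepmax : ∀ i, (∀ l, y l ≤ y i) → ∀ k, 0 < W i k → y k = y i ∧ (∀ l, y l ≤ y k) := by
    intro i hi k hk
    have hterms : ∀ k' ∈ Finset.univ, W i k' * (y k' - y i) ≤ 0 := by
      intro k' _
      by_cases hki : k' = i
      · subst hki; simp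
      · have h1 := hWnn i k' hki
        have h2 : y k' - y i ≤ 0 := sub_nonpos.2 (hi k')
        nlinarith
    have hz := (Finset.sum_eq_zero_iff_of_nonpos hterms).1 (hE0 i) k (Finset.mem_univ k)
    have hyk : y k = y i := by
      rcases mul_eq_zero.1 hz with h | h
      · exact absurd h hk.ne'
      · linarith [sub_eq_zero.1 h]
    exact ⟨hyk, fun l => hyk ▸ hi l⟩
  have hstepmin : ∀ i, (∀ l, y i ≤ y l) → ∀ k, 0 < W i k → y k = y i ∧ (∀ l, y k ≤ y l) := by
    intro i hi k hk
    have hterms : ∀ k' ∈ Finset.univ, 0 ≤ W i k' * (y k' - y i) := by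
      intro k' _
      by_cases hki : k' = i
      · subst hki; simp
      · have h1 := hWnn i k' hki
        have h2 : 0 ≤ y k' - y i := sub_nonneg.2 (hi k')
        nlinarith
    have hz := (Finset.sum_eq_zero_iff_of_nonneg hterms).1 (hE0 i) k (Finset.mem_univ k)
    have hyk : y k = y i := by
      rcases mul_eq_zero.1 hz with h | h
      · exact absurd h hk.ne'
      · linarith [sub_eq_zero.1 h]
    exact ⟨hyk, fun l => hyk ▸ hi l⟩
  have hmaxpath : ∀ i v, Relation.ReflTransGen (fun a b => 0 < W a b) i v →
      (∀ l, y l ≤ y i) → (∀ l, y l ≤ y v) := by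
    intro i v hpath hi
    induction hpath with
    | refl => exact hi
    | tail _ hbc ih => exact (hstepmax _ ih _ hbc).2
  have hminpath : ∀ i v, Relation.ReflTransGen (fun a b => 0 < W a b) i v →
      (∀ l, y i ≤ y l) → (∀ l, y v ≤ y l) := by
    intro i v hpath hi
    induction hpath with
    | refl => exact hi
    | tail _ hbc ih => exact (hstepmin _ ih _ hbc).2
  obtain ⟨imax, -, hmax⟩ := Finset.exists_max_image Finset.univ y ⟨0, Finset.mem_univ 0⟩
  obtain ⟨imin, -, hmin⟩ := Finset.exists_min_image Finset.univ y ⟨0, Finset.mem_univ 0⟩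
  obtain ⟨v, hp1, hp2⟩ := hconn imax imin
  have h1 := hmaxpath imax v hp1 (fun l => hmax l (Finset.mem_univ l))
  have h2 := hminpath imin v hp2 (fun l => hmin l (Finset.mem_univ l))
  have hyconst : ∀ l, y l = y v := fun l => le_antisymm (h1 l) (h2 l)
  have hy0 : y 0 = 0 := by simp [hy]
  have hyv : y v = 0 := by rw [← hyconst 0, hy0]
  apply hx0
  funext j
  show x j = 0
  by_cases hj : j = Fin.last m
  · rw [hj, ← hc]
    exact hc0
  · rw [← hyx j hj, hyconst, hyv]

open Fin.NatCast in
lemma reach_of_cycle {E : Fin (m+1) → Fin (m+1) → Prop} (h : ∀ i, E i (i + 1))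
    (r r' : Fin (m+1)) : Relation.ReflTransGen E r r' := by
  have key : ∀ d : ℕ, Relation.ReflTransGen E r (r + (d : Fin (m+1))) := by
    intro d
    induction d with
    | zero => simpa using Relation.ReflTransGen.refl
    | succ d ih =>
      have hcast : ((d + 1 : ℕ) : Fin (m+1)) = (d : Fin (m+1)) + 1 := by push_cast; ring
      rw [hcast, ← add_assoc]
      exact ih.tail (h _)
  have hfin := key ((r' - r : Fin (m+1)) : ℕ)
  rwa [Fin.cast_val_eq_self, show r + (r' - r) = r' from add_sub_cancel r r'] at hfin

/-- The homotopy matrix. -/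
def Ht (A : Matrix (Fin (m+1)) (Fin (m+1)) ℝ) (t : ℝ) : Matrix (Fin (m+1)) (Fin (m+1)) ℝ :=
  Mmat
    (Matrix.of fun i j => (1 - t) * Wof A i j
      + t * Wof (1 : Matrix (Fin (m+1)) (Fin (m+1)) ℝ) i j)
    (fun i => (1 - t) * (∑ j, A i j) + t)

end S17

theorem stmt_17 (n : ℕ) [NeZero n] (hn : 1 ≤ n) (A : Matrix (Fin n) (Fin n) ℝ)
    (hA : CyclicNonIncr A)
    (hrow : ∀ i, 0 < A.mulVec (fun _ => (1 : ℝ)) i)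
    (hconn : ∀ r s : Fin n, ∃ v : Fin n,
      Relation.ReflTransGen (GraphEdge A) r v ∧
      Relation.ReflTransGen (GraphEdge A) s v) :
    0 < A.det := by
  classical
  obtain ⟨m, rfl⟩ := Nat.exists_eq_succ_of_ne_zero (NeZero.ne n)
  have hs : ∀ i, 0 < ∑ j, A i j := by
    intro i
    have := hrow i
    simpa [Matrix.mulVec, dotProduct] using this
  -- continuity of the homotopy determinant
  have hcont : Continuous fun t : ℝ => (S17.Ht A t).det := by
    apply Continuous.matrix_det
    apply continuous_matrix
    intro i j
    by_cases hj : j = Fin.last m <;>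
      · simp only [S17.Ht, S17.Mmat, Matrix.of_apply, hj, if_true, if_false, reduceIte]
        fun_prop
  -- nonvanishing on [0,1]
  have hne : ∀ t ∈ Set.Icc (0:ℝ) 1, (S17.Ht A t).det ≠ 0 := by
    intro t ht
    apply S17.det_Mmat_ne_zero
    · intro i
      simp only [Matrix.of_apply]
      rw [Finset.sum_add_distrib, ← Finset.mul_sum, ← Finset.mul_sum,
        S17.sum_Wof, S17.sum_Wof]
      ring
    · intro i j hji
      simp only [Matrix.of_apply]
      have h1 := S17.Wof_nonneg_off hA hji
      have h2 := S17.Wof_one_off (m := m) hji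
      have h3 : (0:ℝ) ≤ 1 - t := by linarith [ht.2]
      nlinarith [ht.1]
    · intro i
      rcases eq_or_lt_of_le ht.1 with h0 | h0
      · have : t = 0 := h0.symm
        subst this
        simpa using hs i
      · have h1 : (0:ℝ) ≤ 1 - t := by linarith [ht.2]
        nlinarith [hs i]
    · intro r r'
      rcases eq_or_lt_of_le ht.1 with h0 | h0
      · -- t = 0 : use the hypothesis
        have ht0 : t = 0 := h0.symm
        subst ht0
        obtain ⟨v, hp1, hp2⟩ := hconn r r'
        have hmono : ∀ a b : Fin (m+1), GraphEdge A a b →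
            0 < (Matrix.of fun i j => (1 - (0:ℝ)) * S17.Wof A i j
              + 0 * S17.Wof (1 : Matrix (Fin (m+1)) (Fin (m+1)) ℝ) i j) a b := by
          intro a b hab
          have : 0 < S17.Wof A a b := sub_pos.2 hab
          simp only [Matrix.of_apply]
          nlinarith
        exact ⟨v, Relation.ReflTransGen.mono (r := GraphEdge A) hmono _ _ hp1,
          Relation.ReflTransGen.mono (r := GraphEdge A) hmono _ _ hp2⟩
      · -- t > 0 : the cyclic edges are present
        by_cases hrr : r = r'
        · exact ⟨r, Relation.ReflTransGen.refl, hrr ▸ Relation.ReflTransGen.refl⟩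
        · have hone : (1 : Fin (m+1)) ≠ 0 := by
            intro h
            rw [Fin.one_eq_zero_iff] at h
            have hm0 : m = 0 := by omega
            subst hm0
            exact hrr (Fin.ext (by have := r.isLt; have := r'.isLt; omega))
          refine ⟨r', S17.reach_of_cycle ?_ r r', Relation.ReflTransGen.refl⟩
          intro i
          have hne' : i + 1 ≠ i := by
            intro h
            exact hone ((left_eq_add).1 h.symm)
          have h1 := S17.Wof_nonneg_off hA hne'
          have h2 := S17.Wof_one_succ hone i
          simp only [Matrix.of_apply, h2]
          have h3 : (0:ℝ) ≤ 1 - t := by linarith [ht.2]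
          nlinarith
  -- endpoint values
  have hf0 : (S17.Ht A 0).det = ((m:ℝ) + 1) * A.det := by
    have e1 : S17.Ht A 0 = S17.Mmat (S17.Wof A) (fun i => ∑ j, A i j) := by
      unfold S17.Ht S17.Mmat
      ext i j
      simp
    rw [e1, S17.det_Mmat]
  have hf1 : (S17.Ht A 1).det = (m:ℝ) + 1 := by
    have e1 : S17.Ht A 1 = S17.Mmat (S17.Wof (1 : Matrix (Fin (m+1)) (Fin (m+1)) ℝ))
        (fun i => ∑ j, (1 : Matrix (Fin (m+1)) (Fin (m+1)) ℝ) i j) := by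
      unfold S17.Ht S17.Mmat
      ext i j
      have hone : ∑ j, (1 : Matrix (Fin (m+1)) (Fin (m+1)) ℝ) i j = 1 := by
        simp [Matrix.one_apply]
      simp [hone]
    rw [e1, S17.det_Mmat, Matrix.det_one]
    ring
  -- intermediate value theorem
  have hfpos : 0 < (S17.Ht A 0).det := by
    rcases lt_trichotomy ((S17.Ht A 0).det) 0 with h | h | h
    · exfalso
      have hmem : (0:ℝ) ∈ Set.Icc ((S17.Ht A 0).det) ((S17.Ht A 1).det) := by
        constructor
        · exact le_of_lt h
        · rw [hf1]; positivity
      obtain ⟨t, ht, hft⟩ := intermediate_value_Icc (by norm_num : (0:ℝ) ≤ 1)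
        hcont.continuousOn hmem
      exact hne t ht hft
    · exact absurd h (hne 0 (by norm_num))
    · exact h
  rw [hf0] at hfpos
  have hm1 : (0:ℝ) < (m:ℝ) + 1 := by positivity
  nlinarith
end

section
/- Let n ≥ 3 and let A = (a_{ij}) be a real n×n matrix such that for every row i: a_{ii} = a_{i[i+1]} > a_{i[i+2]} > … > a_{i[i+n−1]} ≥ 0 (the diagonal entry equals the next entry in cyclic order, after which the row is strictly decreasing, with all entries non-negative). Then A is a P-matrix. -/
open Matrix BigOperators Finset
open Fin.NatCast

set_option linter.unusedSectionVars false
set_option maxHeartbeats 1000000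

namespace PMX

variable {n : ℕ} [NeZero n]

def gent (A : Matrix (Fin n) (Fin n) ℝ) (i : Fin n) (t : ℕ) : ℝ :=
  if t < n then A i (i + (t : Fin n)) else 0

def Dcoef (A : Matrix (Fin n) (Fin n) ℝ) (i : Fin n) (s : ℕ) : ℝ :=
  gent A i s - gent A i (s + 1)

def Wsum (x : Fin n → ℝ) (i : Fin n) (r : ℕ) : ℝ :=
  ∑ j, if (j - i).val < r then x j else 0

lemma fin_sub_val (a b : Fin n) : (a - b).val = (n - b.val + a.val) % n := by
  rw [Fin.sub_def]

lemma add_cast_dist (i j : Fin n) : i + (((j - i).val : ℕ) : Fin n) = j := by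
  rw [Fin.cast_val_eq_self, add_comm, sub_add_cancel]

lemma cast_ne_zero_of {t : ℕ} (h1 : t % n ≠ 0) : ((t : ℕ) : Fin n) ≠ 0 := by
  intro h
  have h2 : ((t : ℕ) : Fin n).val = 0 := by rw [h]; rfl
  rw [Fin.val_natCast] at h2
  exact h1 h2

lemma add_cast_ne_self {i : Fin n} {t : ℕ} (h1 : t % n ≠ 0) : i + ((t : ℕ) : Fin n) ≠ i := by
  intro h
  exact cast_ne_zero_of h1 (add_eq_left.mp h)

lemma entry_eq_gent (A : Matrix (Fin n) (Fin n) ℝ) (i j : Fin n) :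
    A i j = gent A i ((j - i).val) := by
  rw [gent, if_pos (Fin.is_lt _), add_cast_dist]

lemma sub_shift_val (i j : Fin n) (d : ℕ) (hd : d < n) :
    (j - (i + (d : Fin n))).val = (n - d + (j - i).val) % n := by
  have h1 : j - (i + (d : Fin n)) = (j - i) - (d : Fin n) := by abel
  rw [h1, fin_sub_val, Fin.val_natCast, Nat.mod_eq_of_lt hd]

lemma tele (A : Matrix (Fin n) (Fin n) ℝ) (i : Fin n) (t : ℕ) (ht : t < n) :
    gent A i t = ∑ s ∈ Finset.Ico t n, Dcoef A i s := by
  have h1 : ∑ s ∈ Finset.Ico t n, Dcoef A i s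
      = ∑ k ∈ Finset.range (n - t), Dcoef A i (t + k) :=
    Finset.sum_Ico_eq_sum_range _ _ _
  have h2 : ∑ k ∈ Finset.range (n - t), Dcoef A i (t + k)
      = ∑ k ∈ Finset.range (n - t), ((fun k => gent A i (t + k)) k - (fun k => gent A i (t + k)) (k + 1)) := by
    apply Finset.sum_congr rfl
    intro k _
    simp only [Dcoef, Nat.add_assoc]
  have h3 : gent A i (t + (n - t)) = 0 := by
    rw [gent, if_neg]; omega
  rw [h1, h2, Finset.sum_range_sub']
  simp only [add_zero, h3, sub_zero]

lemma row_eq (A : Matrix (Fin n) (Fin n) ℝ) (x : Fin n → ℝ) (i : Fin n) :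
    ∑ j, A i j * x j = ∑ s ∈ Finset.range n, Dcoef A i s * Wsum x i (s + 1) := by
  have key : ∀ j : Fin n, A i j = ∑ s ∈ Finset.range n,
      (if (j - i).val ≤ s then Dcoef A i s else 0) := by
    intro j
    rw [entry_eq_gent A i j, tele A i _ (Fin.is_lt _), ← Finset.sum_filter]
    congr 1
    ext s
    simp only [Finset.mem_Ico, Finset.mem_filter, Finset.mem_range]
    omega
  calc ∑ j, A i j * x j
      = ∑ j, ∑ s ∈ Finset.range n, (if (j - i).val ≤ s then Dcoef A i s else 0) * x j := by
        apply Finset.sum_congr rfl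
        intro j _
        rw [key j, Finset.sum_mul]
    _ = ∑ s ∈ Finset.range n, ∑ j, (if (j - i).val ≤ s then Dcoef A i s else 0) * x j :=
        Finset.sum_comm
    _ = ∑ s ∈ Finset.range n, Dcoef A i s * Wsum x i (s + 1) := by
        apply Finset.sum_congr rfl
        intro s _
        rw [Wsum, Finset.mul_sum]
        apply Finset.sum_congr rfl
        intro j _
        by_cases h : (j - i).val ≤ s
        · rw [if_pos h, if_pos (by omega)]
        · rw [if_neg h, if_neg (by omega), zero_mul, mul_zero]

lemma W_one (x : Fin n → ℝ) (i : Fin n) : Wsum x i 1 = x i := by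
  rw [Wsum]
  have key : ∀ j : Fin n, (if (j - i).val < 1 then x j else 0) = (if j = i then x j else 0) := by
    intro j
    by_cases h : j = i
    · subst h; simp [sub_self]
    · rw [if_neg h, if_neg]
      intro hlt
      have h0 : (j - i) = 0 := Fin.ext (by simp only [Fin.val_zero]; omega)
      exact h (by rwa [sub_eq_zero] at h0)
  rw [Finset.sum_congr rfl (fun j _ => key j), Finset.sum_ite_eq' _ i x, if_pos (Finset.mem_univ i)]

lemma W_succ (x : Fin n → ℝ) (i : Fin n) (r : ℕ) (h1 : 1 ≤ r) (h2 : r ≤ n) :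
    Wsum x i r = Wsum x i (r - 1) + x (i + (((r - 1 : ℕ)) : Fin n)) := by
  have hrn : r - 1 < n := by omega
  set p := i + (((r - 1 : ℕ)) : Fin n) with hp
  have hdistp : (p - i).val = r - 1 := by
    rw [hp, add_sub_cancel_left, Fin.val_natCast, Nat.mod_eq_of_lt hrn]
  have key : ∀ j : Fin n, (if (j - i).val < r then x j else 0)
      = (if (j - i).val < r - 1 then x j else 0) + (if j = p then x j else 0) := by
    intro j
    by_cases hj : j = p
    · subst hj
      rw [hdistp, if_pos (show r - 1 < r by omega), if_neg (show ¬ (r - 1 < r - 1) by omega),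
        if_pos rfl, zero_add]
    · have hv : (j - i).val ≠ r - 1 := by
        intro hv
        apply hj
        have hj2 : j = i + (((j - i).val : ℕ) : Fin n) := (add_cast_dist i j).symm
        rw [hj2, hv]
      rw [if_neg hj, add_zero]
      split_ifs with ha hb
      · rfl
      · omega
      · omega
      · rfl
  rw [Wsum, Finset.sum_congr rfl (fun j _ => key j), Finset.sum_add_distrib,
    Finset.sum_ite_eq' _ p x, if_pos (Finset.mem_univ p)]
  rfl

lemma W_total (x : Fin n → ℝ) (i : Fin n) (r : ℕ) (hr : n ≤ r) :
    Wsum x i r = ∑ j, x j := by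
  apply Finset.sum_congr rfl
  intro j _
  rw [if_pos (lt_of_lt_of_le (Fin.is_lt _) hr)]

lemma W_shift_no_wrap (x : Fin n → ℝ) (i : Fin n) (d s : ℕ)
    (hd1 : 1 ≤ d) (hdn : d < n) (hds : d + s ≤ n) :
    Wsum x (i + (d : Fin n)) s = Wsum x i (d + s) - Wsum x i d := by
  rw [Wsum, Wsum, Wsum, ← Finset.sum_sub_distrib]
  apply Finset.sum_congr rfl
  intro j _
  rw [sub_shift_val i j d hdn]
  set v := (j - i).val with hv
  clear_value v
  have hvn : v < n := hv ▸ Fin.is_lt _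
  by_cases hvd : v < d
  · rw [Nat.mod_eq_of_lt (show n - d + v < n by omega)]
    split_ifs <;> (first | ring1 | (exfalso; omega))
  · have heq : n - d + v = (v - d) + n := by omega
    rw [heq, Nat.add_mod_right, Nat.mod_eq_of_lt (show v - d < n by omega)]
    split_ifs <;> (first | ring1 | (exfalso; omega))

lemma W_shift_wrap (x : Fin n → ℝ) (i : Fin n) (d s : ℕ)
    (hd1 : 1 ≤ d) (hdn : d < n) (hsn : s ≤ n) (hwrap : n < d + s) :
    Wsum x (i + (d : Fin n)) s = ((∑ j, x j) - Wsum x i d) + Wsum x i (d + s - n) := by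
  have h1 : (∑ j, x j) = Wsum x i n := (W_total x i n le_rfl).symm
  rw [h1, Wsum, Wsum, Wsum, Wsum, ← Finset.sum_sub_distrib, ← Finset.sum_add_distrib]
  apply Finset.sum_congr rfl
  intro j _
  rw [sub_shift_val i j d hdn]
  set v := (j - i).val with hv
  clear_value v
  have hvn : v < n := hv ▸ Fin.is_lt _
  by_cases hvd : v < d
  · rw [Nat.mod_eq_of_lt (show n - d + v < n by omega)]
    split_ifs <;> (first | ring1 | (exfalso; omega))
  · have heq : n - d + v = (v - d) + n := by omega
    rw [heq, Nat.add_mod_right, Nat.mod_eq_of_lt (show v - d < n by omega)]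
    split_ifs <;> (first | ring1 | (exfalso; omega))



lemma lemMain (hn : 3 ≤ n) (A : Matrix (Fin n) (Fin n) ℝ)
    (k1 : ∀ i : Fin n, A i (i + 1) ≤ A i i)
    (k2 : ∀ (i : Fin n) (s : ℕ), 2 ≤ s → s ≤ n - 1 →
      A i (i + (((s - 1 : ℕ)) : Fin n)) > A i (i + ((s : ℕ) : Fin n)))
    (k3 : ∀ i j, 0 ≤ A i j)
    (S : Finset (Fin n)) (hS : 3 ≤ S.card)
    (x : Fin n → ℝ) (hsupp : ∀ j ∉ S, x j = 0)
    (hrow : ∀ i ∈ S, ∑ j, A i j * x j = 0)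
    (htot : ∑ j, x j ≤ 0) : ∀ j, x j = 0 := by
  -- coefficient signs
  have hD0 : ∀ i : Fin n, 0 ≤ Dcoef A i 0 := by
    intro i
    have h0 : gent A i 0 = A i i := by
      rw [gent, if_pos (by omega)]; norm_num
    have h1 : gent A i 1 = A i (i + 1) := by
      rw [gent, if_pos (by omega)]; norm_num
    rw [Dcoef, zero_add, h0, h1, sub_nonneg]
    exact k1 i
  have hDmid : ∀ (i : Fin n) (s : ℕ), 1 ≤ s → s ≤ n - 2 → 0 < Dcoef A i s := by
    intro i s h1 h2
    have hs : s < n := by omega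
    have hs1 : s + 1 < n := by omega
    have := k2 i (s + 1) (by omega) (by omega)
    rw [Nat.add_sub_cancel] at this
    rw [Dcoef, gent, gent, if_pos hs, if_pos hs1, sub_pos]
    exact this
  have hDlast : ∀ i : Fin n, 0 ≤ Dcoef A i (n - 1) := by
    intro i
    have h1 : gent A i (n - 1) = A i (i + (((n-1 : ℕ)) : Fin n)) := by
      rw [gent, if_pos (by omega)]
    have h2 : gent A i ((n - 1) + 1) = 0 := by
      rw [gent, if_neg (by omega)]
    rw [Dcoef, h1, h2, sub_zero]
    exact k3 _ _
  have hDnn : ∀ (i : Fin n) (s : ℕ), s < n → 0 ≤ Dcoef A i s := by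
    intro i s hs
    rcases Nat.eq_zero_or_pos s with h | h
    · subst h; exact hD0 i
    · rcases eq_or_lt_of_le (by omega : s ≤ n - 1) with h' | h'
      · rw [h']; exact hDlast i
      · exact (hDmid i s h (by omega)).le
  have hSne : S.Nonempty := Finset.card_pos.mp (by omega)
  -- max distance
  set dmax : Fin n → ℕ := fun i => (S.image (fun j => (j - i).val)).max' (hSne.image _)
    with hdmax
  have hdm_le : ∀ (i : Fin n), ∀ j ∈ S, (j - i).val ≤ dmax i := by
    intro i j hj
    exact Finset.le_max' _ _ (Finset.mem_image_of_mem (fun j => (j - i).val) hj)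
  have hdm_mem : ∀ i : Fin n, ∃ j ∈ S, (j - i).val = dmax i := by
    intro i
    have := Finset.max'_mem _ ((hSne.image (fun j => (j - i).val)))
    rw [Finset.mem_image] at this
    obtain ⟨j, hj, hjv⟩ := this
    exact ⟨j, hj, hjv⟩
  have hdm_lt : ∀ i : Fin n, dmax i ≤ n - 1 := by
    intro i
    obtain ⟨j, _, hjv⟩ := hdm_mem i
    have := Fin.is_lt (j - i)
    omega
  have hsub_eq_self : ∀ i j : Fin n, (j - i).val = 0 → j = i := by
    intro i j h0
    have : j - i = 0 := Fin.ext (by simp only [Fin.val_zero]; omega)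
    rwa [sub_eq_zero] at this
  have hdm2 : ∀ i ∈ S, 2 ≤ dmax i := by
    intro i hi
    by_contra hcon
    have hsub : S ⊆ insert i {i + ((1 : ℕ) : Fin n)} := by
      intro j hj
      have hv := hdm_le i j hj
      have hv1 : (j - i).val ≤ 1 := by omega
      rcases Nat.eq_zero_or_pos ((j - i).val) with h0 | h1
      · simp [hsub_eq_self i j h0]
      · have : (j - i).val = 1 := by omega
        have hj2 : j = i + (((j - i).val : ℕ) : Fin n) := (add_cast_dist i j).symm
        rw [this] at hj2
        simp [hj2]
    have := Finset.card_le_card hsub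
    have h2 : (insert i {i + ((1:ℕ) : Fin n)} : Finset (Fin n)).card ≤ 2 := by
      apply le_trans (Finset.card_insert_le _ _)
      simp
    omega
  have hWtot : ∀ i ∈ S, ∀ r : ℕ, dmax i < r → Wsum x i r = ∑ j, x j := by
    intro i hi r hr
    apply Finset.sum_congr rfl
    intro j _
    by_cases hjS : j ∈ S
    · rw [if_pos (by have := hdm_le i j hjS; omega)]
    · rw [hsupp j hjS]; simp
  by_cases hall : ∀ i ∈ S, ∀ r : ℕ, 1 ≤ r → r ≤ dmax i → Wsum x i r ≤ 0
  · -- all windows nonpositive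
    have hx0 : ∀ j, x j ≤ 0 := by
      intro j
      by_cases hj : j ∈ S
      · rw [← W_one x j]
        exact hall j hj 1 le_rfl (by have := hdm2 j hj; omega)
      · exact (hsupp j hj).le
    intro j
    by_contra hxj
    have hjS : j ∈ S := by by_contra h; exact hxj (hsupp j h)
    have hxneg : x j < 0 := (hx0 j).lt_of_ne hxj
    have h0 := hrow j hjS
    rw [row_eq] at h0
    have ht : ∀ s ∈ Finset.range n, Dcoef A j s * Wsum x j (s + 1) ≤ 0 := by
      intro s hs
      rw [Finset.mem_range] at hs
      have hW : Wsum x j (s + 1) ≤ 0 := by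
        by_cases h : s + 1 ≤ dmax j
        · exact hall j hjS (s + 1) (by omega) h
        · rw [hWtot j hjS (s + 1) (by omega)]; exact htot
      have := mul_le_mul_of_nonneg_left hW (hDnn j s hs)
      simpa using this
    have hz := (Finset.sum_eq_zero_iff_of_nonpos ht).mp h0
    have hterm := hz 1 (Finset.mem_range.mpr (by omega))
    have hDp : 0 < Dcoef A j 1 := hDmid j 1 le_rfl (by omega)
    have hW2 : Wsum x j 2 = 0 := by
      rcases mul_eq_zero.mp hterm with h | h
      · exfalso; linarith
      · exact h
    have hW2' := W_succ x j 2 (by omega) (by omega)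
    rw [show (2:ℕ) - 1 = 1 from rfl, W_one] at hW2'
    have := hx0 (j + (((1:ℕ)) : Fin n))
    linarith [hW2, hW2', hxneg]
  · -- some positive window: derive contradiction
    exfalso
    push_neg at hall
    obtain ⟨i₀, hi₀S, r₀, hr₀1, hr₀D, hW₀⟩ := hall
    set P : Finset (Fin n × ℕ) :=
      (S ×ˢ Finset.Icc 1 (n - 1)).filter (fun p => p.2 ≤ dmax p.1) with hP
    have hPmem : ∀ p : Fin n × ℕ, p ∈ P ↔ p.1 ∈ S ∧ 1 ≤ p.2 ∧ p.2 ≤ dmax p.1 := by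
      intro p
      rw [hP, Finset.mem_filter, Finset.mem_product, Finset.mem_Icc]
      constructor
      · rintro ⟨⟨h1, h2, h3⟩, h4⟩; exact ⟨h1, h2, h4⟩
      · rintro ⟨h1, h2, h3⟩
        exact ⟨⟨h1, h2, le_trans h3 (hdm_lt p.1)⟩, h3⟩
    have hPne : P.Nonempty := ⟨(i₀, r₀), (hPmem _).mpr ⟨hi₀S, hr₀1, hr₀D⟩⟩
    set μ := (P.image (fun p => Wsum x p.1 p.2)).max' (hPne.image _) with hμ
    have hμ_ge : ∀ p ∈ P, Wsum x p.1 p.2 ≤ μ := by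
      intro p hp
      exact Finset.le_max' _ _ (Finset.mem_image_of_mem (fun p => Wsum x p.1 p.2) hp)
    have hμpos : 0 < μ :=
      lt_of_lt_of_le hW₀ (hμ_ge (i₀, r₀) ((hPmem _).mpr ⟨hi₀S, hr₀1, hr₀D⟩))
    set P' := P.filter (fun p => Wsum x p.1 p.2 = μ) with hP'
    have hP'ne : P'.Nonempty := by
      have := Finset.max'_mem _ (hPne.image (fun p => Wsum x p.1 p.2))
      rw [Finset.mem_image] at this
      obtain ⟨p, hp, hpv⟩ := this
      exact ⟨p, Finset.mem_filter.mpr ⟨hp, hpv⟩⟩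
    set r := (P'.image Prod.snd).min' (hP'ne.image _) with hr
    obtain ⟨q, hqP', hqr⟩ : ∃ p ∈ P', p.2 = r := by
      have := Finset.min'_mem _ (hP'ne.image Prod.snd)
      rw [Finset.mem_image] at this
      obtain ⟨p, hp, hpv⟩ := this
      exact ⟨p, hp, hpv⟩
    have hrmin : ∀ p ∈ P', r ≤ p.2 := by
      intro p hp
      exact Finset.min'_le _ _ (Finset.mem_image_of_mem _ hp)
    set i := q.1 with hi
    have hqP : q ∈ P := (Finset.mem_filter.mp hqP').1
    have hWq : Wsum x q.1 q.2 = μ := (Finset.mem_filter.mp hqP').2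
    have hiS : i ∈ S := ((hPmem q).mp hqP).1
    have hr1 : 1 ≤ r := by rw [← hqr]; exact ((hPmem q).mp hqP).2.1
    have hrD : r ≤ dmax i := by rw [← hqr]; exact ((hPmem q).mp hqP).2.2
    have hWir : Wsum x i r = μ := by rw [← hqr]; exact hWq
    have hG : ∀ r' : ℕ, 1 ≤ r' → Wsum x i r' ≤ μ := by
      intro r' h1'
      by_cases h : r' ≤ dmax i
      · exact hμ_ge (i, r') ((hPmem _).mpr ⟨hiS, h1', h⟩)
      · rw [hWtot i hiS r' (by omega)]; linarith
    have hrn : r ≤ n - 1 := le_trans hrD (hdm_lt i)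
    set pt := i + (((r - 1 : ℕ)) : Fin n) with hpt
    have hppos : pt ∈ S ∧ 0 < x pt := by
      rcases eq_or_lt_of_le hr1 with h1 | h2
      · have hpti : pt = i := by
          rw [hpt, ← h1]; norm_num
        rw [hpti]
        refine ⟨hiS, ?_⟩
        have hw1 := W_one x i
        rw [← h1] at hWir
        rw [hw1] at hWir
        linarith
      · by_contra hcon
        have hxpt : x pt ≤ 0 := by
          rcases le_or_gt (x pt) 0 with h | h
          · exact h
          · exfalso
            apply hcon
            refine ⟨?_, h⟩
            by_contra hns
            rw [hsupp pt hns] at h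
            exact lt_irrefl 0 h
        have hWr1 : Wsum x i r = Wsum x i (r - 1) + x pt := W_succ x i r hr1 (by omega)
        have hge : μ ≤ Wsum x i (r - 1) := by
          rw [hWir] at hWr1; linarith
        have hmem : (i, r - 1) ∈ P :=
          (hPmem _).mpr ⟨hiS, by show 1 ≤ r - 1; omega, by show r - 1 ≤ dmax i; omega⟩
        have hle : Wsum x i (r - 1) ≤ μ := hμ_ge _ hmem
        have hmem' : (i, r - 1) ∈ P' := Finset.mem_filter.mpr ⟨hmem, le_antisymm hle hge⟩
        have hcontra : r ≤ r - 1 := hrmin _ hmem'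
        omega
    obtain ⟨hptS, hxptpos⟩ := hppos
    -- minimal distance ≥ r
    set T := (S.image (fun j => (j - i).val)).filter (fun v => r ≤ v) with hT
    have hdmaxT : dmax i ∈ T := by
      obtain ⟨jm, hjm, hjmv⟩ := hdm_mem i
      rw [hT, Finset.mem_filter]
      exact ⟨by rw [← hjmv]; exact Finset.mem_image_of_mem _ hjm, hrD⟩
    have hTne : T.Nonempty := ⟨dmax i, hdmaxT⟩
    set d := T.min' hTne with hd
    have hdT : d ∈ T := Finset.min'_mem _ _
    have hrd : r ≤ d := (Finset.mem_filter.mp hdT).2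
    obtain ⟨jd, hjdS, hjdv⟩ : ∃ jd ∈ S, (jd - i).val = d := by
      have := (Finset.mem_filter.mp hdT).1
      rw [Finset.mem_image] at this
      obtain ⟨j', hj', hj'v⟩ := this
      exact ⟨j', hj', hj'v⟩
    have hdD : d ≤ dmax i := Finset.min'_le _ _ hdmaxT
    have hdn' : d < n := by have := hdm_lt i; omega
    have hgap : ∀ j' ∈ S, (j' - i).val < r ∨ d ≤ (j' - i).val := by
      intro j' hj'
      rcases lt_or_ge ((j' - i).val) r with h | h
      · exact Or.inl h
      · right
        apply Finset.min'_le
        rw [hT, Finset.mem_filter]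
        exact ⟨Finset.mem_image_of_mem _ hj', h⟩
    set jj := i + ((d : ℕ) : Fin n) with hjj
    have hjjS : jj ∈ S := by
      have : jj = jd := by
        rw [hjj, ← hjdv, add_cast_dist]
      rwa [this]
    have hWid : Wsum x i d = μ := by
      have hz : Wsum x i d - Wsum x i r = 0 := by
        rw [Wsum, Wsum, ← Finset.sum_sub_distrib]
        apply Finset.sum_eq_zero
        intro j' _
        by_cases hj'S : j' ∈ S
        · rcases hgap j' hj'S with h | h
          · rw [if_pos (by omega), if_pos h]; ring
          · rw [if_neg (by omega), if_neg (by omega)]; ring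
        · rw [hsupp j' hj'S]
          simp
      linarith [hWir]
    have hrowjj := hrow jj hjjS
    rw [row_eq] at hrowjj
    have hWjj : ∀ s' : ℕ, 1 ≤ s' → s' ≤ n → Wsum x jj s' ≤ 0 := by
      intro s' h1' h2'
      by_cases hc : d + s' ≤ n
      · rw [hjj, W_shift_no_wrap x i d s' (by omega) hdn' hc, hWid]
        have := hG (d + s') (by omega)
        linarith
      · rw [hjj, W_shift_wrap x i d s' (by omega) hdn' h2' (by omega), hWid]
        have := hG (d + s' - n) (by omega)
        linarith
    have ht2 : ∀ s ∈ Finset.range n, Dcoef A jj s * Wsum x jj (s + 1) ≤ 0 := by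
      intro s hs
      rw [Finset.mem_range] at hs
      have := mul_le_mul_of_nonneg_left (hWjj (s + 1) (by omega) (by omega)) (hDnn jj s hs)
      simpa using this
    have hz := (Finset.sum_eq_zero_iff_of_nonpos ht2).mp hrowjj
    set s₀ := n - d + r - 1 with hs₀
    have hs₀2 : 2 ≤ s₀ := by
      by_contra hcon
      have hdr : d = n - 1 ∧ r = 1 := by omega
      have hsub : S ⊆ insert i {jj} := by
        intro j' hj'
        rcases hgap j' hj' with h | h
        · have : (j' - i).val = 0 := by omega
          simp [hsub_eq_self i j' this]
        · have hvd : (j' - i).val = d := by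
            have := Fin.is_lt (j' - i)
            omega
          have hj2 : j' = i + (((j' - i).val : ℕ) : Fin n) := (add_cast_dist i j').symm
          rw [hvd] at hj2
          rw [hjj]
          simp [hj2]
      have hcard := Finset.card_le_card hsub
      have h2 : (insert i {jj} : Finset (Fin n)).card ≤ 2 := by
        apply le_trans (Finset.card_insert_le _ _)
        simp
      omega
    have hs₀n : s₀ ≤ n - 1 := by omega
    have hterm := hz (s₀ - 1) (Finset.mem_range.mpr (by omega))
    have hDp : 0 < Dcoef A jj (s₀ - 1) := hDmid jj (s₀ - 1) (by omega) (by omega)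
    have hWz : Wsum x jj ((s₀ - 1) + 1) = 0 := by
      rcases mul_eq_zero.mp hterm with h | h
      · exfalso; linarith
      · exact h
    rw [show (s₀ - 1) + 1 = s₀ by omega] at hWz
    rcases eq_or_lt_of_le hr1 with hr_eq | hr_gt
    · -- r = 1
      have hds₀ : d + s₀ = n := by omega
      have hsh := W_shift_no_wrap x i d s₀ (by omega) hdn' (by omega)
      rw [← hjj] at hsh
      rw [hds₀, W_total x i n le_rfl, hWid] at hsh
      rw [hWz] at hsh
      linarith
    · -- r ≥ 2
      have hwr : n < d + s₀ := by omega
      have hsh := W_shift_wrap x i d s₀ (by omega) hdn' (by omega) hwr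
      rw [← hjj] at hsh
      have hsub2 : d + s₀ - n = r - 1 := by omega
      rw [hsub2, hWid] at hsh
      have hWr1 : Wsum x i r = Wsum x i (r - 1) + x pt := W_succ x i r hr1 (by omega)
      rw [hWir] at hWr1
      rw [hWz] at hsh
      linarith

lemma lemK (hn : 3 ≤ n) (A : Matrix (Fin n) (Fin n) ℝ)
    (k1 : ∀ i : Fin n, A i (i + 1) ≤ A i i)
    (k2 : ∀ (i : Fin n) (s : ℕ), 2 ≤ s → s ≤ n - 1 →
      A i (i + (((s - 1 : ℕ)) : Fin n)) > A i (i + ((s : ℕ) : Fin n)))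
    (k3 : ∀ i j, 0 ≤ A i j)
    (S : Finset (Fin n)) (hS : 3 ≤ S.card)
    (x : Fin n → ℝ) (hsupp : ∀ j ∉ S, x j = 0)
    (hrow : ∀ i ∈ S, ∑ j, A i j * x j = 0) : ∀ j, x j = 0 := by
  rcases le_total (∑ j, x j) 0 with h | h
  · exact lemMain hn A k1 k2 k3 S hS x hsupp hrow h
  · have hneg := lemMain hn A k1 k2 k3 S hS (fun j => - x j)
      (fun j hj => by show -x j = 0; rw [hsupp j hj, neg_zero])
      (fun i hi => by
        have h2 := hrow i hi
        show ∑ j, A i j * (- x j) = 0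
        simp only [mul_neg]
        rw [Finset.sum_neg_distrib, h2, neg_zero])
      (by show ∑ j, - x j ≤ 0; rw [Finset.sum_neg_distrib]; linarith)
    intro j
    have := hneg j
    simpa using this

end PMX

open PMX

theorem stmt_19 (n : ℕ) [NeZero n] (hn : 3 ≤ n) (A : Matrix (Fin n) (Fin n) ℝ)
    (hdiag : ∀ i : Fin n, A i i = A i (i + 1))
    (hstrict : ∀ i j : Fin n, j ≠ i → j ≠ i + 1 → A i (j - 1) > A i j)
    (hpos : ∀ i j, 0 ≤ A i j) :
    IsPMatrix A := by
  classical
  -- chain of strict decreases in each row, in cyclic-distance coordinates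
  have hcast1 : ((1 : ℕ) : Fin n) = (1 : Fin n) := Nat.cast_one
  have hchain : ∀ (i : Fin n) (s : ℕ), 2 ≤ s → s ≤ n - 1 →
      A i (i + (((s - 1 : ℕ)) : Fin n)) > A i (i + ((s : ℕ) : Fin n)) := by
    intro i s h2 h3
    set j := i + ((s : ℕ) : Fin n) with hj
    have hsn : s < n := by omega
    have hsne : s % n ≠ 0 := by rw [Nat.mod_eq_of_lt hsn]; omega
    have hjne : j ≠ i := add_cast_ne_self hsne
    have hjne1 : j ≠ i + 1 := by
      intro h
      rw [hj, ← hcast1] at h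
      have h4 := add_left_cancel h
      have hval : ((s : ℕ) : Fin n).val = ((1 : ℕ) : Fin n).val := by rw [h4]
      rw [Fin.val_natCast, Fin.val_natCast, Nat.mod_eq_of_lt hsn,
        Nat.mod_eq_of_lt (by omega : 1 < n)] at hval
      omega
    have hmain := hstrict i j hjne hjne1
    have hj1 : j - 1 = i + (((s - 1 : ℕ)) : Fin n) := by
      have hcast : ((s : ℕ) : Fin n) = (((s - 1 : ℕ)) : Fin n) + 1 := by
        have h5 : (((s - 1 + 1 : ℕ)) : Fin n) = (((s - 1 : ℕ)) : Fin n) + 1 := by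
          push_cast
          ring
        rw [← h5]
        congr 1
        omega
      rw [hj, hcast]
      abel
    rw [hj1] at hmain
    exact hmain
  have hk1 : ∀ i : Fin n, A i (i + 1) ≤ A i i := fun i => le_of_eq (hdiag i).symm
  -- monotonicity along the strict chain
  have hmono2 : ∀ (i : Fin n) (a t : ℕ), 1 ≤ a → a ≤ t → t ≤ n - 1 →
      A i (i + ((t : ℕ) : Fin n)) ≤ A i (i + ((a : ℕ) : Fin n)) := by
    intro i a t ha hat htn
    induction t with
    | zero => omega
    | succ m ih =>
      rcases eq_or_lt_of_le hat with h | h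
      · rw [h]
      · have hm : a ≤ m := by omega
        have step := hchain i (m + 1) (by omega) htn
        have hms : (m + 1 : ℕ) - 1 = m := by omega
        rw [hms] at step
        exact le_trans step.le (ih hm (by omega))
  have hdiag_pos : ∀ i : Fin n, 0 < A i i := by
    intro i
    have h1 := hchain i 2 le_rfl (by omega)
    have h2 : ((2:ℕ) - 1 : ℕ) = 1 := rfl
    rw [h2] at h1
    have h3 := hpos i (i + ((2 : ℕ) : Fin n))
    have h4 : A i (i + ((1:ℕ) : Fin n)) = A i i := by
      rw [hcast1, ← hdiag i]
    linarith
  have hdiag_ge : ∀ i j : Fin n, A i j ≤ A i i := by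
    intro i j
    by_cases hij : j = i
    · rw [hij]
    · have hv : 1 ≤ (j - i).val := by
        rcases Nat.eq_zero_or_pos ((j - i).val) with h | h
        · exfalso
          apply hij
          have : j - i = 0 := Fin.ext (by simp only [Fin.val_zero]; omega)
          rwa [sub_eq_zero] at this
        · exact h
      have hv2 : (j - i).val ≤ n - 1 := by have := Fin.is_lt (j - i); omega
      have he : A i j = A i (i + (((j - i).val : ℕ) : Fin n)) := by
        rw [add_cast_dist]
      rw [he]
      calc A i (i + (((j - i).val : ℕ) : Fin n)) ≤ A i (i + ((1:ℕ) : Fin n)) :=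
            hmono2 i 1 _ le_rfl hv hv2
        _ = A i i := by rw [hcast1, ← hdiag i]
  have hstrict2 : ∀ i j : Fin n, 2 ≤ (j - i).val → A i j < A i i := by
    intro i j hv
    have hv2 : (j - i).val ≤ n - 1 := by have := Fin.is_lt (j - i); omega
    have he : A i j = A i (i + (((j - i).val : ℕ) : Fin n)) := by
      rw [add_cast_dist]
    have h1 : A i (i + (((j - i).val : ℕ) : Fin n)) ≤ A i (i + ((2:ℕ) : Fin n)) :=
      hmono2 i 2 _ (by omega) hv hv2
    have h2 := hchain i 2 le_rfl (by omega)
    have h3 : ((2:ℕ) - 1 : ℕ) = 1 := rfl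
    rw [h3] at h2
    have h4 : A i (i + ((1:ℕ) : Fin n)) = A i i := by rw [hcast1, ← hdiag i]
    rw [he]
    linarith
  -- value of opposite cyclic distances
  have hsub_val_add : ∀ a b : Fin n, a ≠ b → (a - b).val + (b - a).val = n := by
    intro a b hab
    have hpq : a.val ≠ b.val := fun h => hab (Fin.ext h)
    have hpn : a.val < n := a.is_lt
    have hqn : b.val < n := b.is_lt
    rw [fin_sub_val, fin_sub_val]
    rcases lt_or_gt_of_ne hpq with h | h
    · rw [Nat.mod_eq_of_lt (by omega),
        show n - a.val + b.val = (b.val - a.val) + n by omega, Nat.add_mod_right,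
        Nat.mod_eq_of_lt (by omega)]
      omega
    · rw [show n - b.val + a.val = (a.val - b.val) + n by omega, Nat.add_mod_right,
        Nat.mod_eq_of_lt (by omega), Nat.mod_eq_of_lt (by omega)]
      omega
  have hdet2core : ∀ a b : Fin n, 2 ≤ (b - a).val →
      0 < A a a * A b b - A a b * A b a := by
    intro a b h2
    have h1 : A a b < A a a := hstrict2 a b h2
    have h3 : A b a ≤ A b b := hdiag_ge b a
    have h4 : 0 ≤ A a b := hpos a b
    have h5 : 0 < A b b := hdiag_pos b
    have h6 : 0 ≤ A b a := hpos b a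
    nlinarith
  have hdet2 : ∀ a b : Fin n, a ≠ b → 0 < A a a * A b b - A a b * A b a := by
    intro a b hab
    have hv1 : 1 ≤ (b - a).val := by
      rcases Nat.eq_zero_or_pos ((b - a).val) with h | h
      · exfalso
        apply hab
        have : b - a = 0 := Fin.ext (by simp only [Fin.val_zero]; omega)
        have := (sub_eq_zero).mp this
        exact this.symm
      · exact h
    rcases le_or_gt 2 ((b - a).val) with h | h
    · exact hdet2core a b h
    · have hsum := hsub_val_add a b hab
      have h2 : 2 ≤ (a - b).val := by omega
      have := hdet2core b a h2
      nlinarith [this]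
  -- main assembly
  intro S hSne
  set B := A.submatrix (fun i : {a // a ∈ S} => (i : Fin n))
      (fun j : {a // a ∈ S} => (j : Fin n)) with hB
  have hcard : Fintype.card {a // a ∈ S} = S.card := Fintype.card_coe S
  have hc1 : 1 ≤ S.card := Finset.card_pos.mpr hSne
  show 0 < B.det
  rcases lt_or_ge S.card 3 with hsmall | hbig
  · rcases (by omega : S.card = 1 ∨ S.card = 2) with hc | hc
    · have e := Fintype.equivFinOfCardEq (hcard.trans hc)
      rw [← Matrix.det_submatrix_equiv_self e.symm B, Matrix.det_fin_one]
      simp only [Matrix.submatrix_apply, hB]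
      exact hdiag_pos _
    · have e := Fintype.equivFinOfCardEq (hcard.trans hc)
      rw [← Matrix.det_submatrix_equiv_self e.symm B, Matrix.det_fin_two]
      simp only [Matrix.submatrix_apply, hB]
      apply hdet2
      intro h
      have h2 := e.symm.injective (Subtype.coe_injective h)
      simp at h2
  · -- |S| ≥ 3 : intermediate value argument in μ for det (B + μ•1)
    set f : ℝ → ℝ := fun μ => (B + μ • (1 : Matrix {a // a ∈ S} {a // a ∈ S} ℝ)).det
      with hf
    have hcont : Continuous f := by
      apply Continuous.matrix_det
      exact continuous_const.add (continuous_id.smul continuous_const)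
    have hsubm : ∀ μ : ℝ,
        (A + μ • (1 : Matrix (Fin n) (Fin n) ℝ)).submatrix
          (fun i : {a // a ∈ S} => (i : Fin n)) (fun j : {a // a ∈ S} => (j : Fin n))
          = B + μ • 1 := by
      intro μ
      ext a b
      simp only [Matrix.submatrix_apply, Matrix.add_apply, Matrix.smul_apply,
        Matrix.one_apply, hB, smul_eq_mul, mul_ite, mul_one, mul_zero]
      congr 1
      by_cases hab : a = b
      · rw [if_pos hab, if_pos (by rw [hab])]
      · rw [if_neg hab, if_neg (fun h => hab (Subtype.coe_injective h))]
    have hne : ∀ μ : ℝ, 0 ≤ μ → f μ ≠ 0 := by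
      intro μ hμ h0
      rw [hf] at h0
      obtain ⟨v, hv0, hveq⟩ := Matrix.exists_mulVec_eq_zero_iff.mpr h0
      set A' := A + μ • (1 : Matrix (Fin n) (Fin n) ℝ) with hA'
      have hA'app : ∀ i j : Fin n, A' i j = A i j + (if i = j then μ else 0) := by
        intro i j
        simp [hA', Matrix.add_apply, Matrix.smul_apply, Matrix.one_apply,
          smul_eq_mul, mul_ite, mul_one, mul_zero]
      have hone_ne : ∀ i : Fin n, i + ((1:ℕ) : Fin n) ≠ i :=
        fun i => add_cast_ne_self (by rw [Nat.mod_eq_of_lt (by omega : 1 < n)]; omega)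
      have hk1' : ∀ i : Fin n, A' i (i + 1) ≤ A' i i := by
        intro i
        have hne1 : ¬ (i = i + 1) := by
          intro h
          apply hone_ne i
          rw [hcast1, ← h]
        rw [hA'app, hA'app, if_neg hne1, if_pos rfl, add_zero]
        have := hk1 i
        linarith
      have hk2' : ∀ (i : Fin n) (s : ℕ), 2 ≤ s → s ≤ n - 1 →
          A' i (i + (((s - 1 : ℕ)) : Fin n)) > A' i (i + ((s : ℕ) : Fin n)) := by
        intro i s h2 h3
        have hs1ne : ¬ (i = i + (((s - 1 : ℕ)) : Fin n)) := by
          intro h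
          exact add_cast_ne_self (t := s - 1)
            (by rw [Nat.mod_eq_of_lt (by omega : s - 1 < n)]; omega) h.symm
        have hsne : ¬ (i = i + ((s : ℕ) : Fin n)) := by
          intro h
          exact add_cast_ne_self (t := s)
            (by rw [Nat.mod_eq_of_lt (by omega : s < n)]; omega) h.symm
        rw [hA'app, hA'app, if_neg hs1ne, if_neg hsne, add_zero, add_zero]
        exact hchain i s h2 h3
      have hk3' : ∀ i j : Fin n, 0 ≤ A' i j := by
        intro i j
        rw [hA'app]
        have := hpos i j
        split_ifs <;> linarith
      set x : Fin n → ℝ := fun j => if h : j ∈ S then v ⟨j, h⟩ else 0 with hx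
      have hxsupp : ∀ j ∉ S, x j = 0 := by
        intro j hj
        rw [hx]
        exact dif_neg hj
      have hxrow : ∀ i ∈ S, ∑ j, A' i j * x j = 0 := by
        intro i hi
        have h1 : ∑ j, A' i j * x j = ∑ j ∈ S, A' i j * x j := by
          symm
          apply Finset.sum_subset (Finset.subset_univ S)
          intro j _ hj
          rw [hxsupp j hj, mul_zero]
        have h2 : ∑ j ∈ S, A' i j * x j
            = ∑ j : {a // a ∈ S}, A' i (j : Fin n) * x (j : Fin n) :=
          (Finset.sum_coe_sort S _).symm
        have h3 : ∀ j : {a // a ∈ S},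
            A' i (j : Fin n) * x (j : Fin n) = (B + μ • 1) ⟨i, hi⟩ j * v j := by
          intro j
          congr 1
          · rw [← hsubm μ]
            simp only [Matrix.submatrix_apply, hA']
          · rw [hx]
            simp only [dif_pos j.2]
        have h4 : ∑ j : {a // a ∈ S}, (B + μ • 1) ⟨i, hi⟩ j * v j = 0 := by
          have hcomp := congrFun hveq ⟨i, hi⟩
          simpa [Matrix.mulVec, dotProduct] using hcomp
        rw [h1, h2, Finset.sum_congr rfl (fun j _ => h3 j), h4]
      have hx0 := lemK hn A' hk1' hk2' hk3' S hbig x hxsupp hxrow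
      apply hv0
      funext j
      have hj := hx0 (j : Fin n)
      rw [hx] at hj
      simpa [dif_pos j.2] using hj
    -- positivity for large μ
    set g : ℝ → ℝ := fun ε => ((1 : Matrix {a // a ∈ S} {a // a ∈ S} ℝ) + ε • B).det
      with hg
    have hgcont : Continuous g := by
      apply Continuous.matrix_det
      exact continuous_const.add (continuous_id.smul continuous_const)
    have hg0 : g 0 = 1 := by simp [hg]
    obtain ⟨δ, hδ, hgδ⟩ : ∃ δ > 0, 0 < g δ := by
      have hopen : IsOpen (g ⁻¹' Set.Ioi 0) := isOpen_Ioi.preimage hgcont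
      have h0mem : (0:ℝ) ∈ g ⁻¹' Set.Ioi 0 := by simp [hg0]
      obtain ⟨δ, hδpos, hball⟩ := Metric.isOpen_iff.mp hopen 0 h0mem
      refine ⟨δ/2, by linarith, ?_⟩
      have : δ/2 ∈ Metric.ball (0:ℝ) δ := by
        simp only [Metric.mem_ball, Real.dist_eq, sub_zero]
        rw [abs_of_nonneg (by linarith)]
        linarith
      exact hball this
    have hfM : 0 < f (1/δ) := by
      have key : (1/δ) • ((1 : Matrix {a // a ∈ S} {a // a ∈ S} ℝ) + δ • B)
          = B + (1/δ) • 1 := by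
        rw [smul_add, smul_smul, one_div_mul_cancel (ne_of_gt hδ), one_smul, add_comm]
      rw [hf]
      simp only
      rw [← key, Matrix.det_smul]
      apply mul_pos
      · apply pow_pos
        positivity
      · exact hgδ
    by_contra hcon
    push_neg at hcon
    have hf0 : f 0 ≤ 0 := by
      rw [hf]
      simpa using hcon
    have hf0' : f 0 ≠ 0 := hne 0 le_rfl
    have hivt := intermediate_value_Icc (le_of_lt (by positivity : (0:ℝ) < 1/δ))
      hcont.continuousOn
    have h0mem : (0:ℝ) ∈ Set.Icc (f 0) (f (1/δ)) := ⟨hf0, le_of_lt hfM⟩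
    obtain ⟨c, hc, hfc⟩ := hivt h0mem
    exact hne c hc.1 hfc
end
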